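/- arXiv:math/0610918 — 12 statements merged into one kernel-verified Lean document; each statement's English description precedes it below -/
import Mathlib

section
/- Let R be a ring (associative with identity), let a ∈ R and let n be a positive integer. If a is n-clean, then a is l-clean for every l ≥ n. (Equivalently: if a can be written as a sum of an idempotent and n units, then for every l ≥ n it can be written as a sum of an idempotent and l units.) -/
/-- An element `a` of a ring `R` is `n`-clean if it is the sum of an idempotent
and `n` units. -/
def IsNClean {R : Type*} [Ring R] (n : ℕ) (a : R) : Prop :=
  ∃ (e : R) (u : Fin n → Rˣ), IsIdempotentElem e ∧ a = e + ∑ i, (u i : R)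

lemma isNClean_succ {R : Type*} [Ring R] {n : ℕ} {a : R}
    (h : IsNClean n a) : IsNClean (n + 1) a := by
  obtain ⟨e, u, he, ha⟩ := h
  have h2 : e * e = e := he
  have hv : (2 * e - 1) * (2 * e - 1) = 1 := by
    calc (2 * e - 1) * (2 * e - 1) = 4 * (e * e) - 4 * e + 1 := by noncomm_ring
    _ = 1 := by rw [h2]; abel
  refine ⟨1 - e, Fin.snoc u ⟨2 * e - 1, 2 * e - 1, hv, hv⟩, ?_, ?_⟩
  · exact he.one_sub
  · rw [Fin.sum_univ_castSucc]
    simp only [Fin.snoc_castSucc, Fin.snoc_last]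
    rw [ha]
    noncomm_ring

/-- if `a` is `n`-clean (`n ≥ 1`), then `a` is `l`-clean for every `l ≥ n`. -/
theorem stmt_0 {R : Type*} [Ring R] (a : R) (n : ℕ) (hn : 0 < n)
    (h : IsNClean n a) : ∀ l : ℕ, n ≤ l → IsNClean l a := by
  intro l hl
  induction l, hl using Nat.le_induction with
  | base => exact h
  | succ m hm ih => exact isNClean_succ ih
end

section
/- Let R be an n-clean ring in which 2 is a unit. Then R is (n+1)-good, i.e., every element of R is a sum of n+1 units. -/
/-- if `R` is `n`-clean and `2` is a unit in `R`, then `R` is `(n+1)`-good. -/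
theorem stmt_2 {R : Type*} [Ring R] (n : ℕ)
    (hclean : ∀ a : R, IsNClean n a) (h2 : IsUnit (2 : R)) :
    ∀ a : R, ∃ u : Fin (n + 1) → Rˣ, a = ∑ i, (u i : R) := by
  intro a
  obtain ⟨t, ht⟩ := h2
  obtain ⟨e, u, he, hae⟩ := hclean (a + (↑t⁻¹ : R))
  -- 2e - 1 is a unit
  have hsq : (2 * e - 1) * (2 * e - 1) = 1 := by
    have h : e * e = e := he
    calc (2 * e - 1) * (2 * e - 1) = 4 * (e * e) - 4 * e + 1 := by noncomm_ring
      _ = 1 := by rw [h]; noncomm_ring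
  let v : Rˣ := ⟨2 * e - 1, 2 * e - 1, hsq, hsq⟩
  refine ⟨Fin.cons (t⁻¹ * v) u, ?_⟩
  rw [Fin.sum_univ_succ]
  simp only [Fin.cons_zero, Fin.cons_succ]
  have h1 : ((t⁻¹ * v : Rˣ) : R) = e - (↑t⁻¹ : R) := by
    have h2' : (↑t⁻¹ : R) * 2 = 1 := by
      rw [← ht]; exact t.inv_mul
    push_cast [v]
    rw [mul_sub, ← mul_assoc, h2', one_mul, mul_one]
  rw [h1, sub_add_eq_add_sub, ← hae]
  abel
end

section
/- Let R be a ring and n a positive integer. If every indecomposable factor ring of R is n-clean, then R is n-clean. (Here, if for every two-sided ideal I of R such that the quotient ring R/I is indecomposable — i.e., R/I is nonzero and its only central idempotents are 0 and 1 — the ring R/I is n-clean, then R itself is n-clean.) -/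
/-- A nonzero ring is indecomposable if its only central idempotents are `0` and `1`. -/
def IsIndecomposableRing (S : Type*) [Ring S] : Prop :=
  Nontrivial S ∧ ∀ e : S, IsIdempotentElem e → e ∈ Set.center S → e = 0 ∨ e = 1

universe u

open Function

variable {n : ℕ}

theorem IsNClean.of_subsingleton {S : Type*} [Ring S] [Subsingleton S] (a : S) : IsNClean n a :=
  ⟨0, 1, IsIdempotentElem.zero, Subsingleton.elim _ _⟩

theorem IsNClean.map {S T : Type*} [Ring S] [Ring T] (f : S →+* T) {a : S} (ha : IsNClean n a) :
    IsNClean n (f a) := by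
  obtain ⟨e, u, he, rfl⟩ := ha
  exact ⟨f e, fun i => Units.map f (u i), he.map f, by simp⟩

theorem IsNClean.pi {ι : Type*} {S : ι → Type*} [∀ i, Ring (S i)] {x : ∀ i, S i}
    (hx : ∀ i, IsNClean n (x i)) : IsNClean n x := by
  choose e u he hxe using hx
  refine ⟨e, fun j => MulEquiv.piUnits.symm fun i => u i j, funext he, funext fun i => ?_⟩
  simp [hxe i, Finset.sum_apply]

section Relators

variable {R : Type*} [Ring R]

def cleanRelators (a e : R) (u v : Fin n → R) : Set R :=
  insert (e * e - e) (insert (a - (e + ∑ i, u i))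
    (Set.range (fun i => u i * v i - 1) ∪ Set.range (fun i => v i * u i - 1)))

theorem finite_cleanRelators (a e : R) (u v : Fin n → R) : (cleanRelators a e u v).Finite :=
  (((Set.finite_range _).union (Set.finite_range _)).insert _).insert _

theorem isNClean_apply_iff {S : Type*} [Ring S] {f : R →+* S} (hf : Surjective f) {a : R} :
    IsNClean n (f a) ↔
      ∃ (e : R) (u v : Fin n → R), cleanRelators a e u v ⊆ TwoSidedIdeal.ker f := by
  simp only [cleanRelators, Set.insert_subset_iff, Set.union_subset_iff, Set.range_subset_iff,
    SetLike.mem_coe, TwoSidedIdeal.mem_ker, map_sub, map_mul, map_add, map_sum, map_one,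
    sub_eq_zero]
  constructor
  · rintro ⟨e, w, he, ha⟩
    obtain ⟨e, rfl⟩ := hf e
    choose u hu using fun i => hf (w i)
    choose v hv using fun i => hf ↑(w i)⁻¹
    exact ⟨e, u, v, he, by simp [hu, ha], fun i => by simp [hu, hv], fun i => by simp [hu, hv]⟩
  · rintro ⟨e, u, v, he, ha, huv, hvu⟩
    exact ⟨f e, fun i => ⟨f (u i), f (v i), huv i, hvu i⟩, he, ha⟩

theorem isNClean_mk'_iff (I : TwoSidedIdeal R) {a : R} :
    IsNClean n (I.ringCon.mk' a) ↔ ∃ (e : R) (u v : Fin n → R), cleanRelators a e u v ⊆ I := by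
  rw [isNClean_apply_iff I.ringCon.mk'_surjective, TwoSidedIdeal.ker_ringCon_mk']

end Relators

namespace TwoSidedIdeal

variable {R : Type*} [Ring R]

theorem mem_sSup_of_directedOn {C : Set (TwoSidedIdeal R)} (hne : C.Nonempty)
    (hC : DirectedOn (· ≤ ·) C) {x : R} : x ∈ sSup C ↔ ∃ I ∈ C, x ∈ I := by
  refine ⟨fun hx => ?_, fun ⟨I, hI, hx⟩ => le_sSup hI hx⟩
  let U : TwoSidedIdeal R := .mk' {x | ∃ I ∈ C, x ∈ I}
    (hne.elim fun I hI => ⟨I, hI, zero_mem I⟩)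
    (fun ⟨I, hI, hx⟩ ⟨J, hJ, hy⟩ =>
      (hC I hI J hJ).imp fun K ⟨hK, hIK, hJK⟩ => ⟨hK, K.add_mem (hIK hx) (hJK hy)⟩)
    (fun ⟨I, hI, hx⟩ => ⟨I, hI, neg_mem I hx⟩)
    (fun ⟨I, hI, hy⟩ => ⟨I, hI, mul_mem_left I _ _ hy⟩)
    (fun ⟨I, hI, hx⟩ => ⟨I, hI, mul_mem_right I _ _ hx⟩)
  have hU : sSup C ≤ U := sSup_le fun I hI x hx => (mem_mk' ..).mpr ⟨I, hI, hx⟩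
  simpa [U, mem_mk'] using hU hx

theorem exists_mem_subset_of_finite_of_subset_sSup {C : Set (TwoSidedIdeal R)}
    (hne : C.Nonempty) (hC : DirectedOn (· ≤ ·) C) {s : Set R} (hs : s.Finite)
    (hsC : s ⊆ (sSup C : TwoSidedIdeal R)) : ∃ I ∈ C, s ⊆ I := by
  have hdir : DirectedOn (· ⊆ ·) ((↑) '' C : Set (Set R)) :=
    directedOn_image.mpr fun I hI J hJ => hC I hI J hJ
  obtain ⟨_, ⟨I, hI, rfl⟩, hsI⟩ := hdir.exists_mem_subset_of_finite_of_subset_sUnion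
    (hne.image _) hs fun x hx => by
      obtain ⟨I, hI, hxI⟩ := (mem_sSup_of_directedOn hne hC).mp (hsC hx)
      exact ⟨I, ⟨I, hI, rfl⟩, hxI⟩
  exact ⟨I, hI, hsI⟩

theorem ker_lt_ker_comp {Q T : Type*} [Ring Q] [Ring T] {f : R →+* Q} (hf : Surjective f)
    {g : Q →+* T} (hg : ¬ Injective g) : ker f < ker (g.comp f) := by
  simp only [injective_iff_map_eq_zero, not_forall] at hg
  obtain ⟨q, hgq, hq⟩ := hg
  obtain ⟨x, rfl⟩ := hf q
  refine SetLike.lt_iff_le_and_exists.mpr ⟨fun y hy => ?_, x, ?_, ?_⟩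
  · rw [mem_ker] at hy ⊢
    simp [hy]
  · simpa [mem_ker] using hgq
  · simpa [mem_ker] using hq

end TwoSidedIdeal

theorem exists_maximal_not_isNClean_mk' {R : Type*} [Ring R] {a : R} (ha : ¬ IsNClean n a) :
    ∃ M : TwoSidedIdeal R, ¬ IsNClean n (M.ringCon.mk' a) ∧
      ∀ I, M < I → IsNClean n (I.ringCon.mk' a) := by
  set S := {I : TwoSidedIdeal R | ¬ IsNClean n (I.ringCon.mk' a)}
  have hbot : ⊥ ∈ S := by
    intro hclean
    obtain ⟨e, u, v, hsub⟩ := (isNClean_mk'_iff ⊥).mp hclean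
    refine ha ((isNClean_apply_iff (f := RingHom.id R) surjective_id).mpr ⟨e, u, v, ?_⟩)
    rwa [(TwoSidedIdeal.ker_eq_bot _).mpr injective_id]
  have hchain : ∀ C ⊆ S, IsChain (· ≤ ·) C → ∀ I ∈ C, ∃ U ∈ S, ∀ J ∈ C, J ≤ U := by
    intro C hCS hC I hI
    refine ⟨sSup C, fun hclean => ?_, fun J hJ => le_sSup hJ⟩
    obtain ⟨e, u, v, hsub⟩ := (isNClean_mk'_iff _).mp hclean
    obtain ⟨J, hJ, hsubJ⟩ := TwoSidedIdeal.exists_mem_subset_of_finite_of_subset_sSup ⟨I, hI⟩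
      hC.directedOn (finite_cleanRelators a e u v) hsub
    exact hCS hJ ((isNClean_mk'_iff J).mpr ⟨e, u, v, hsubJ⟩)
  obtain ⟨M, -, hM⟩ := zorn_le_nonempty₀ S hchain ⊥ hbot
  exact ⟨M, hM.prop, fun I hMI => not_not.mp fun hI => hMI.not_ge (hM.2 hI hMI.le)⟩

theorem CompleteOrthogonalIdempotents.ringEquivOfIsMulCentral_apply_of_ne {Q ι : Type*}
    [Ring Q] [Fintype ι] {e : ι → Q} (he : CompleteOrthogonalIdempotents e)
    (hc : ∀ i, IsMulCentral (e i)) {i j : ι} (hij : i ≠ j) :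
    he.ringEquivOfIsMulCentral hc (e j) i = 0 :=
  Subtype.ext (by show e i * e j * e i = 0; rw [he.ortho hij, zero_mul])

theorem isNClean_of_forall_surjective_not_injective {Q : Type u} [Ring Q] {e : Q}
    (he : IsIdempotentElem e) (hc : e ∈ Set.center Q) (he0 : e ≠ 0) (he1 : e ≠ 1) {x : Q}
    (hx : ∀ (T : Type u) [Ring T] (g : Q →+* T), Surjective g → ¬ Injective g →
      IsNClean n (g x)) :
    IsNClean n x := by
  have hpair := CompleteOrthogonalIdempotents.of_isIdempotentElem he
  have hcen : ∀ i, IsMulCentral (![e, 1 - e] i) := by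
    have := (Subring.center Q).sub_mem (Subring.center Q).one_mem hc
    exact Fin.forall_fin_two.mpr ⟨Set.mem_center_iff.mp hc, Set.mem_center_iff.mp this⟩
  have hne : ∀ i, ![e, 1 - e] i ≠ 0 :=
    Fin.forall_fin_two.mpr ⟨he0, sub_ne_zero.mpr he1.symm⟩
  let ψ := hpair.ringEquivOfIsMulCentral hcen
  rw [← ψ.symm_apply_apply x]
  refine (IsNClean.pi fun i => ?_).map ψ.symm.toRingHom
  obtain ⟨j, hji⟩ := exists_ne i
  refine hx _ ((Pi.evalRingHom _ i).comp ψ.toRingHom)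
    ((surjective_eval i).comp ψ.surjective) fun hinj => hne j ?_
  exact (injective_iff_map_eq_zero _).mp hinj _
    (hpair.ringEquivOfIsMulCentral_apply_of_ne hcen hji.symm)

theorem stmt_3_general {R : Type*} [Ring R] (n : ℕ)
    (h : ∀ I : TwoSidedIdeal R, IsIndecomposableRing I.ringCon.Quotient →
      ∀ a : I.ringCon.Quotient, IsNClean n a) :
    ∀ a : R, IsNClean n a := by
  intro a
  by_contra ha
  obtain ⟨M, hMa, hM⟩ := exists_maximal_not_isNClean_mk' ha
  obtain ⟨e, he, hce, he0, he1⟩ : ∃ e : M.ringCon.Quotient,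
      IsIdempotentElem e ∧ e ∈ Set.center _ ∧ e ≠ 0 ∧ e ≠ 1 := by
    have : Nontrivial M.ringCon.Quotient :=
      not_subsingleton_iff_nontrivial.mp fun _ => hMa (.of_subsingleton _)
    simpa [IsIndecomposableRing, this] using fun hQ => hMa (h M hQ _)
  refine hMa (isNClean_of_forall_surjective_not_injective he hce he0 he1 fun T _ g hg hginj => ?_)
  have hlt := TwoSidedIdeal.ker_lt_ker_comp M.ringCon.mk'_surjective hginj
  rw [TwoSidedIdeal.ker_ringCon_mk'] at hlt
  exact (isNClean_apply_iff (f := g.comp M.ringCon.mk') (hg.comp M.ringCon.mk'_surjective)).mpr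
    ((isNClean_mk'_iff _).mp (hM _ hlt))

/-- if every indecomposable factor ring of `R` (i.e. every quotient of `R` by a
two-sided ideal which is an indecomposable ring) is `n`-clean, then `R` is `n`-clean. -/
theorem stmt_3 {R : Type*} [Ring R] (n : ℕ) (hn : 0 < n)
    (h : ∀ I : TwoSidedIdeal R, IsIndecomposableRing I.ringCon.Quotient →
      ∀ a : I.ringCon.Quotient, IsNClean n a) :
    ∀ a : R, IsNClean n a :=
  stmt_3_general n h
end

section
/- Let R be a ring and n a positive integer. If every Pierce stalk of R is n-clean, then R is n-clean. (That is: if for every Pierce ideal P of R the quotient ring R/P is n-clean, then R is n-clean.) -/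
/-- `I` belongs to `S(R)`: `I` is a proper two-sided ideal generated by central idempotents. -/
def MemPierceSet {R : Type*} [Ring R] (I : TwoSidedIdeal R) : Prop :=
  I ≠ ⊤ ∧ ∃ E : Set R, (∀ e ∈ E, IsIdempotentElem e ∧ e ∈ Set.center R) ∧
    I = TwoSidedIdeal.span E

/-- `P` is a Pierce ideal of `R`: a maximal element of `S(R)` with respect to inclusion. -/
def IsPierceIdeal {R : Type*} [Ring R] (P : TwoSidedIdeal R) : Prop :=
  MemPierceSet P ∧ ∀ J : TwoSidedIdeal R, MemPierceSet J → P ≤ J → J = P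

section Aux

variable {R : Type*} [Ring R]

/-- `a` is `n`-clean modulo the two-sided ideal `I`, witnessed by elements of `R`. -/
def NCleanMod (n : ℕ) (I : TwoSidedIdeal R) (a : R) : Prop :=
  ∃ (e : R) (u v : Fin n → R),
    e * e - e ∈ I ∧ (∀ i, u i * v i - 1 ∈ I ∧ v i * u i - 1 ∈ I) ∧
      a - (e + ∑ i, u i) ∈ I

lemma span_le' {s : Set R} {I : TwoSidedIdeal R} (h : s ⊆ I) :
    TwoSidedIdeal.span s ≤ I := fun x hx => TwoSidedIdeal.mem_span_iff.mp hx I h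

lemma nCleanMod_of_quot {n : ℕ} {I : TwoSidedIdeal R} {a : R}
    (h : IsNClean n (a : I.ringCon.Quotient)) : NCleanMod n I a := by
  obtain ⟨e, u, hidem, heq⟩ := h
  have key : ∀ x y : R, (x : I.ringCon.Quotient) = (y : I.ringCon.Quotient) → x - y ∈ I :=
    fun x y hxy => (I.rel_iff x y).mp (I.ringCon.eq.mp hxy)
  obtain ⟨e', he'⟩ : ∃ e' : R, (e' : I.ringCon.Quotient) = e := Quotient.exists_rep e
  choose u' hu' using fun i => (Quotient.exists_rep ((u i : I.ringCon.Quotient)) :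
    ∃ x : R, (x : I.ringCon.Quotient) = (u i : I.ringCon.Quotient))
  choose v' hv' using fun i => (Quotient.exists_rep ((((u i)⁻¹ : (I.ringCon.Quotient)ˣ)) :
      I.ringCon.Quotient) :
    ∃ x : R, (x : I.ringCon.Quotient) = (((u i)⁻¹ : (I.ringCon.Quotient)ˣ) : I.ringCon.Quotient))
  have hu2 : ∀ i, ((u' i : R) : I.ringCon.Quotient) =
      ((u i : I.ringCon.Quotientˣ) : I.ringCon.Quotient) := fun i => hu' i
  have hv2 : ∀ i, ((v' i : R) : I.ringCon.Quotient) =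
      (((u i)⁻¹ : I.ringCon.Quotientˣ) : I.ringCon.Quotient) := fun i => hv' i
  refine ⟨e', u', v', ?_, fun i => ⟨?_, ?_⟩, ?_⟩
  · exact key _ _ (by rw [RingCon.coe_mul, he']; exact hidem)
  · exact key _ _ (by rw [RingCon.coe_mul, RingCon.coe_one, hu2 i, hv2 i]; exact (u i).mul_inv)
  · exact key _ _ (by rw [RingCon.coe_mul, RingCon.coe_one, hv2 i, hu2 i]; exact (u i).inv_mul)
  · refine key _ _ ?_
    have hsum : ((∑ i, u' i : R) : I.ringCon.Quotient) = ∑ i, ((u' i : R) : I.ringCon.Quotient) :=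
      map_sum (RingCon.mk' I.ringCon) u' Finset.univ
    rw [heq, RingCon.coe_add, hsum, ← he']
    congr 1
    exact Finset.sum_congr rfl fun i _ => (hu2 i).symm

lemma isNClean_of_nCleanMod_bot {n : ℕ} {a : R} (h : NCleanMod n (⊥ : TwoSidedIdeal R) a) :
    IsNClean n a := by
  obtain ⟨e, u, v, he, huv, ha⟩ := h
  rw [TwoSidedIdeal.mem_bot, sub_eq_zero] at he ha
  exact ⟨e, fun i => ⟨u i, v i,
    by have := (huv i).1; rwa [TwoSidedIdeal.mem_bot, sub_eq_zero] at this,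
    by have := (huv i).2; rwa [TwoSidedIdeal.mem_bot, sub_eq_zero] at this⟩, he, ha⟩

/-- A sufficient criterion for membership in `S(R)`. -/
lemma memPierceSet_of (I : TwoSidedIdeal R) (hproper : (1 : R) ∉ I)
    (hspan : I ≤ TwoSidedIdeal.span
      {x : R | IsIdempotentElem x ∧ x ∈ Set.center R ∧ x ∈ I}) : MemPierceSet I :=
  ⟨fun htop => hproper (htop ▸ trivial), _, fun e he => ⟨he.1, he.2.1⟩,
    le_antisymm hspan (span_le' fun _ hx => hx.2.2)⟩

lemma chain_bound {ι : Type*} {c : Set (TwoSidedIdeal R)} (hc : IsChain (· ≤ ·) c)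
    {y : TwoSidedIdeal R} (hy : y ∈ c) (s : Finset ι) (g : ι → R)
    (hg : ∀ i ∈ s, ∃ I ∈ c, g i ∈ I) : ∃ I ∈ c, ∀ i ∈ s, g i ∈ I := by
  classical
  induction s using Finset.induction with
  | empty => exact ⟨y, hy, by simp⟩
  | @insert b t hb ih =>
    obtain ⟨I, hI, hIs⟩ := ih fun i hi => hg i (Finset.mem_insert_of_mem hi)
    obtain ⟨J, hJ, hJb⟩ := hg b (Finset.mem_insert_self _ _)
    rcases eq_or_ne I J with rfl | hne
    · exact ⟨I, hI, fun i hi => by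
        rcases Finset.mem_insert.mp hi with rfl | hi
        exacts [hJb, hIs i hi]⟩
    rcases hc.total hI hJ with hle | hle
    · exact ⟨J, hJ, fun i hi => by
        rcases Finset.mem_insert.mp hi with rfl | hi
        exacts [hJb, hle (hIs i hi)]⟩
    · exact ⟨I, hI, fun i hi => by
        rcases Finset.mem_insert.mp hi with rfl | hi
        exacts [hle hJb, hIs i hi]⟩

lemma mul_glue {f g : R} (hgf : g * f = 0) (hfg : f * g = 0) (hgg : g * g = g) (hff : f * f = f)
    (hcg : ∀ x : R, x * g = g * x) (hcf : ∀ x : R, x * f = f * x) (x₁ x₂ y₁ y₂ : R) :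
    (x₁ * g + x₂ * f) * (y₁ * g + y₂ * f) = (x₁ * y₁) * g + (x₂ * y₂) * f := by
  have h1 : ∀ a b : R, (a * g) * (b * g) = (a * b) * g := fun a b =>
    calc (a * g) * (b * g) = a * ((g * b) * g) := by rw [mul_assoc a g, ← mul_assoc g b]
    _ = a * (b * (g * g)) := by rw [← hcg, mul_assoc]
    _ = (a * b) * g := by rw [hgg, ← mul_assoc]
  have h2 : ∀ a b : R, (a * f) * (b * f) = (a * b) * f := fun a b =>
    calc (a * f) * (b * f) = a * ((f * b) * f) := by rw [mul_assoc a f, ← mul_assoc f b]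
    _ = a * (b * (f * f)) := by rw [← hcf, mul_assoc]
    _ = (a * b) * f := by rw [hff, ← mul_assoc]
  have h3 : ∀ a b : R, (a * g) * (b * f) = 0 := fun a b =>
    calc (a * g) * (b * f) = a * ((g * b) * f) := by rw [mul_assoc a g, ← mul_assoc g b]
    _ = a * (b * (g * f)) := by rw [← hcg, mul_assoc]
    _ = 0 := by rw [hgf, mul_zero, mul_zero]
  have h4 : ∀ a b : R, (a * f) * (b * g) = 0 := fun a b =>
    calc (a * f) * (b * g) = a * ((f * b) * g) := by rw [mul_assoc a f, ← mul_assoc f b]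
    _ = a * (b * (f * g)) := by rw [← hcf, mul_assoc]
    _ = 0 := by rw [hfg, mul_zero, mul_zero]
  rw [add_mul, mul_add, mul_add, h1, h2, h3, h4]
  abel

/-- Given `M ∈ S(R)` (with generating set `E_M`), a central idempotent `f` with complement
`g = 1 - f ∉ M`, the ideal `M + Rf = {x | x * g ∈ M}` is again in `S(R)`, contains `M` and
contains `f`. -/
lemma pierce_step {M : TwoSidedIdeal R} {E_M : Set R}
    (hE_M : ∀ e ∈ E_M, IsIdempotentElem e ∧ e ∈ Set.center R)
    (hMspan : M = TwoSidedIdeal.span E_M) {f g : R}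
    (hff : f * f = f) (hcf : ∀ x : R, x * f = f * x) (hg : g = 1 - f) (hgM : g ∉ M) :
    ∃ P : TwoSidedIdeal R, (∀ x : R, x ∈ P ↔ x * g ∈ M) ∧ MemPierceSet P ∧ M ≤ P ∧ f ∈ P := by
  have hfg : f * g = 0 := by rw [hg, mul_sub, mul_one, hff, sub_self]
  have hgf : g * f = 0 := by rw [hg, sub_mul, one_mul, hff, sub_self]
  have hcg : ∀ x : R, x * g = g * x := fun x => by
    rw [hg, mul_sub, mul_one, sub_mul, one_mul, hcf]
  have hgpf : g + f = 1 := by rw [hg]; exact sub_add_cancel 1 f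
  refine ⟨TwoSidedIdeal.mk' {x : R | x * g ∈ M}
    (by simp only [Set.mem_setOf_eq, zero_mul]; exact M.zero_mem)
    (fun {x y} hx hy => by
      simp only [Set.mem_setOf_eq, add_mul] at *; exact M.add_mem hx hy)
    (fun {x} hx => by
      simp only [Set.mem_setOf_eq, neg_mul] at *; exact M.neg_mem hx)
    (fun {x y} hy => by
      simp only [Set.mem_setOf_eq, mul_assoc] at *; exact M.mul_mem_left _ _ hy)
    (fun {x y} hx => by
      simp only [Set.mem_setOf_eq] at *
      rw [mul_assoc, hcg y, ← mul_assoc]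
      exact M.mul_mem_right _ _ hx), fun x => TwoSidedIdeal.mem_mk' _ _ _ _ _ _ x, ?_, ?_, ?_⟩
  · refine memPierceSet_of _ ?_ ?_
    · rw [TwoSidedIdeal.mem_mk', Set.mem_setOf_eq, one_mul]
      exact hgM
    · intro x hx
      rw [TwoSidedIdeal.mem_mk', Set.mem_setOf_eq] at hx
      have hx' : x * g + x * f = x := by rw [← mul_add, hgpf, mul_one]
      rw [← hx']
      refine TwoSidedIdeal.add_mem _ ?_ ?_
      · refine TwoSidedIdeal.span_mono (t := {y : R | IsIdempotentElem y ∧ y ∈ Set.center R ∧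
          y ∈ TwoSidedIdeal.mk' {x : R | x * g ∈ M} _ _ _ _ _}) ?_ (hMspan ▸ hx)
        intro e' he'
        refine ⟨(hE_M e' he').1, (hE_M e' he').2, ?_⟩
        rw [TwoSidedIdeal.mem_mk', Set.mem_setOf_eq]
        exact M.mul_mem_right _ _ (hMspan ▸ TwoSidedIdeal.subset_span he')
      · refine TwoSidedIdeal.mul_mem_left _ _ _ (TwoSidedIdeal.subset_span ?_)
        refine ⟨hff, Semigroup.mem_center_iff.mpr fun x => (hcf x).symm ▸ rfl, ?_⟩
        rw [TwoSidedIdeal.mem_mk', Set.mem_setOf_eq, hfg]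
        exact M.zero_mem
  · intro x hx
    rw [TwoSidedIdeal.mem_mk', Set.mem_setOf_eq]
    exact M.mul_mem_right _ _ hx
  · rw [TwoSidedIdeal.mem_mk', Set.mem_setOf_eq, hfg]
    exact M.zero_mem

end Aux

/-- if every Pierce stalk `R/P` of `R` is `n`-clean, then `R` is `n`-clean. -/
theorem stmt_4 {R : Type*} [Ring R] (n : ℕ) (hn : 0 < n)
    (h : ∀ P : TwoSidedIdeal R, IsPierceIdeal P →
      ∀ a : P.ringCon.Quotient, IsNClean n a) :
    ∀ a : R, IsNClean n a := by
  classical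
  intro a
  by_cases hTriv : Subsingleton R
  · exact ⟨0, fun _ => 1, by simp [IsIdempotentElem], Subsingleton.elim _ _⟩
  have : Nontrivial R := not_subsingleton_iff_nontrivial.mp hTriv
  by_contra hna
  set A : Set (TwoSidedIdeal R) := {I | MemPierceSet I ∧ ¬ NCleanMod n I a} with hA
  have hbotA : (⊥ : TwoSidedIdeal R) ∈ A := by
    refine ⟨memPierceSet_of _ (by simp [TwoSidedIdeal.mem_bot]) bot_le,
      fun hnc => hna (isNClean_of_nCleanMod_bot hnc)⟩
  have hchain : ∀ c ⊆ A, IsChain (· ≤ ·) c → ∀ y ∈ c,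
      ∃ ub ∈ A, ∀ z ∈ c, z ≤ ub := by
    intro c hcA hc y hyc
    -- construct the union of the chain
    set U : TwoSidedIdeal R := TwoSidedIdeal.mk' {x : R | ∃ I ∈ c, x ∈ I}
      ⟨y, hyc, TwoSidedIdeal.zero_mem y⟩
      (fun {x z} hx hz => by
        obtain ⟨I, hI, hxI⟩ := hx
        obtain ⟨J, hJ, hzJ⟩ := hz
        rcases eq_or_ne I J with rfl | hne
        · exact ⟨I, hI, I.add_mem hxI hzJ⟩
        rcases hc.total hI hJ with hle | hle
        · exact ⟨J, hJ, J.add_mem (hle hxI) hzJ⟩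
        · exact ⟨I, hI, I.add_mem hxI (hle hzJ)⟩)
      (fun {x} hx => by
        obtain ⟨I, hI, hxI⟩ := hx; exact ⟨I, hI, I.neg_mem hxI⟩)
      (fun {x z} hz => by
        obtain ⟨I, hI, hzI⟩ := hz; exact ⟨I, hI, I.mul_mem_left _ _ hzI⟩)
      (fun {x z} hx => by
        obtain ⟨I, hI, hxI⟩ := hx; exact ⟨I, hI, I.mul_mem_right _ _ hxI⟩) with hU
    have hmemU : ∀ x : R, x ∈ U ↔ ∃ I ∈ c, x ∈ I := fun x =>
      TwoSidedIdeal.mem_mk' _ _ _ _ _ _ x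
    refine ⟨U, ⟨?_, ?_⟩, fun z hz => fun x hx => (hmemU x).mpr ⟨z, hz, hx⟩⟩
    · refine memPierceSet_of _ ?_ ?_
      · intro h1U
        obtain ⟨I, hI, h1I⟩ := (hmemU 1).mp h1U
        exact (hcA hI).1.1 (I.eq_top h1I)
      · intro x hx
        obtain ⟨I, hI, hxI⟩ := (hmemU x).mp hx
        obtain ⟨-, E, hE, hspan⟩ := (hcA hI).1
        refine TwoSidedIdeal.span_mono (t := {y : R | IsIdempotentElem y ∧
          y ∈ Set.center R ∧ y ∈ U}) ?_ (hspan ▸ hxI)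
        intro e he
        exact ⟨(hE e he).1, (hE e he).2,
          (hmemU e).mpr ⟨I, hI, hspan ▸ TwoSidedIdeal.subset_span he⟩⟩
    · rintro ⟨e, u, v, he, huv, ha⟩
      -- collect the finitely many membership witnesses into one member of the chain
      obtain ⟨I, hI, hIall⟩ := chain_bound hc hyc (Finset.univ : Finset (Fin n ⊕ Fin n ⊕ Fin 2))
        (Sum.elim (fun i => u i * v i - 1)
          (Sum.elim (fun i => v i * u i - 1)
            (fun j => if j = 0 then e * e - e else a - (e + ∑ i, u i))))
        (by
          rintro (i | i | j) -
          · exact (hmemU _).mp (huv i).1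
          · exact (hmemU _).mp (huv i).2
          · rcases Fin.exists_fin_two.mp ⟨j, rfl⟩ with rfl | rfl
            · exact (hmemU _).mp (by simpa using he)
            · exact (hmemU _).mp (by simpa using ha))
      refine (hcA hI).2 ⟨e, u, v, ?_, fun i => ⟨?_, ?_⟩, ?_⟩
      · simpa using hIall (Sum.inr (Sum.inr 0)) (Finset.mem_univ _)
      · exact hIall (Sum.inl i) (Finset.mem_univ _)
      · exact hIall (Sum.inr (Sum.inl i)) (Finset.mem_univ _)
      · simpa using hIall (Sum.inr (Sum.inr 1)) (Finset.mem_univ _)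
  obtain ⟨M, -, hMA, hMmax⟩ : ∃ M, (⊥ : TwoSidedIdeal R) ≤ M ∧ M ∈ A ∧
      ∀ z ∈ A, M ≤ z → z ≤ M := by
    obtain ⟨M, hM1, hM2⟩ := zorn_le_nonempty₀ A hchain ⊥ hbotA
    exact ⟨M, hM1, hM2.1, fun z hz hle => hM2.2 hz hle⟩
  obtain ⟨hMPS, hMnc⟩ := hMA
  by_cases hP : IsPierceIdeal M
  · exact hMnc (nCleanMod_of_quot (h M hP (a : M.ringCon.Quotient)))
  -- M is not a Pierce ideal: find a central idempotent f ∉ M coming from a bigger ideal J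
  rw [IsPierceIdeal, not_and] at hP
  push_neg at hP
  obtain ⟨J, hJPS, hMJ, hJM⟩ := hP hMPS
  obtain ⟨hJtop, E_J, hE_J, hJspan⟩ := hJPS
  obtain ⟨f, hfE, hfM⟩ : ∃ f ∈ E_J, f ∉ M := by
    by_contra hcon
    push_neg at hcon
    exact hJM (le_antisymm (hJspan ▸ span_le' fun x hx => hcon x hx) hMJ)
  have hff : f * f = f := (hE_J f hfE).1
  have hcf : ∀ x : R, x * f = f * x := fun x =>
    (Semigroup.mem_center_iff.mp (hE_J f hfE).2 x)
  have hfJ : f ∈ J := hJspan ▸ TwoSidedIdeal.subset_span hfE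
  have h1fM : (1 : R) - f ∉ M := by
    intro h1f
    refine hJtop (J.eq_top ?_)
    have : (1 : R) - f + f ∈ J := J.add_mem (hMJ h1f) hfJ
    simpa using this
  -- complement idempotent
  set g : R := 1 - f with hgdef
  have hgg : g * g = g := by rw [hgdef, sub_mul, one_mul, mul_sub, mul_one, hff, sub_self, sub_zero]
  have hcg : ∀ x : R, x * g = g * x := fun x => by
    rw [hgdef, mul_sub, mul_one, sub_mul, one_mul, hcf]
  have hfg : f * g = 0 := by rw [hgdef, mul_sub, mul_one, hff, sub_self]
  have hgf : g * f = 0 := by rw [hgdef, sub_mul, one_mul, hff, sub_self]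
  have hgpf : g + f = 1 := by rw [hgdef]; exact sub_add_cancel 1 f
  obtain ⟨-, E_M, hE_M, hMspan⟩ := hMPS
  -- the two enlarged ideals
  obtain ⟨P₁, hmemP₁, hPS₁, hMP₁, hfP₁⟩ :=
    pierce_step hE_M hMspan hff hcf hgdef h1fM
  obtain ⟨P₂, hmemP₂, hPS₂, hMP₂, hgP₂⟩ :=
    pierce_step hE_M hMspan hgg hcg (show f = 1 - g by rw [hgdef]; exact (sub_sub_cancel 1 f).symm) hfM
  have hnc₁ : NCleanMod n P₁ a := by
    by_contra h
    exact hfM (hMmax P₁ ⟨hPS₁, h⟩ hMP₁ hfP₁)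
  have hnc₂ : NCleanMod n P₂ a := by
    by_contra h
    exact h1fM (hMmax P₂ ⟨hPS₂, h⟩ hMP₂ hgP₂)
  obtain ⟨e₁, u₁, v₁, he₁, huv₁, ha₁⟩ := hnc₁
  obtain ⟨e₂, u₂, v₂, he₂, huv₂, ha₂⟩ := hnc₂
  -- translate memberships
  rw [hmemP₁] at he₁ ha₁
  rw [hmemP₂] at he₂ ha₂
  have ha' : a * g + a * f = a := by rw [← mul_add, hgpf, mul_one]
  refine hMnc ⟨e₁ * g + e₂ * f, fun i => u₁ i * g + u₂ i * f, fun i => v₁ i * g + v₂ i * f,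
    ?_, fun i => ⟨?_, ?_⟩, ?_⟩
  · have key : (e₁ * g + e₂ * f) * (e₁ * g + e₂ * f) - (e₁ * g + e₂ * f) =
        (e₁ * e₁ - e₁) * g + (e₂ * e₂ - e₂) * f := by
      rw [mul_glue hgf hfg hgg hff hcg hcf, sub_mul, sub_mul]
      abel
    rw [key]
    exact M.add_mem he₁ he₂
  · have key : (u₁ i * g + u₂ i * f) * (v₁ i * g + v₂ i * f) - 1 =
        (u₁ i * v₁ i - 1) * g + (u₂ i * v₂ i - 1) * f := by
      rw [mul_glue hgf hfg hgg hff hcg hcf, sub_mul, sub_mul, one_mul, one_mul, ← hgpf]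
      abel
    rw [key]
    exact M.add_mem ((hmemP₁ _).mp (huv₁ i).1) ((hmemP₂ _).mp (huv₂ i).1)
  · have key : (v₁ i * g + v₂ i * f) * (u₁ i * g + u₂ i * f) - 1 =
        (v₁ i * u₁ i - 1) * g + (v₂ i * u₂ i - 1) * f := by
      rw [mul_glue hgf hfg hgg hff hcg hcf, sub_mul, sub_mul, one_mul, one_mul, ← hgpf]
      abel
    rw [key]
    exact M.add_mem ((hmemP₁ _).mp (huv₁ i).2) ((hmemP₂ _).mp (huv₂ i).2)
  · have hsum : (∑ i, (u₁ i * g + u₂ i * f)) = (∑ i, u₁ i) * g + (∑ i, u₂ i) * f := by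
      rw [Finset.sum_add_distrib, Finset.sum_mul, Finset.sum_mul]
    have key : a - (e₁ * g + e₂ * f + ∑ i, (u₁ i * g + u₂ i * f)) =
        (a - (e₁ + ∑ i, u₁ i)) * g + (a - (e₂ + ∑ i, u₂ i)) * f := by
      rw [hsum, sub_mul, sub_mul, add_mul, add_mul]
      conv_lhs => rw [← ha']
      abel
    rw [key]
    exact M.add_mem ha₁ ha₂
end

section
/- For any ring R, every 2 × 2 matrix over R is 2-clean: every A ∈ M₂(R) can be written as A = E + U₁ + U₂ where E ∈ M₂(R) is an idempotent matrix and U₁, U₂ are invertible matrices in M₂(R). -/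
/-- over any ring `R`, every `2 × 2` matrix is 2-clean: it is the sum of an
idempotent matrix and two invertible matrices. -/
theorem stmt_5 {R : Type*} [Ring R] (A : Matrix (Fin 2) (Fin 2) R) :
    ∃ E U₁ U₂ : Matrix (Fin 2) (Fin 2) R,
      IsIdempotentElem E ∧ IsUnit U₁ ∧ IsUnit U₂ ∧ A = E + U₁ + U₂ := by
  set a := A 0 0 with ha
  set b := A 0 1 with hb
  set c := A 1 0 with hc
  set d := A 1 1 with hd
  refine ⟨!![0, 0; c + 2 - d - (d-2)*(a-b-1), 1],
    !![b, b-1; 1, 1],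
    !![a-b, 1; (d-3)+(d-2)*(a-b-1), d-2], ?_, ?_, ?_, ?_⟩
  · show _ * _ = _
    ext i j
    fin_cases i <;> fin_cases j <;>
      simp [Matrix.mul_apply, Fin.sum_univ_two]
  · exact ⟨⟨!![b, b-1; 1, 1], !![1, 1-b; -1, b], by
      ext i j
      fin_cases i <;> fin_cases j <;>
        simp [Matrix.mul_apply, Fin.sum_univ_two, Matrix.one_apply] <;> (noncomm_ring; try simp only [smul_eq_mul, zsmul_eq_mul, nsmul_eq_mul, ← ha, ← hb, ← hc, ← hd]; try noncomm_ring; try norm_num; try abel), by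
      ext i j
      fin_cases i <;> fin_cases j <;>
        simp [Matrix.mul_apply, Fin.sum_univ_two, Matrix.one_apply] <;> (noncomm_ring; try simp only [smul_eq_mul, zsmul_eq_mul, nsmul_eq_mul, ← ha, ← hb, ← hc, ← hd]; try noncomm_ring; try norm_num; try abel)⟩, rfl⟩
  · exact ⟨⟨!![a-b, 1; (d-3)+(d-2)*(a-b-1), d-2],
      !![d-2, -1; -(a-b-1)-(a-b)*(d-3), a-b], by
      ext i j
      fin_cases i <;> fin_cases j <;>
        simp [Matrix.mul_apply, Fin.sum_univ_two, Matrix.one_apply] <;> (noncomm_ring; try simp only [smul_eq_mul, zsmul_eq_mul, nsmul_eq_mul, ← ha, ← hb, ← hc, ← hd]; try noncomm_ring; try norm_num; try abel), by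
      ext i j
      fin_cases i <;> fin_cases j <;>
        simp [Matrix.mul_apply, Fin.sum_univ_two, Matrix.one_apply] <;> (noncomm_ring; try simp only [smul_eq_mul, zsmul_eq_mul, nsmul_eq_mul, ← ha, ← hb, ← hc, ← hd]; try noncomm_ring; try norm_num; try abel)⟩, rfl⟩
  · ext i j
    fin_cases i <;> fin_cases j <;>
      simp [Matrix.add_apply, ← ha, ← hb, ← hc, ← hd] <;> (noncomm_ring; try simp only [smul_eq_mul, zsmul_eq_mul, nsmul_eq_mul, ← ha, ← hb, ← hc, ← hd]; try noncomm_ring; try norm_num; try abel)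
end

section
/- For any ring R, every 3 × 3 matrix over R is 2-clean: every B ∈ M₃(R) can be written as B = F + U₁ + U₂ where F ∈ M₃(R) is an idempotent matrix and U₁, U₂ are invertible matrices in M₃(R). -/
open Matrix

lemma stmt6_key {R : Type*} [Ring R] (a b c d e f g h i : R) :
    ∃ E U₁ U₂ : Matrix (Fin 3) (Fin 3) R,
      IsIdempotentElem E ∧ IsUnit U₁ ∧ IsUnit U₂ ∧
      !![a,b,c;d,e,f;g,h,i] = E + U₁ + U₂ := by
  refine ⟨!![0,0,0;0,0,0; g - (i-1-1)*(a - 1 - b*(d-1)), h - 1, 1],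
          !![1+b*(d-1), b, c-1; d-1, 1, f; 0,0,1],
          !![a - 1 - b*(d-1), 0, 1; 1, e-1, 0;
             (i-1-1)*(a - 1 - b*(d-1)), 1, i-1-1], ?_, ?_, ?_, ?_⟩
  · show _ * _ = _
    ext x y
    fin_cases x <;> fin_cases y <;>
      simp [Matrix.mul_apply, Fin.sum_univ_three]
  · refine ⟨⟨_, !![1, -b, b*f - (c-1);
                   -(d-1), 1 + (d-1)*b, (d-1)*(c-1) - (d-1)*(b*f) - f;
                   0, 0, 1], ?_, ?_⟩, rfl⟩ <;>
    · ext x y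
      fin_cases x <;> fin_cases y <;>
        (simp [Matrix.mul_apply, Fin.sum_univ_three]; try noncomm_ring)
  · refine ⟨⟨_, !![(e-1)*(i-1-1), 1, -(e-1);
                   -(i-1-1), 0, 1;
                   1 - (a - 1 - b*(d-1))*(e-1)*(i-1-1), -(a - 1 - b*(d-1)),
                     (a - 1 - b*(d-1))*(e-1)], ?_, ?_⟩, rfl⟩ <;>
    · ext x y
      fin_cases x <;> fin_cases y <;>
        (simp [Matrix.mul_apply, Fin.sum_univ_three]; try noncomm_ring)
  · ext x y
    fin_cases x <;> fin_cases y <;>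
      (simp; try noncomm_ring)

/-- over any ring `R`, every `3 × 3` matrix is 2-clean: it is the sum of an
idempotent matrix and two invertible matrices. -/
theorem stmt_6 {R : Type*} [Ring R] (B : Matrix (Fin 3) (Fin 3) R) :
    ∃ E U₁ U₂ : Matrix (Fin 3) (Fin 3) R,
      IsIdempotentElem E ∧ IsUnit U₁ ∧ IsUnit U₂ ∧ B = E + U₁ + U₂ := by
  rw [Matrix.eta_fin_three B]
  exact stmt6_key _ _ _ _ _ _ _ _ _
end

section
/- Let R = ℤ₍₂₎ ∩ ℤ₍₃₎ = { m/n ∈ ℚ : m, n ∈ ℤ, 2 ∤ n and 3 ∤ n } (a subring of ℚ) and let S = M₂(R). Then the matrix F = [[3, 0], [6, 3]] ∈ S satisfies F² − F ∈ J(S), but there is no idempotent E ∈ S such that F − E ∈ J(S); that is, the idempotent F + J(S) of S/J(S) cannot be lifted to an idempotent of S modulo the Jacobson radical J(S). -/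
/-!
Over `R`, `1 + 6y` is always a unit, so `6 ∈ J(R)`, while `2` and `3` are not units. Since
`J(M₂(R)) = M₂(J(R))`, the matrix `F² - F = 6 • [[1, 0], [5, 1]]` lies in `J(M₂(R))`. An idempotent
`2 × 2` matrix over a domain is `0`, `1`, or has trace `1`; correspondingly `F - E ∈ M₂(J(R))` would
put `3`, `3 - 1 = 2` or `tr (F - E) = 5` into `J(R)`. None of them is there, because `x ∈ J(R)`
forces `x + 1` to be a unit, whereas `4`, `3` and `6` are not.
-/

open Ideal

theorem Matrix.mem_jacobson_bot_iff {R n : Type*} [Ring R] [Fintype n] [DecidableEq n]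
    {M : Matrix n n R} :
    M ∈ jacobson (⊥ : Ideal (Matrix n n R)) ↔ ∀ i j, M i j ∈ jacobson (⊥ : Ideal R) := by
  simp only [← TwoSidedIdeal.bot_asIdeal, ← TwoSidedIdeal.asIdeal_jacobson,
    TwoSidedIdeal.mem_asIdeal, ← TwoSidedIdeal.matrix_jacobson_bot, TwoSidedIdeal.mem_matrix]

theorem Matrix.eq_zero_or_eq_one_or_trace_eq_one_of_isIdempotentElem {R : Type*} [CommRing R]
    [NoZeroDivisors R] {E : Matrix (Fin 2) (Fin 2) R} (hE : IsIdempotentElem E) :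
    E = 0 ∨ E = 1 ∨ E.trace = 1 := by
  have entry (i j : Fin 2) : (E * E) i j = E i j := by rw [hE.eq]
  simp only [Matrix.mul_apply, Fin.sum_univ_two] at entry
  rw [Matrix.trace_fin_two]
  by_cases htr : E 0 0 + E 1 1 = 1
  · exact Or.inr (Or.inr htr)
  have cancel {x : R} (h : x * (E 0 0 + E 1 1 - 1) = 0) : x = 0 :=
    (mul_eq_zero.mp h).resolve_right (sub_ne_zero.mpr htr)
  have hb : E 0 1 = 0 := cancel (by linear_combination entry 0 1)
  have hc : E 1 0 = 0 := cancel (by linear_combination entry 1 0)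
  have hd : E 1 1 = E 0 0 :=
    (sub_eq_zero.mp (cancel (by linear_combination entry 0 0 - entry 1 1))).symm
  rcases mul_eq_zero.mp (by linear_combination entry 0 0 - E 1 0 * hb : E 0 0 * (E 0 0 - 1) = 0)
    with ha | ha
  · left
    ext i j
    fin_cases i <;> fin_cases j <;> simp [ha, hb, hc, hd]
  · right; left
    ext i j
    fin_cases i <;> fin_cases j <;> simp [sub_eq_zero.mp ha, hb, hc, hd]

theorem notMem_jacobson_bot_of_dvd_add_one {S : Type*} [CommRing S] {x d : S}
    (hd : ¬ IsUnit d) (hdvd : d ∣ x + 1) : x ∉ jacobson (⊥ : Ideal S) := fun hx =>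
  hd (isUnit_of_dvd_unit hdvd (by simpa using mem_jacobson_bot.mp hx 1))

theorem Subring.isUnit_iff_inv_mem {K : Type*} [DivisionRing K] {R : Subring K} {x : R}
    (hx : (x : K) ≠ 0) : IsUnit x ↔ (x : K)⁻¹ ∈ R := by
  refine ⟨fun h => ?_, fun h => .of_mul_eq_one ⟨_, h⟩ (Subtype.ext (mul_inv_cancel₀ hx))⟩
  obtain ⟨y, hy⟩ := h.exists_right_inv
  rw [inv_eq_of_mul_eq_one_right (congrArg Subtype.val hy)]
  exact y.2

namespace LocalizationAtTwoThree

variable {R : Subring ℚ}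
  (hR : ∀ q : ℚ, q ∈ R ↔ ∃ m n : ℤ, ¬ (2 ∣ n) ∧ ¬ (3 ∣ n) ∧ q = (m : ℚ) / (n : ℚ))
include hR

theorem not_isUnit_natCast_of_eq_two_or_three {p : ℕ} (hp : p = 2 ∨ p = 3) :
    ¬ IsUnit (p : R) := by
  have hp0 : (p : ℚ) ≠ 0 := by rcases hp with rfl | rfl <;> norm_num
  rw [Subring.isUnit_iff_inv_mem (by simpa using hp0), hR]
  rintro ⟨m, n, h2, h3, hpn⟩
  have hn : (n : ℚ) ≠ 0 := by
    exact_mod_cast fun h : n = 0 => h2 (h ▸ dvd_zero 2)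
  have hnpm : n = p * m := by
    push_cast at hpn
    field_simp at hpn
    exact_mod_cast hpn
  rcases hp with rfl | rfl
  exacts [h2 ⟨m, hnpm⟩, h3 ⟨m, hnpm⟩]

theorem not_isUnit_two : ¬ IsUnit (2 : R) := by
  exact_mod_cast not_isUnit_natCast_of_eq_two_or_three hR (p := 2) (Or.inl rfl)

theorem not_isUnit_three : ¬ IsUnit (3 : R) := by
  exact_mod_cast not_isUnit_natCast_of_eq_two_or_three hR (p := 3) (Or.inr rfl)

theorem isUnit_six_mul_add_one (y : R) : IsUnit (6 * y + 1) := by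
  obtain ⟨m, n, h2, h3, hy⟩ := (hR y).mp y.2
  have hn : (n : ℚ) ≠ 0 := by
    exact_mod_cast fun h : n = 0 => h2 (h ▸ dvd_zero 2)
  have hk : ((6 * m + n : ℤ) : ℚ) ≠ 0 := by
    exact_mod_cast fun h : 6 * m + n = 0 => h2 ⟨-3 * m, by omega⟩
  have hval : ((6 * y + 1 : R) : ℚ) = ((6 * m + n : ℤ) : ℚ) / n := by
    have h6 : ((6 : R) : ℚ) = 6 := by norm_cast
    push_cast [h6, hy]
    field_simp
  rw [Subring.isUnit_iff_inv_mem (by rw [hval]; exact div_ne_zero hk hn), hR]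
  exact ⟨n, 6 * m + n, by omega, by omega, by rw [hval, inv_div]⟩

theorem six_mem_jacobson_bot : (6 : R) ∈ jacobson (⊥ : Ideal R) :=
  mem_jacobson_bot.mpr (isUnit_six_mul_add_one hR)

theorem two_notMem_jacobson_bot : (2 : R) ∉ jacobson (⊥ : Ideal R) :=
  notMem_jacobson_bot_of_dvd_add_one (not_isUnit_three hR) ⟨1, by norm_num⟩

theorem three_notMem_jacobson_bot : (3 : R) ∉ jacobson (⊥ : Ideal R) :=
  notMem_jacobson_bot_of_dvd_add_one (not_isUnit_two hR) ⟨2, by norm_num⟩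

theorem five_notMem_jacobson_bot : (5 : R) ∉ jacobson (⊥ : Ideal R) :=
  notMem_jacobson_bot_of_dvd_add_one (not_isUnit_two hR) ⟨3, by norm_num⟩

end LocalizationAtTwoThree

open LocalizationAtTwoThree in
/-- let `R = ℤ₍₂₎ ∩ ℤ₍₃₎` be the subring of `ℚ` of fractions `m/n` with
`2 ∤ n` and `3 ∤ n`, and `S = M₂(R)`.  The matrix `F = [[3,0],[6,3]]` satisfies
`F² - F ∈ J(S)`, but no idempotent `E ∈ S` satisfies `F - E ∈ J(S)`
(where `J(S)` denotes the Jacobson radical of `S`). -/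
theorem stmt_7 (R : Subring ℚ)
    (hR : ∀ q : ℚ, q ∈ R ↔ ∃ m n : ℤ, ¬ (2 ∣ n) ∧ ¬ (3 ∣ n) ∧ q = (m : ℚ) / (n : ℚ)) :
    (!![(3 : R), 0; 6, 3] ^ 2 - !![(3 : R), 0; 6, 3]
        ∈ Ideal.jacobson (⊥ : Ideal (Matrix (Fin 2) (Fin 2) R))) ∧
    ¬ ∃ E : Matrix (Fin 2) (Fin 2) R, IsIdempotentElem E ∧
        !![(3 : R), 0; 6, 3] - E ∈ Ideal.jacobson (⊥ : Ideal (Matrix (Fin 2) (Fin 2) R)) := by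
  refine ⟨?_, ?_⟩
  · have hF : !![(3 : R), 0; 6, 3] ^ 2 - !![(3 : R), 0; 6, 3] = (6 : R) • !![1, 0; 5, 1] := by
      ext i j
      fin_cases i <;> fin_cases j <;> norm_num [sq]
    rw [hF, Matrix.mem_jacobson_bot_iff]
    exact fun i j => Ideal.mul_mem_right _ _ (six_mem_jacobson_bot hR)
  · rintro ⟨E, hE, hFE⟩
    rw [Matrix.mem_jacobson_bot_iff] at hFE
    rcases Matrix.eq_zero_or_eq_one_or_trace_eq_one_of_isIdempotentElem hE with rfl | rfl | htr
    · exact three_notMem_jacobson_bot hR (by simpa using hFE 0 0)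
    · exact two_notMem_jacobson_bot hR
        (by simpa [show (3 : R) - 1 = 2 by norm_num] using hFE 0 0)
    · have htr5 : (!![(3 : R), 0; 6, 3] - E) 0 0 + (!![(3 : R), 0; 6, 3] - E) 1 1 = 5 := by
        rw [Matrix.trace_fin_two] at htr
        simp only [Matrix.sub_apply, Matrix.of_apply, Matrix.cons_val', Matrix.cons_val_zero,
          Matrix.cons_val_one, Matrix.empty_val', Matrix.cons_val_fin_one]
        linear_combination -htr
      exact five_notMem_jacobson_bot hR (htr5 ▸ add_mem (hFE 0 0) (hFE 1 1))
end

section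
/- Let R be a ring, let m, n ≥ 1 and let k ≥ 2. If the matrix rings Mₙ(R) and Mₘ(R) are both k-clean, then the matrix ring Mₙ₊ₘ(R) is k-clean. -/
set_option maxHeartbeats 1000000


section Aux

open Matrix

variable {R : Type*} [Ring R] {p q : Type*} [Fintype p] [Fintype q]
  [DecidableEq p] [DecidableEq q]

/-- Block diagonal unit. -/
def diagU (u : (Matrix p p R)ˣ) (v : (Matrix q q R)ˣ) : (Matrix (p ⊕ q) (p ⊕ q) R)ˣ where
  val := fromBlocks u.val 0 0 v.val
  inv := fromBlocks (u⁻¹).val 0 0 (v⁻¹).val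
  val_inv := by
    rw [fromBlocks_multiply]
    simp only [Matrix.mul_zero, Matrix.zero_mul, Matrix.mul_one, Matrix.one_mul, add_zero,
      zero_add, neg_zero, add_neg_cancel, neg_add_cancel, Units.mul_inv, Units.inv_mul,
      fromBlocks_one]
  inv_val := by
    rw [fromBlocks_multiply]
    simp only [Matrix.mul_zero, Matrix.zero_mul, Matrix.mul_one, Matrix.one_mul, add_zero,
      zero_add, neg_zero, add_neg_cancel, neg_add_cancel, Units.mul_inv, Units.inv_mul,
      fromBlocks_one]

/-- Lower triangular unit. -/
def lowU (C : Matrix q p R) : (Matrix (p ⊕ q) (p ⊕ q) R)ˣ where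
  val := fromBlocks 1 0 C 1
  inv := fromBlocks 1 0 (-C) 1
  val_inv := by
    rw [fromBlocks_multiply]
    simp only [Matrix.mul_zero, Matrix.zero_mul, Matrix.mul_one, Matrix.one_mul, add_zero,
      zero_add, neg_zero, add_neg_cancel, neg_add_cancel, Units.mul_inv, Units.inv_mul,
      fromBlocks_one]
  inv_val := by
    rw [fromBlocks_multiply]
    simp only [Matrix.mul_zero, Matrix.zero_mul, Matrix.mul_one, Matrix.one_mul, add_zero,
      zero_add, neg_zero, add_neg_cancel, neg_add_cancel, Units.mul_inv, Units.inv_mul,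
      fromBlocks_one]

/-- Upper triangular unit with unit diagonal. -/
def upU (u : (Matrix p p R)ˣ) (B : Matrix p q R) (v : (Matrix q q R)ˣ) :
    (Matrix (p ⊕ q) (p ⊕ q) R)ˣ where
  val := fromBlocks u.val B 0 v.val
  inv := fromBlocks (u⁻¹).val (-((u⁻¹).val * B * (v⁻¹).val)) 0 (v⁻¹).val
  val_inv := by
    rw [fromBlocks_multiply]
    simp only [Matrix.mul_zero, Matrix.zero_mul, Matrix.mul_neg, ← Matrix.mul_assoc,
      Units.mul_inv, Matrix.one_mul, add_zero, zero_add, neg_zero, neg_add_cancel,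
      fromBlocks_one]
  inv_val := by
    rw [fromBlocks_multiply]
    simp only [Matrix.mul_zero, Matrix.zero_mul, Matrix.neg_mul, Matrix.mul_assoc,
      Units.inv_mul, Matrix.mul_one, add_zero, zero_add, neg_zero, add_neg_cancel,
      fromBlocks_one]

lemma isNClean_map {R S : Type*} [Ring R] [Ring S] (f : R ≃+* S) {k : ℕ} {a : R}
    (h : IsNClean k a) : IsNClean k (f a) := by
  obtain ⟨e, u, he, rfl⟩ := h
  refine ⟨f e, fun i => Units.map (f : R →* S) (u i), ?_, ?_⟩
  · have := congrArg f he
    simpa [IsIdempotentElem, _root_.map_mul] using this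
  · simp

omit [Fintype p] [Fintype q] [DecidableEq p] [DecidableEq q] in
lemma sum_fromBlocks {ι : Type*} (s : Finset ι)
    (f : ι → Matrix p p R) (g : ι → Matrix q q R) :
    ∑ i ∈ s, fromBlocks (f i) 0 0 (g i) =
      fromBlocks (∑ i ∈ s, f i) 0 0 (∑ i ∈ s, g i) := by
  induction s using Finset.cons_induction with
  | empty => simp
  | cons a s ha ih => simp [Finset.sum_cons, ih, fromBlocks_add]

lemma block_clean {n m k' : ℕ} {R : Type*} [Ring R]
    (hN : ∀ A : Matrix (Fin n) (Fin n) R, IsNClean (k' + 1) A)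
    (hM : ∀ A : Matrix (Fin m) (Fin m) R, IsNClean (k' + 1) A)
    (A : Matrix (Fin n ⊕ Fin m) (Fin n ⊕ Fin m) R) : IsNClean (k' + 1) A := by
  obtain ⟨E, u, hE, hu⟩ := hN A.toBlocks₁₁
  obtain ⟨F, v, hF, hv⟩ :=
    hM (A.toBlocks₂₂ - A.toBlocks₂₁ * ((u 0)⁻¹).val * A.toBlocks₁₂)
  set A11 := A.toBlocks₁₁ with hA11
  set A12 := A.toBlocks₁₂ with hA12
  set A21 := A.toBlocks₂₁ with hA21
  set A22 := A.toBlocks₂₂ with hA22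
  set uinv : Matrix (Fin n) (Fin n) R := ((u 0)⁻¹).val with huinv
  refine ⟨fromBlocks E 0 0 F,
    fun i => if i = 0 then lowU (A21 * uinv) * upU (u 0) A12 (v 0)
      else diagU (u i) (v i), ?_, ?_⟩
  · show fromBlocks E 0 0 F * fromBlocks E 0 0 F = fromBlocks E 0 0 F
    rw [fromBlocks_multiply]
    simp [hE.eq, hF.eq]
  · have hsum : ∑ i, (if i = 0 then lowU (A21 * uinv) * upU (u 0) A12 (v 0)
        else diagU (u i) (v i) : (Matrix (Fin n ⊕ Fin m) (Fin n ⊕ Fin m) R)ˣ).val =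
        (lowU (A21 * uinv) * upU (u 0) A12 (v 0)).val +
        fromBlocks (∑ i : Fin k', (u i.succ).val) 0 0
          (∑ i : Fin k', (v i.succ).val) := by
      rw [Fin.sum_univ_succ]
      simp only [if_pos rfl]
      congr 1
      rw [← sum_fromBlocks]
      refine Finset.sum_congr rfl fun i _ => ?_
      rw [if_neg (Fin.succ_ne_zero i)]
      rfl
    have hW0 : (lowU (A21 * uinv) * upU (u 0) A12 (v 0)).val =
        fromBlocks (u 0).val A12 A21
          (A21 * uinv * A12 + (v 0).val) := by
      show fromBlocks 1 0 (A21 * uinv) 1 *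
        fromBlocks (u 0).val A12 0
          (v 0).val = _
      have hcanc : A21 * uinv * (u 0).val = A21 := by
        rw [huinv, Matrix.mul_assoc, Units.inv_mul, Matrix.mul_one]
      rw [fromBlocks_multiply]
      simp [hcanc]
    rw [hsum, hW0]
    have h11 : A11 = E + ((u 0).val +
        ∑ i : Fin k', (u i.succ).val) := by
      rw [hu, Fin.sum_univ_succ]
    have h22 : A22 = F + ((A21 * uinv * A12 + (v 0).val) +
        ∑ i : Fin k', (v i.succ).val) := by
      rw [sub_eq_iff_eq_add.mp hv, Fin.sum_univ_succ]
      abel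
    calc A = fromBlocks A11 A12 A21 A22 := (fromBlocks_toBlocks A).symm
      _ = _ := by
        rw [h11, h22, fromBlocks_add, fromBlocks_add]
        simp only [zero_add, add_zero]

end Aux

/-- if `Mₙ(R)` and `Mₘ(R)` are `k`-clean (`m, n ≥ 1`, `k ≥ 2`), then
`Mₙ₊ₘ(R)` is `k`-clean. -/
theorem stmt_8 {R : Type*} [Ring R] (m n k : ℕ) (hm : 1 ≤ m) (hn : 1 ≤ n) (hk : 2 ≤ k)
    (hN : ∀ A : Matrix (Fin n) (Fin n) R, IsNClean k A)
    (hM : ∀ A : Matrix (Fin m) (Fin m) R, IsNClean k A) :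
    ∀ A : Matrix (Fin (n + m)) (Fin (n + m)) R, IsNClean k A := by
  obtain ⟨k, rfl⟩ : ∃ k', k = k' + 1 := ⟨k - 1, by omega⟩
  intro A
  let f : Matrix (Fin n ⊕ Fin m) (Fin n ⊕ Fin m) R ≃+* Matrix (Fin (n + m)) (Fin (n + m)) R :=
    (Matrix.reindexAlgEquiv ℕ R finSumFinEquiv).toRingEquiv
  have h := isNClean_map f (block_clean hN hM (f.symm A))
  simpa using h
end

section
/- For any ring R, the ring B(R) of all ω × ω row and column-finite matrices over R is 2-clean: every φ ∈ B(R) can be written as φ = δ + ψ₁ + ψ₂ where δ ∈ B(R) is idempotent and ψ₁, ψ₂ are units of B(R). -/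
/-- `B(R)`, the ring of all `ω × ω` row and column-finite matrices over `R`, identified with
the subring of the endomorphism ring of the free module `F = ⊕_{i<ω} fᵢR = (ℕ →₀ R)` consisting
of those `φ` such that for each `k` there is an `m` with `φ(F_m) ⊆ F_k`, where
`F_k = ⊕_{i≥k} fᵢR = {x | x i = 0 for all i < k}`. -/
def BMatrix (R : Type*) [Ring R] : Subring (Module.End R (ℕ →₀ R)) where
  carrier := {φ | ∀ k : ℕ, ∃ m : ℕ, ∀ x : ℕ →₀ R, (∀ i < m, x i = 0) → ∀ i < k, φ x i = 0}
  zero_mem' := fun k => ⟨k, fun x _ i _ => by simp⟩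
  one_mem' := fun k => ⟨k, fun x hx i hi => by simpa using hx i hi⟩
  add_mem' := by
    intro a b ha hb k
    obtain ⟨m₁, h₁⟩ := ha k
    obtain ⟨m₂, h₂⟩ := hb k
    refine ⟨max m₁ m₂, fun x hx i hi => ?_⟩
    have e₁ := h₁ x (fun j hj => hx j (lt_of_lt_of_le hj (le_max_left _ _))) i hi
    have e₂ := h₂ x (fun j hj => hx j (lt_of_lt_of_le hj (le_max_right _ _))) i hi
    simp [LinearMap.add_apply, e₁, e₂]
  neg_mem' := by
    intro a ha k
    obtain ⟨m, h⟩ := ha k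
    exact ⟨m, fun x hx i hi => by simp [LinearMap.neg_apply, h x hx i hi]⟩
  mul_mem' := by
    intro a b ha hb k
    obtain ⟨m₁, h₁⟩ := ha k
    obtain ⟨m₂, h₂⟩ := hb m₁
    exact ⟨m₂, fun x hx i hi => by
      rw [Module.End.mul_apply]
      exact h₁ (b x) (fun j hj => h₂ x hx j hj) i hi⟩

namespace Stmt11Aux

open Finsupp

variable {R : Type*} [Ring R]

lemma mem_bmatrix {f : Module.End R (ℕ →₀ R)} :
    f ∈ BMatrix R ↔ ∀ k : ℕ, ∃ m : ℕ, ∀ x : ℕ →₀ R, (∀ i < m, x i = 0) → ∀ i < k, f x i = 0 :=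
  Iff.rfl

/-- Projection onto the coordinates satisfying `p`. -/
noncomputable def prj (p : ℕ → Prop) [DecidablePred p] : Module.End R (ℕ →₀ R) where
  toFun x := Finsupp.onFinset x.support (fun i => if p i then x i else 0) (by
    intro i hi
    by_cases h : p i
    · rw [if_pos h] at hi; exact Finsupp.mem_support_iff.2 hi
    · rw [if_neg h] at hi; exact absurd rfl hi)
  map_add' x y := by
    apply Finsupp.ext; intro i
    simp only [Finsupp.onFinset_apply, Finsupp.add_apply]
    by_cases h : p i <;> simp [h]
  map_smul' r x := by
    apply Finsupp.ext; intro i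
    simp only [Finsupp.onFinset_apply, Finsupp.smul_apply, RingHom.id_apply]
    by_cases h : p i <;> simp [h]

@[simp] lemma prj_apply (p : ℕ → Prop) [DecidablePred p] (x : ℕ →₀ R) (i : ℕ) :
    prj (R := R) p x i = if p i then x i else 0 := rfl

lemma prj_mem (p : ℕ → Prop) [DecidablePred p] : prj (R := R) p ∈ BMatrix R := by
  rw [mem_bmatrix]
  intro k
  refine ⟨k, fun x hx i hik => ?_⟩
  rw [prj_apply]
  by_cases h : p i
  · rw [if_pos h]; exact hx i hik
  · rw [if_neg h]

/-- The "permutation matrix" of an involution of `ℕ`. -/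
noncomputable def swp (τ : ℕ → ℕ) (hτ : Function.Involutive τ) : Module.End R (ℕ →₀ R) where
  toFun x := Finsupp.onFinset (x.support.image τ) (fun i => x (τ i)) (by
    intro i hi
    exact Finset.mem_image.2 ⟨τ i, Finsupp.mem_support_iff.2 hi, hτ i⟩)
  map_add' x y := by
    apply Finsupp.ext; intro i
    simp [Finsupp.onFinset_apply]
  map_smul' r x := by
    apply Finsupp.ext; intro i
    simp [Finsupp.onFinset_apply]

@[simp] lemma swp_apply (τ : ℕ → ℕ) (hτ : Function.Involutive τ) (x : ℕ →₀ R) (i : ℕ) :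
    swp (R := R) τ hτ x i = x (τ i) := rfl

lemma swp_mem (τ : ℕ → ℕ) (hτ : Function.Involutive τ) : swp (R := R) τ hτ ∈ BMatrix R := by
  rw [mem_bmatrix]
  intro k
  refine ⟨(Finset.range k).sup τ + 1, fun x hx i hik => ?_⟩
  rw [swp_apply]
  exact hx (τ i) (Nat.lt_succ_of_le (Finset.le_sup (Finset.mem_range.2 hik)))

section Machinery

variable (φ : BMatrix R)

lemma bm_spec (k : ℕ) :
    ∃ m : ℕ, ∀ x : ℕ →₀ R, (∀ i < m, x i = 0) → ∀ i < k, φ.1 x i = 0 := φ.2 k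

/-- Row bound: below row `N`, all entries of columns `≥ rowM φ N` vanish. -/
noncomputable def rowM (N : ℕ) : ℕ := (bm_spec φ N).choose

lemma rowM_spec {N : ℕ} : ∀ x : ℕ →₀ R, (∀ i < rowM φ N, x i = 0) → ∀ i < N, φ.1 x i = 0 :=
  (bm_spec φ N).choose_spec

/-- Column bound: columns `< N` have support inside rows `< colM φ N`. -/
noncomputable def colM (N : ℕ) : ℕ :=
  (Finset.range N).sup (fun j => ((φ.1 (Finsupp.single j (1 : R))).support.sup id) + 1)

lemma colM_spec {j i N : ℕ} (hj : j < N) (hi : colM φ N ≤ i) :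
    φ.1 (Finsupp.single j (1 : R)) i = 0 := by
  by_contra h
  have hmem : i ∈ (φ.1 (Finsupp.single j (1 : R))).support := Finsupp.mem_support_iff.2 h
  have h1 : i ≤ (φ.1 (Finsupp.single j (1 : R))).support.sup id := Finset.le_sup (f := id) hmem
  have h2 : ((φ.1 (Finsupp.single j (1 : R))).support.sup id) + 1 ≤ colM φ N :=
    Finset.le_sup (f := fun j => ((φ.1 (Finsupp.single j (1 : R))).support.sup id) + 1)
      (Finset.mem_range.2 hj)
  omega

/-- Cut points of the block tridiagonalization. -/
noncomputable def cuts : ℕ → ℕ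
  | 0 => 0
  | k + 1 => max (cuts k + 1) (max (rowM φ (cuts k)) (colM φ (cuts k)))

lemma cuts_zero : cuts φ 0 = 0 := rfl

lemma cuts_lt_succ (k : ℕ) : cuts φ k < cuts φ (k + 1) :=
  lt_of_lt_of_le (Nat.lt_succ_self _) (le_max_left _ _)

lemma cuts_mono : StrictMono (cuts φ) := strictMono_nat_of_lt_succ (cuts_lt_succ φ)

lemma rowM_le_cuts (k : ℕ) : rowM φ (cuts φ k) ≤ cuts φ (k + 1) :=
  le_trans (le_max_left _ _) (le_max_right _ _)

lemma colM_le_cuts (k : ℕ) : colM φ (cuts φ k) ≤ cuts φ (k + 1) :=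
  le_trans (le_max_right _ _) (le_max_right _ _)

/-- Block index of a coordinate. -/
noncomputable def bIdx (x : ℕ) : ℕ := Nat.findGreatest (fun k => cuts φ k ≤ x) x

lemma cuts_bIdx_le (x : ℕ) : cuts φ (bIdx φ x) ≤ x :=
  Nat.findGreatest_spec (P := fun k => cuts φ k ≤ x) (Nat.zero_le x)
    (by show cuts φ 0 ≤ x; rw [cuts_zero]; exact Nat.zero_le x)

lemma lt_cuts_bIdx_succ (x : ℕ) : x < cuts φ (bIdx φ x + 1) := by
  by_contra h
  push_neg at h
  have h2 : bIdx φ x + 1 ≤ x := le_trans (cuts_mono φ).le_apply h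
  exact Nat.findGreatest_is_greatest (Nat.lt_succ_self _) h2 h

lemma bIdx_cuts (K : ℕ) : bIdx φ (cuts φ K) = K := by
  have h1 : K ≤ bIdx φ (cuts φ K) := Nat.le_findGreatest (cuts_mono φ).le_apply le_rfl
  have h2 : cuts φ (bIdx φ (cuts φ K)) ≤ cuts φ K := cuts_bIdx_le φ (cuts φ K)
  have h3 : bIdx φ (cuts φ K) ≤ K := (cuts_mono φ).le_iff_le.1 h2
  omega

/-- Tridiagonality, low side (row far above the column's block). -/
lemma TD_low {i j : ℕ} (h : bIdx φ j + 2 ≤ bIdx φ i) : φ.1 (Finsupp.single j (1 : R)) i = 0 := by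
  apply colM_spec φ (N := cuts φ (bIdx φ j + 1)) (lt_cuts_bIdx_succ φ j)
  calc colM φ (cuts φ (bIdx φ j + 1)) ≤ cuts φ (bIdx φ j + 2) := colM_le_cuts φ _
    _ ≤ cuts φ (bIdx φ i) := (cuts_mono φ).monotone h
    _ ≤ i := cuts_bIdx_le φ i

/-- Tridiagonality, high side. -/
lemma TD_high {i j : ℕ} (h : bIdx φ i + 2 ≤ bIdx φ j) : φ.1 (Finsupp.single j (1 : R)) i = 0 := by
  apply rowM_spec φ (N := cuts φ (bIdx φ i + 1)) (Finsupp.single j (1 : R)) ?_ i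
    (lt_cuts_bIdx_succ φ i)
  intro i' hi'
  have h1 : rowM φ (cuts φ (bIdx φ i + 1)) ≤ cuts φ (bIdx φ i + 2) := rowM_le_cuts φ _
  have h2 : cuts φ (bIdx φ i + 2) ≤ cuts φ (bIdx φ j) := (cuts_mono φ).monotone h
  have h3 := cuts_bIdx_le φ j
  exact Finsupp.single_eq_of_ne (by omega)

/-- The color (mod 4) of a coordinate. -/
noncomputable def col4 (x : ℕ) : ℕ := bIdx φ x % 4

lemma col4_lt (x : ℕ) : col4 φ x < 4 := Nat.mod_lt _ (by norm_num)

lemma col4_cuts (K : ℕ) : col4 φ (cuts φ K) = K % 4 := by rw [col4, bIdx_cuts]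

lemma infinite_class (r : ℕ) (hr : r < 4) : {y : ℕ | col4 φ y = r}.Infinite :=
  Set.infinite_of_injective_forall_mem (f := fun m : ℕ => cuts φ (4 * m + r))
    (fun a b hab => by have := (cuts_mono φ).injective hab; omega)
    (fun m => by simp only [Set.mem_setOf_eq, col4_cuts]; omega)

/-- The involution of `ℕ` swapping color class 0 with 2, and 1 with 3. -/
noncomputable def tau (x : ℕ) : ℕ :=
  if col4 φ x = 0 then Nat.nth (fun y => col4 φ y = 2) (Nat.count (fun y => col4 φ y = 0) x)
  else if col4 φ x = 1 then Nat.nth (fun y => col4 φ y = 3) (Nat.count (fun y => col4 φ y = 1) x)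
  else if col4 φ x = 2 then Nat.nth (fun y => col4 φ y = 0) (Nat.count (fun y => col4 φ y = 2) x)
  else Nat.nth (fun y => col4 φ y = 1) (Nat.count (fun y => col4 φ y = 3) x)

lemma col4_tau (x : ℕ) : col4 φ (tau φ x) = (col4 φ x + 2) % 4 := by
  have h4 := col4_lt φ x
  have hx : col4 φ x = 0 ∨ col4 φ x = 1 ∨ col4 φ x = 2 ∨ col4 φ x = 3 := by omega
  rcases hx with h | h | h | h <;> rw [tau, h] <;> norm_num <;>
    exact Nat.nth_mem_of_infinite (infinite_class φ _ (by norm_num)) _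

lemma tau_invol : Function.Involutive (tau φ) := by
  intro x
  have h4 := col4_lt φ x
  have hx : col4 φ x = 0 ∨ col4 φ x = 1 ∨ col4 φ x = 2 ∨ col4 φ x = 3 := by omega
  have ht := col4_tau φ x
  rcases hx with h | h | h | h
  · rw [h] at ht; norm_num at ht
    have e1 : tau φ x = Nat.nth (fun y => col4 φ y = 2) (Nat.count (fun y => col4 φ y = 0) x) := by
      rw [tau, if_pos h]
    have e2 : tau φ (tau φ x)
        = Nat.nth (fun y => col4 φ y = 0) (Nat.count (fun y => col4 φ y = 2) (tau φ x)) := by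
      rw [tau, if_neg (by omega), if_neg (by omega), if_pos ht]
    rw [e2, e1, Nat.count_nth_of_infinite (infinite_class φ 2 (by norm_num)), Nat.nth_count (p := fun y => col4 φ y = 0) h]
  · rw [h] at ht; norm_num at ht
    have e1 : tau φ x = Nat.nth (fun y => col4 φ y = 3) (Nat.count (fun y => col4 φ y = 1) x) := by
      rw [tau, if_neg (by omega), if_pos h]
    have e2 : tau φ (tau φ x)
        = Nat.nth (fun y => col4 φ y = 1) (Nat.count (fun y => col4 φ y = 3) (tau φ x)) := by
      rw [tau, if_neg (by omega), if_neg (by omega), if_neg (by omega)]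
    rw [e2, e1, Nat.count_nth_of_infinite (infinite_class φ 3 (by norm_num)), Nat.nth_count (p := fun y => col4 φ y = 1) h]
  · rw [h] at ht; norm_num at ht
    have e1 : tau φ x = Nat.nth (fun y => col4 φ y = 0) (Nat.count (fun y => col4 φ y = 2) x) := by
      rw [tau, if_neg (by omega), if_neg (by omega), if_pos h]
    have e2 : tau φ (tau φ x)
        = Nat.nth (fun y => col4 φ y = 2) (Nat.count (fun y => col4 φ y = 0) (tau φ x)) := by
      rw [tau, if_pos ht]
    rw [e2, e1, Nat.count_nth_of_infinite (infinite_class φ 0 (by norm_num)), Nat.nth_count (p := fun y => col4 φ y = 2) h]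
  · rw [h] at ht; norm_num at ht
    have e1 : tau φ x = Nat.nth (fun y => col4 φ y = 1) (Nat.count (fun y => col4 φ y = 3) x) := by
      rw [tau, if_neg (by omega), if_neg (by omega), if_neg (by omega)]
    have e2 : tau φ (tau φ x)
        = Nat.nth (fun y => col4 φ y = 3) (Nat.count (fun y => col4 φ y = 1) (tau φ x)) := by
      rw [tau, if_neg (by omega), if_pos ht]
    rw [e2, e1, Nat.count_nth_of_infinite (infinite_class φ 1 (by norm_num)), Nat.nth_count (p := fun y => col4 φ y = 3) h]

end Machinery

section Operators

variable (φ : BMatrix R)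

/-- Projection onto the `r`-th color class. -/
noncomputable def PiC (r : ℕ) : Module.End R (ℕ →₀ R) := prj (fun y => col4 φ y = r)

/-- The involution unit. -/
noncomputable def Jm : Module.End R (ℕ →₀ R) := swp (tau φ) (tau_invol φ)

lemma PiC_mem (r : ℕ) : PiC φ r ∈ BMatrix R := prj_mem _

lemma Jm_mem : Jm φ ∈ BMatrix R := swp_mem _ _

lemma PiC_apply (r : ℕ) (x : ℕ →₀ R) (i : ℕ) :
    PiC φ r x i = if col4 φ i = r then x i else 0 := rfl

lemma Jm_apply (x : ℕ →₀ R) (i : ℕ) : Jm φ x i = x (tau φ i) := rfl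

lemma PiC_PiC (r s : ℕ) (h : r ≠ s) : PiC φ r * PiC φ s = 0 := by
  apply LinearMap.ext; intro x; apply Finsupp.ext; intro i
  rw [Module.End.mul_apply, PiC_apply, PiC_apply, LinearMap.zero_apply, Finsupp.coe_zero,
    Pi.zero_apply]
  by_cases h1 : col4 φ i = r
  · rw [if_pos h1, if_neg (by omega)]
  · rw [if_neg h1]

lemma PiC_self (r : ℕ) : PiC φ r * PiC φ r = PiC φ r := by
  apply LinearMap.ext; intro x; apply Finsupp.ext; intro i
  rw [Module.End.mul_apply, PiC_apply, PiC_apply]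
  by_cases h1 : col4 φ i = r
  · rw [if_pos h1]
  · rw [if_neg h1, if_neg h1]

lemma PiC_sum : PiC φ 0 + PiC φ 1 + PiC φ 2 + PiC φ 3 = 1 := by
  apply LinearMap.ext; intro x; apply Finsupp.ext; intro i
  rw [LinearMap.add_apply, LinearMap.add_apply, LinearMap.add_apply, Module.End.one_apply,
    Finsupp.add_apply, Finsupp.add_apply, Finsupp.add_apply,
    PiC_apply, PiC_apply, PiC_apply, PiC_apply]
  have h4 := col4_lt φ i
  have hx : col4 φ i = 0 ∨ col4 φ i = 1 ∨ col4 φ i = 2 ∨ col4 φ i = 3 := by omega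
  rcases hx with h | h | h | h <;> rw [h] <;> norm_num

lemma Jm_Jm : Jm φ * Jm φ = 1 := by
  apply LinearMap.ext; intro x; apply Finsupp.ext; intro i
  rw [Module.End.mul_apply, Module.End.one_apply, Jm_apply, Jm_apply, tau_invol φ i]

lemma Jm_PiC (r : ℕ) (hr : r < 4) : Jm φ * PiC φ r = PiC φ ((r + 2) % 4) * Jm φ := by
  apply LinearMap.ext; intro x; apply Finsupp.ext; intro i
  rw [Module.End.mul_apply, Module.End.mul_apply, Jm_apply, PiC_apply, PiC_apply, Jm_apply]
  have hc := col4_tau φ i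
  have h4 := col4_lt φ i
  by_cases h1 : col4 φ (tau φ i) = r
  · rw [if_pos h1, if_pos (by omega)]
  · rw [if_neg h1, if_neg (by omega)]

lemma PiC_Jm_PiC (r s : ℕ) (hr : r < 4) (h : (r + 2) % 4 ≠ s) :
    PiC φ r * Jm φ * PiC φ s = 0 := by
  have e1 : Jm φ * PiC φ ((r + 2) % 4) = PiC φ r * Jm φ := by
    have h2 := Jm_PiC φ ((r + 2) % 4) (by omega)
    rwa [show ((r + 2) % 4 + 2) % 4 = r from by omega] at h2
  rw [← e1, mul_assoc, PiC_PiC φ _ _ h, mul_zero]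

lemma PiC_single (s : ℕ) (j : ℕ) (b : R) :
    PiC φ s (Finsupp.single j b) = if col4 φ j = s then Finsupp.single j b else 0 := by
  apply Finsupp.ext; intro i
  rw [PiC_apply]
  by_cases h1 : col4 φ j = s
  · rw [if_pos h1]
    by_cases h2 : col4 φ i = s
    · rw [if_pos h2]
    · rw [if_neg h2, Finsupp.single_eq_of_ne (by rintro rfl; exact h2 h1)]
  · rw [if_neg h1, Finsupp.coe_zero, Pi.zero_apply]
    by_cases h2 : col4 φ i = s
    · rw [if_pos h2, Finsupp.single_eq_of_ne (by rintro rfl; exact h1 h2)]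
    · rw [if_neg h2]

/-- Tridiagonality: color classes at distance two are not connected by `φ`. -/
lemma PiC_phi_PiC (r s : ℕ)
    (h : ∀ ki kj : ℕ, ki % 4 = r → kj % 4 = s → ki + 2 ≤ kj ∨ kj + 2 ≤ ki) :
    PiC φ r * φ.1 * PiC φ s = 0 := by
  apply Finsupp.lhom_ext
  intro j b
  rw [Module.End.mul_apply, Module.End.mul_apply, PiC_single, LinearMap.zero_apply]
  by_cases h1 : col4 φ j = s
  · rw [if_pos h1]
    apply Finsupp.ext; intro i
    rw [PiC_apply, Finsupp.coe_zero, Pi.zero_apply]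
    by_cases h2 : col4 φ i = r
    · rw [if_pos h2]
      have hb : Finsupp.single j b = b • Finsupp.single j (1 : R) :=
        (Finsupp.smul_single_one j b).symm
      rw [hb, map_smul, Finsupp.smul_apply]
      rcases h (bIdx φ i) (bIdx φ j) h2 h1 with hd | hd
      · rw [TD_high φ hd, smul_zero]
      · rw [TD_low φ hd, smul_zero]
    · rw [if_neg h2]
  · rw [if_neg h1, map_zero, map_zero]

end Operators

section Abstract

variable {A : Type*} [Ring A]

lemma abstract_decomp (P : ℕ → A) (J F : A)
    (hpp : ∀ r s : ℕ, r ≠ s → P r * P s = 0)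
    (hself : ∀ r : ℕ, P r * P r = P r)
    (hsum : P 0 + P 1 + P 2 + P 3 = 1)
    (hJJ : J * J = 1)
    (hJP : ∀ r : ℕ, r < 4 → J * P r = P ((r + 2) % 4) * J)
    (td02 : P 0 * F * P 2 = 0) (td20 : P 2 * F * P 0 = 0)
    (td13 : P 1 * F * P 3 = 0) (td31 : P 3 * F * P 1 = 0) :
    (((P 0 * F * P 0 + P 1 * F * P 1) + J) + ((P 0 + P 2) * F * (P 1 + P 3))) * ((J - J * (P 0 * F * P 0 + P 1 * F * P 1) * J) - (J - J * (P 0 * F * P 0 + P 1 * F * P 1) * J) * ((P 0 + P 2) * F * (P 1 + P 3)) * (J - J * (P 0 * F * P 0 + P 1 * F * P 1) * J)) = 1 ∧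
    ((J - J * (P 0 * F * P 0 + P 1 * F * P 1) * J) - (J - J * (P 0 * F * P 0 + P 1 * F * P 1) * J) * ((P 0 + P 2) * F * (P 1 + P 3)) * (J - J * (P 0 * F * P 0 + P 1 * F * P 1) * J)) * (((P 0 * F * P 0 + P 1 * F * P 1) + J) + ((P 0 + P 2) * F * (P 1 + P 3))) = 1 ∧
    (((P 2 * F * P 2 + P 3 * F * P 3) - J) + ((P 1 + P 3) * F * (P 0 + P 2))) * ((-J - J * (P 2 * F * P 2 + P 3 * F * P 3) * J) - (-J - J * (P 2 * F * P 2 + P 3 * F * P 3) * J) * ((P 1 + P 3) * F * (P 0 + P 2)) * (-J - J * (P 2 * F * P 2 + P 3 * F * P 3) * J)) = 1 ∧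
    ((-J - J * (P 2 * F * P 2 + P 3 * F * P 3) * J) - (-J - J * (P 2 * F * P 2 + P 3 * F * P 3) * J) * ((P 1 + P 3) * F * (P 0 + P 2)) * (-J - J * (P 2 * F * P 2 + P 3 * F * P 3) * J)) * (((P 2 * F * P 2 + P 3 * F * P 3) - J) + ((P 1 + P 3) * F * (P 0 + P 2))) = 1 ∧
    (((P 0 * F * P 0 + P 1 * F * P 1) + J) + ((P 0 + P 2) * F * (P 1 + P 3))) + (((P 2 * F * P 2 + P 3 * F * P 3) - J) + ((P 1 + P 3) * F * (P 0 + P 2))) = F := by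
  have pjp : ∀ r s : ℕ, r < 4 → (r + 2) % 4 ≠ s → P r * J * P s = 0 := by
    intro r s hr h
    have e := hJP ((r + 2) % 4) (by omega)
    rw [show ((r + 2) % 4 + 2) % 4 = r from by omega] at e
    rw [← e, mul_assoc, hpp _ _ h, mul_zero]
  have t : ∀ r s : ℕ, r < 4 → (r + 2) % 4 ≠ s → ∀ X Y : A, X * P r * J * (P s * Y) = 0 := by
    intro r s hr h X Y
    calc X * P r * J * (P s * Y) = X * (P r * J * P s) * Y := by noncomm_ring
      _ = 0 := by rw [pjp r s hr h, mul_zero, zero_mul]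
  set c : A := (P 0 * F * P 0 + P 1 * F * P 1) with hc
  set c' : A := (P 2 * F * P 2 + P 3 * F * P 3) with hc'
  set L0 : A := P 0 + P 2 with hL0
  set L1 : A := P 1 + P 3 with hL1
  set Up : A := L0 * F * L1 with hUp
  set Low : A := L1 * F * L0 with hLow
  set D1 : A := c + J with hD1
  set D1' : A := J - J * c * J with hD1'
  set D2 : A := c' - J with hD2
  set D2' : A := -J - J * c' * J with hD2'
  have K1 : c * J * c = 0 := by
    calc c * J * c
        = P 0 * F * P 0 * J * (P 0 * (F * P 0)) + P 0 * F * P 0 * J * (P 1 * (F * P 1))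
          + (P 1 * F * P 1 * J * (P 0 * (F * P 0)) + P 1 * F * P 1 * J * (P 1 * (F * P 1))) := by
          rw [hc]; noncomm_ring
      _ = 0 := by
          rw [t 0 0 (by norm_num) (by norm_num), t 0 1 (by norm_num) (by norm_num),
            t 1 0 (by norm_num) (by norm_num), t 1 1 (by norm_num) (by norm_num)]
          norm_num
  have K2 : c' * J * c' = 0 := by
    calc c' * J * c'
        = P 2 * F * P 2 * J * (P 2 * (F * P 2)) + P 2 * F * P 2 * J * (P 3 * (F * P 3))
          + (P 3 * F * P 3 * J * (P 2 * (F * P 2)) + P 3 * F * P 3 * J * (P 3 * (F * P 3))) := by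
          rw [hc']; noncomm_ring
      _ = 0 := by
          rw [t 2 2 (by norm_num) (by norm_num), t 2 3 (by norm_num) (by norm_num),
            t 3 2 (by norm_num) (by norm_num), t 3 3 (by norm_num) (by norm_num)]
          norm_num
  have hJP0 : J * P 0 = P 2 * J := by have := hJP 0 (by norm_num); norm_num at this; exact this
  have hJP1 : J * P 1 = P 3 * J := by have := hJP 1 (by norm_num); norm_num at this; exact this
  have hJP2 : J * P 2 = P 0 * J := by have := hJP 2 (by norm_num); norm_num at this; exact this
  have hJP3 : J * P 3 = P 1 * J := by have := hJP 3 (by norm_num); norm_num at this; exact this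
  have hJL0 : J * L0 = L0 * J := by
    rw [hL0, mul_add, add_mul, hJP0, hJP2]; abel
  have hJL1 : J * L1 = L1 * J := by
    rw [hL1, mul_add, add_mul, hJP1, hJP3]; abel
  have M1 : L1 * J * L0 = 0 := by
    calc L1 * J * L0 = P 1 * J * P 0 + P 1 * J * P 2 + (P 3 * J * P 0 + P 3 * J * P 2) := by
          rw [hL0, hL1]; noncomm_ring
      _ = 0 := by
          rw [pjp 1 0 (by norm_num) (by norm_num), pjp 1 2 (by norm_num) (by norm_num),
            pjp 3 0 (by norm_num) (by norm_num), pjp 3 2 (by norm_num) (by norm_num)]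
          norm_num
  have M3 : L0 * J * L1 = 0 := by
    calc L0 * J * L1 = P 0 * J * P 1 + P 0 * J * P 3 + (P 2 * J * P 1 + P 2 * J * P 3) := by
          rw [hL0, hL1]; noncomm_ring
      _ = 0 := by
          rw [pjp 0 1 (by norm_num) (by norm_num), pjp 0 3 (by norm_num) (by norm_num),
            pjp 2 1 (by norm_num) (by norm_num), pjp 2 3 (by norm_num) (by norm_num)]
          norm_num
  have cL0 : c * L0 = P 0 * F * P 0 := by
    calc c * L0 = P 0 * F * (P 0 * P 0) + P 0 * F * (P 0 * P 2)
          + (P 1 * F * (P 1 * P 0) + P 1 * F * (P 1 * P 2)) := by rw [hc, hL0]; noncomm_ring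
      _ = P 0 * F * P 0 := by
          rw [hself 0, hpp 0 2 (by norm_num), hpp 1 0 (by norm_num), hpp 1 2 (by norm_num)]
          noncomm_ring
  have cL1 : c' * L1 = P 3 * F * P 3 := by
    calc c' * L1 = P 2 * F * (P 2 * P 1) + P 2 * F * (P 2 * P 3)
          + (P 3 * F * (P 3 * P 1) + P 3 * F * (P 3 * P 3)) := by rw [hc', hL1]; noncomm_ring
      _ = P 3 * F * P 3 := by
          rw [hself 3, hpp 2 1 (by norm_num), hpp 2 3 (by norm_num), hpp 3 1 (by norm_num)]
          noncomm_ring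
  have h130 : L1 * J * P 0 = 0 := by
    calc L1 * J * P 0 = P 1 * J * P 0 + P 3 * J * P 0 := by rw [hL1]; noncomm_ring
      _ = 0 := by
          rw [pjp 1 0 (by norm_num) (by norm_num), pjp 3 0 (by norm_num) (by norm_num)]
          norm_num
  have h033 : L0 * J * P 3 = 0 := by
    calc L0 * J * P 3 = P 0 * J * P 3 + P 2 * J * P 3 := by rw [hL0]; noncomm_ring
      _ = 0 := by
          rw [pjp 0 3 (by norm_num) (by norm_num), pjp 2 3 (by norm_num) (by norm_num)]
          norm_num
  have M2 : L1 * J * c * J * L0 = 0 := by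
    calc L1 * J * c * J * L0 = L1 * J * c * (J * L0) := by noncomm_ring
      _ = L1 * J * c * (L0 * J) := by rw [hJL0]
      _ = (L1 * J) * (c * L0) * J := by noncomm_ring
      _ = (L1 * J) * (P 0 * F * P 0) * J := by rw [cL0]
      _ = (L1 * J * P 0) * (F * (P 0 * J)) := by noncomm_ring
      _ = 0 := by rw [h130, zero_mul]
  have M4 : L0 * J * c' * J * L1 = 0 := by
    calc L0 * J * c' * J * L1 = L0 * J * c' * (J * L1) := by noncomm_ring
      _ = L0 * J * c' * (L1 * J) := by rw [hJL1]
      _ = (L0 * J) * (c' * L1) * J := by noncomm_ring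
      _ = (L0 * J) * (P 3 * F * P 3) * J := by rw [cL1]
      _ = (L0 * J * P 3) * (F * (P 3 * J)) := by noncomm_ring
      _ = 0 := by rw [h033, zero_mul]
  have S5 : Up * D1' * Up = 0 := by
    have s5a : Up * J * Up = 0 := by
      calc Up * J * Up = (L0 * F) * (L1 * J * L0) * (F * L1) := by rw [hUp]; noncomm_ring
        _ = 0 := by rw [M1, mul_zero, zero_mul]
    have s5b : Up * (J * c * J) * Up = 0 := by
      calc Up * (J * c * J) * Up = (L0 * F) * (L1 * J * c * J * L0) * (F * L1) := by
            rw [hUp]; noncomm_ring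
        _ = 0 := by rw [M2, mul_zero, zero_mul]
    calc Up * D1' * Up = Up * J * Up - Up * (J * c * J) * Up := by rw [hD1']; noncomm_ring
      _ = 0 := by rw [s5a, s5b, sub_zero]
  have S6 : Low * D2' * Low = 0 := by
    have s6a : Low * J * Low = 0 := by
      calc Low * J * Low = (L1 * F) * (L0 * J * L1) * (F * L0) := by rw [hLow]; noncomm_ring
        _ = 0 := by rw [M3, mul_zero, zero_mul]
    have s6b : Low * (J * c' * J) * Low = 0 := by
      calc Low * (J * c' * J) * Low = (L1 * F) * (L0 * J * c' * J * L1) * (F * L0) := by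
            rw [hLow]; noncomm_ring
        _ = 0 := by rw [M4, mul_zero, zero_mul]
    calc Low * D2' * Low = -(Low * J * Low) - Low * (J * c' * J) * Low := by
          rw [hD2']; noncomm_ring
      _ = 0 := by rw [s6a, s6b]; norm_num
  have S3a : D1 * D1' = 1 := by
    calc D1 * D1' = c * J + J * J - (c * J * c) * J - (J * J) * (c * J) := by
          rw [hD1, hD1']; noncomm_ring
      _ = 1 := by rw [K1, hJJ, zero_mul, one_mul]; noncomm_ring
  have S3b : D1' * D1 = 1 := by
    calc D1' * D1 = J * c + J * J - J * (c * J * c) - (J * c) * (J * J) := by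
          rw [hD1, hD1']; noncomm_ring
      _ = 1 := by rw [K1, hJJ, mul_zero, mul_one]; noncomm_ring
  have S4a : D2 * D2' = 1 := by
    calc D2 * D2' = -(c' * J) - (c' * J * c') * J + J * J + (J * J) * (c' * J) := by
          rw [hD2, hD2']; noncomm_ring
      _ = 1 := by rw [K2, hJJ, zero_mul, one_mul]; noncomm_ring
  have S4b : D2' * D2 = 1 := by
    calc D2' * D2 = -(J * c') + J * J - J * (c' * J * c') + (J * c') * (J * J) := by
          rw [hD2, hD2']; noncomm_ring
      _ = 1 := by rw [K2, hJJ, mul_zero, mul_one]; noncomm_ring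
  refine ⟨?_, ?_, ?_, ?_, ?_⟩
  · calc (D1 + Up) * (D1' - D1' * Up * D1')
        = D1 * D1' + Up * D1' - (D1 * D1') * (Up * D1') - (Up * D1' * Up) * D1' := by
          noncomm_ring
      _ = 1 := by rw [S3a, S5, one_mul, zero_mul]; noncomm_ring
  · calc (D1' - D1' * Up * D1') * (D1 + Up)
        = D1' * D1 + D1' * Up - (D1' * Up) * (D1' * D1) - D1' * (Up * D1' * Up) := by
          noncomm_ring
      _ = 1 := by rw [S3b, S5, mul_one, mul_zero]; noncomm_ring
  · calc (D2 + Low) * (D2' - D2' * Low * D2')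
        = D2 * D2' + Low * D2' - (D2 * D2') * (Low * D2') - (Low * D2' * Low) * D2' := by
          noncomm_ring
      _ = 1 := by rw [S4a, S6, one_mul, zero_mul]; noncomm_ring
  · calc (D2' - D2' * Low * D2') * (D2 + Low)
        = D2' * D2 + D2' * Low - (D2' * Low) * (D2' * D2) - D2' * (Low * D2' * Low) := by
          noncomm_ring
      _ = 1 := by rw [S4b, S6, mul_one, mul_zero]; noncomm_ring
  · have e0 : F = (P 0 + P 1 + P 2 + P 3) * F * (P 0 + P 1 + P 2 + P 3) := by
      rw [hsum, one_mul, mul_one]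
    have e1 : (P 0 + P 1 + P 2 + P 3) * F * (P 0 + P 1 + P 2 + P 3)
        = (P 0 * F * P 0 + P 1 * F * P 1 + P 2 * F * P 2 + P 3 * F * P 3
          + ((P 0 + P 2) * F * (P 1 + P 3)) + ((P 1 + P 3) * F * (P 0 + P 2)))
          + (P 0 * F * P 2 + P 2 * F * P 0 + P 1 * F * P 3 + P 3 * F * P 1) := by
      noncomm_ring
    calc D1 + Up + (D2 + Low)
        = (P 0 * F * P 0 + P 1 * F * P 1 + P 2 * F * P 2 + P 3 * F * P 3
          + ((P 0 + P 2) * F * (P 1 + P 3)) + ((P 1 + P 3) * F * (P 0 + P 2)))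
          + (0 + 0 + 0 + 0) := by
          rw [hD1, hD2, hUp, hLow, hc, hc', hL0, hL1]; noncomm_ring
      _ = F := by
          have e1' := e1
          rw [td02, td20, td13, td31] at e1'
          rw [← e1']
          exact e0.symm

end Abstract

end Stmt11Aux

set_option synthInstance.maxHeartbeats 1000000 in
set_option maxHeartbeats 2000000 in
open Stmt11Aux in
/-- for any ring `R`, the ring `B(R)` of all `ω × ω` row and column-finite
matrices over `R` is 2-clean: every `φ ∈ B(R)` is the sum of an idempotent of `B(R)` and
two units of `B(R)`. -/
theorem stmt_11 {R : Type*} [Ring R] (φ : BMatrix R) :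
    ∃ (δ : BMatrix R) (ψ₁ ψ₂ : (BMatrix R)ˣ),
      IsIdempotentElem δ ∧ φ = δ + ψ₁ + ψ₂ := by
  classical
  obtain ⟨h1, h2, h3, h4, h5⟩ :=
    abstract_decomp (A := BMatrix R) (fun r => ⟨PiC φ r, PiC_mem φ r⟩) ⟨Jm φ, Jm_mem φ⟩ φ
      (fun r s h => Subtype.ext (PiC_PiC φ r s h))
      (fun r => Subtype.ext (PiC_self φ r))
      (Subtype.ext (PiC_sum φ))
      (Subtype.ext (Jm_Jm φ))
      (fun r hr => Subtype.ext (Jm_PiC φ r hr))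
      (Subtype.ext (PiC_phi_PiC φ 0 2 (fun ki kj e1 e2 => by omega)))
      (Subtype.ext (PiC_phi_PiC φ 2 0 (fun ki kj e1 e2 => by omega)))
      (Subtype.ext (PiC_phi_PiC φ 1 3 (fun ki kj e1 e2 => by omega)))
      (Subtype.ext (PiC_phi_PiC φ 3 1 (fun ki kj e1 e2 => by omega)))
  refine ⟨0, ⟨_, _, h1, h2⟩, ⟨_, _, h3, h4⟩, IsIdempotentElem.zero, ?_⟩
  rw [zero_add]
  exact h5.symm
end

section
/- If R is a 2-good ring, then the ring B(R) of all ω × ω row and column-finite matrices over R is 2-good: every element of B(R) is a sum of two units of B(R). -/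
open Finsupp Matrix Finset

section Stmt12Aux
variable {R : Type*} [Ring R]

noncomputable def eb (R : Type*) [Ring R] (j : ℕ) : ℕ →₀ R := Finsupp.single j 1

noncomputable def toEnd (c : ℕ → ℕ →₀ R) : Module.End R (ℕ →₀ R) :=
  Finsupp.lsum ℕ fun j => LinearMap.toSpanSingleton R (ℕ →₀ R) (c j)

lemma toEnd_single (c : ℕ → ℕ →₀ R) (j : ℕ) (r : R) :
    toEnd c (Finsupp.single j r) = r • c j := by
  simp [toEnd]

lemma toEnd_eb (c : ℕ → ℕ →₀ R) (j : ℕ) : toEnd c (eb R j) = c j := by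
  rw [eb, toEnd_single, one_smul]

lemma toEnd_apply (c : ℕ → ℕ →₀ R) (x : ℕ →₀ R) :
    toEnd c x = x.sum fun j r => r • c j := by
  simp only [toEnd, Finsupp.lsum_apply]
  rfl

lemma end_ext {φ ψ : Module.End R (ℕ →₀ R)} (h : ∀ j, φ (eb R j) = ψ (eb R j)) : φ = ψ := by
  refine Finsupp.lhom_ext fun a b => ?_
  have hb : (Finsupp.single a b : ℕ →₀ R) = b • eb R a := by
    simp [eb, Finsupp.smul_single]
  rw [hb, LinearMap.map_smul, LinearMap.map_smul, h]

/-- intervals of a partition of ℕ -/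
def blkF (s : ℕ → ℕ) (k : ℕ) : Finset ℕ := Finset.Ico (s k) (s (k+1))

/-- index of the block containing `j` -/
def blk (s : ℕ → ℕ) (j : ℕ) : ℕ := Nat.findGreatest (fun k => s k ≤ j) j

lemma blk_le {s : ℕ → ℕ} (hs0 : s 0 = 0) (j : ℕ) : s (blk s j) ≤ j :=
  Nat.findGreatest_spec (P := fun k => s k ≤ j) (Nat.zero_le j)
    (show s 0 ≤ j by rw [hs0]; exact Nat.zero_le j)

lemma blk_lt {s : ℕ → ℕ} (hs : StrictMono s) (j : ℕ) : j < s (blk s j + 1) := by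
  by_contra h
  push_neg at h
  have h2 : blk s j + 1 ≤ j := le_trans (hs.le_apply) h
  have := Nat.le_findGreatest (P := fun k => s k ≤ j) h2 h
  simp only [blk] at this ⊢
  omega

lemma blk_mem {s : ℕ → ℕ} (hs : StrictMono s) (hs0 : s 0 = 0) (j : ℕ) :
    j ∈ blkF s (blk s j) :=
  Finset.mem_Ico.mpr ⟨blk_le hs0 j, blk_lt hs j⟩

lemma le_blk {s : ℕ → ℕ} (hs : StrictMono s) {k j : ℕ} (h : s k ≤ j) : k ≤ blk s j :=
  Nat.le_findGreatest (le_trans hs.le_apply h) h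

lemma blk_eq {s : ℕ → ℕ} (hs : StrictMono s) (hs0 : s 0 = 0) {k j : ℕ}
    (h1 : s k ≤ j) (h2 : j < s (k+1)) : blk s j = k := by
  have hle := le_blk hs h1
  by_contra hne
  have hk1 : k + 1 ≤ blk s j := by omega
  have := le_trans (hs.monotone hk1) (blk_le hs0 j)
  omega

lemma sep₁ {s : ℕ → ℕ} (hs : StrictMono s) (hs0 : s 0 = 0) {j i k : ℕ}
    (h1 : j < s k) (h2 : s k ≤ i) : i ∉ blkF s (blk s j) := by
  intro hi
  rw [blkF, Finset.mem_Ico] at hi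
  have hb : blk s j < k := by
    by_contra hc
    push_neg at hc
    exact absurd (le_trans (hs.monotone hc) (blk_le hs0 j)) (by omega)
  have : s (blk s j + 1) ≤ s k := hs.monotone (by omega)
  omega

lemma sep₂ {s : ℕ → ℕ} (hs : StrictMono s) {j i k : ℕ}
    (h1 : i < s k) (h2 : s k ≤ j) : i ∉ blkF s (blk s j) := by
  intro hi
  rw [blkF, Finset.mem_Ico] at hi
  have h3 : s k ≤ s (blk s j) := hs.monotone (le_blk hs h2)
  omega

/-- restriction of an entry function to a pair of finsets -/
def mrestr (m : ℕ → ℕ → R) (P Q : Finset ℕ) : Matrix ↥P ↥Q R :=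
  Matrix.of fun p q => m ↑p ↑q

/-- columns of block diagonal endomorphism with entries `m` -/
noncomputable def bCol (s : ℕ → ℕ) (m : ℕ → ℕ → R) (j : ℕ) : ℕ →₀ R :=
  ∑ p ∈ blkF s (blk s j), Finsupp.single p (m j p)

lemma bCol_apply (s : ℕ → ℕ) (m : ℕ → ℕ → R) (j i : ℕ) :
    bCol s m j i = if i ∈ blkF s (blk s j) then m j i else 0 := by
  rw [bCol, Finsupp.finset_sum_apply]
  simp only [Finsupp.single_apply]
  rw [Finset.sum_ite_eq' (blkF s (blk s j)) i (fun p => m j p)]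

lemma bd_mem (s : ℕ → ℕ) (hs : StrictMono s) (m : ℕ → ℕ → R) :
    toEnd (bCol s m) ∈ BMatrix R := by
  intro k
  refine ⟨s k, fun x hx i hi => ?_⟩
  rw [toEnd_apply, Finsupp.sum_apply, Finsupp.sum]
  refine Finset.sum_eq_zero fun j hj => ?_
  have hxj : x j ≠ 0 := Finsupp.mem_support_iff.mp hj
  have hjk : s k ≤ j := by
    by_contra hc; push_neg at hc; exact hxj (hx j hc)
  have hni : i ∉ blkF s (blk s j) :=
    sep₂ hs (lt_of_lt_of_le hi hs.le_apply) hjk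
  rw [Finsupp.smul_apply, bCol_apply, if_neg hni, smul_zero]

lemma bd_comp (s : ℕ → ℕ) (hs : StrictMono s) (hs0 : s 0 = 0) (m m' : ℕ → ℕ → R)
    (h : ∀ k, mrestr m' (blkF s k) (blkF s k) * mrestr m (blkF s k) (blkF s k) = 1)
    (j : ℕ) : toEnd (bCol s m) (bCol s m' j) = eb R j := by
  set B := blkF s (blk s j) with hB
  have hjB : j ∈ B := blk_mem hs hs0 j
  rw [bCol, map_sum]
  have h1 : ∀ p ∈ B, toEnd (bCol s m) (Finsupp.single p (m' j p))
      = ∑ q ∈ B, Finsupp.single q (m' j p * m p q) := by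
    intro p hp
    rw [toEnd_single]
    have hbp : blk s p = blk s j := by
      rw [hB, blkF, Finset.mem_Ico] at hp
      exact blk_eq hs hs0 hp.1 hp.2
    rw [bCol, hbp, ← hB, Finset.smul_sum]
    refine Finset.sum_congr rfl fun q hq => ?_
    rw [Finsupp.smul_single, smul_eq_mul]
  rw [Finset.sum_congr rfl h1, Finset.sum_comm]
  have h2 : ∀ q ∈ B, ∑ p ∈ B, Finsupp.single q (m' j p * m p q)
      = Finsupp.single q (∑ p ∈ B, m' j p * m p q) := by
    intro q hq
    exact (map_sum (Finsupp.singleAddHom q) _ _).symm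
  rw [Finset.sum_congr rfl h2]
  have h3 : ∀ q ∈ B, (∑ p ∈ B, m' j p * m p q) = if j = q then 1 else 0 := by
    intro q hq
    have hh := congrFun (congrFun (h (blk s j)) ⟨j, hjB⟩) ⟨q, hq⟩
    rw [Matrix.mul_apply, Matrix.one_apply] at hh
    simp only [mrestr, Matrix.of_apply] at hh
    rw [← Finset.sum_coe_sort B (fun p => m' j p * m p q), hh]
    simp [Subtype.ext_iff]
  calc ∑ q ∈ B, Finsupp.single q (∑ p ∈ B, m' j p * m p q)
      = ∑ q ∈ B, if q = j then Finsupp.single j (1:R) else 0 := by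
        refine Finset.sum_congr rfl fun q hq => ?_
        rw [h3 q hq]
        by_cases hqj : q = j
        · subst hqj; rw [if_pos rfl, if_pos rfl]
        · rw [if_neg (fun hh => hqj hh.symm), if_neg hqj, Finsupp.single_zero]
    _ = eb R j := by
        rw [Finset.sum_ite_eq' B j (fun _ => Finsupp.single j (1:R)), if_pos hjB]; rfl

lemma bd_unit (s : ℕ → ℕ) (hs : StrictMono s) (hs0 : s 0 = 0) (m : ℕ → ℕ → R)
    (h : ∀ k, IsUnit (mrestr m (blkF s k) (blkF s k))) :
    ∃ u : (BMatrix R)ˣ, (u : BMatrix R) = ⟨toEnd (bCol s m), bd_mem s hs m⟩ := by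
  classical
  set N : (k : ℕ) → Matrix ↥(blkF s k) ↥(blkF s k) R := fun k => ((h k).unit⁻¹).1 with hN
  set m' : ℕ → ℕ → R := fun j p =>
    if hp : p ∈ blkF s (blk s j) then N (blk s j) ⟨j, blk_mem hs hs0 j⟩ ⟨p, hp⟩ else 0 with hm'
  have key : ∀ k, mrestr m' (blkF s k) (blkF s k) = N k := by
    intro k
    funext p q
    obtain ⟨x, hx⟩ := p
    obtain ⟨y, hy⟩ := q
    have hb : blk s x = k := by
      rw [blkF, Finset.mem_Ico] at hx
      exact blk_eq hs hs0 hx.1 hx.2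
    show m' x y = N k ⟨x, hx⟩ ⟨y, hy⟩
    subst hb
    change (if hp : y ∈ blkF s (blk s x) then N (blk s x) ⟨x, blk_mem hs hs0 x⟩ ⟨y, hp⟩ else 0)
      = N (blk s x) ⟨x, hx⟩ ⟨y, hy⟩
    rw [dif_pos hy]
  have hinv1 : ∀ k, mrestr m' (blkF s k) (blkF s k) * mrestr m (blkF s k) (blkF s k) = 1 := by
    intro k
    rw [key k, hN, ← (h k).unit_spec]
    exact (h k).unit.inv_mul
  have hinv2 : ∀ k, mrestr m (blkF s k) (blkF s k) * mrestr m' (blkF s k) (blkF s k) = 1 := by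
    intro k
    rw [key k, hN, ← (h k).unit_spec]
    exact (h k).unit.mul_inv
  refine ⟨⟨⟨toEnd (bCol s m), bd_mem s hs m⟩, ⟨toEnd (bCol s m'), bd_mem s hs m'⟩, ?_, ?_⟩, rfl⟩
  · refine Subtype.ext (end_ext fun j => ?_)
    show (toEnd (bCol s m) * toEnd (bCol s m')) (eb R j) = (1 : Module.End R (ℕ →₀ R)) (eb R j)
    rw [Module.End.mul_apply, toEnd_eb, bd_comp s hs hs0 m m' hinv1 j, Module.End.one_apply]
  · refine Subtype.ext (end_ext fun j => ?_)
    show (toEnd (bCol s m') * toEnd (bCol s m)) (eb R j) = (1 : Module.End R (ℕ →₀ R)) (eb R j)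
    rw [Module.End.mul_apply, toEnd_eb, bd_comp s hs hs0 m' m hinv2 j, Module.End.one_apply]

end Stmt12Aux
section Stmt12Mat
open Matrix
variable {α : Type*} [Ring α] {m n : Type*} [Fintype m] [Fintype n] [DecidableEq m] [DecidableEq n]

/-- noncommutative version of `Matrix.fromBlocksZero₂₁Invertible` -/
def ncUpperInvertible (A : Matrix m m α) (B : Matrix m n α) (D : Matrix n n α)
    [Invertible A] [Invertible D] : Invertible (fromBlocks A B 0 D) where
  invOf := fromBlocks (⅟ A) (-(⅟ A * B * ⅟ D)) 0 (⅟ D)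
  invOf_mul_self := by
    rw [fromBlocks_multiply]
    simp only [Matrix.mul_zero, Matrix.zero_mul, add_zero, zero_add]
    rw [invOf_mul_self, invOf_mul_self, Matrix.neg_mul, Matrix.invOf_mul_cancel_right,
      add_neg_cancel, fromBlocks_one]
  mul_invOf_self := by
    rw [fromBlocks_multiply]
    simp only [Matrix.mul_zero, Matrix.zero_mul, add_zero, zero_add]
    rw [mul_invOf_self, mul_invOf_self, Matrix.mul_neg, ← Matrix.mul_assoc,
      Matrix.mul_invOf_cancel_left, neg_add_cancel, fromBlocks_one]

/-- noncommutative version of `Matrix.fromBlocksZero₁₂Invertible` -/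
def ncLowerInvertible (A : Matrix m m α) (C : Matrix n m α) (D : Matrix n n α)
    [Invertible A] [Invertible D] : Invertible (fromBlocks A 0 C D) where
  invOf := fromBlocks (⅟ A) 0 (-(⅟ D * C * ⅟ A)) (⅟ D)
  invOf_mul_self := by
    rw [fromBlocks_multiply]
    simp only [Matrix.mul_zero, Matrix.zero_mul, add_zero, zero_add]
    rw [invOf_mul_self, invOf_mul_self, Matrix.neg_mul, Matrix.invOf_mul_cancel_right,
      neg_add_cancel, fromBlocks_one]
  mul_invOf_self := by
    rw [fromBlocks_multiply]
    simp only [Matrix.mul_zero, Matrix.zero_mul, add_zero, zero_add]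
    rw [mul_invOf_self, mul_invOf_self, Matrix.mul_neg, ← Matrix.mul_assoc,
      Matrix.mul_invOf_cancel_left, add_neg_cancel, fromBlocks_one]

theorem ncFromBlocks_eq (A : Matrix m m α) (B : Matrix m n α) (C : Matrix n m α)
    (D : Matrix n n α) [Invertible A] :
    fromBlocks A B C D =
      fromBlocks 1 0 (C * ⅟ A) 1 * fromBlocks A 0 0 (D - C * ⅟ A * B) *
        fromBlocks 1 (⅟ A * B) 0 1 := by
  simp only [fromBlocks_multiply, Matrix.mul_zero, Matrix.zero_mul, add_zero, zero_add,
    Matrix.one_mul, Matrix.mul_one, invOf_mul_self, Matrix.mul_invOf_cancel_left,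
    Matrix.invOf_mul_cancel_right, Matrix.mul_assoc, add_sub_cancel]

/-- noncommutative version of `Matrix.fromBlocks₁₁Invertible` -/
noncomputable def ncSchurInvertible (A : Matrix m m α) (B : Matrix m n α) (C : Matrix n m α)
    (D : Matrix n n α) [Invertible A] [Invertible (D - C * ⅟ A * B)] :
    Invertible (fromBlocks A B C D) := by
  rw [ncFromBlocks_eq A B C D]
  letI : Invertible (1 : Matrix m m α) := invertibleOne
  letI : Invertible (1 : Matrix n n α) := invertibleOne
  letI h1 : Invertible (fromBlocks (1 : Matrix m m α) 0 (C * ⅟ A) (1 : Matrix n n α)) :=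
    ncLowerInvertible _ _ _
  letI h2 : Invertible (fromBlocks A 0 (0 : Matrix n m α) (D - C * ⅟ A * B)) :=
    ncUpperInvertible _ _ _
  letI h3 : Invertible (fromBlocks (1 : Matrix m m α) (⅟ A * B) (0 : Matrix n m α) 1) :=
    ncUpperInvertible _ _ _
  letI h12 := h1.mul h2
  exact h12.mul h3

omit [Fintype m] [Fintype n] [DecidableEq m] [DecidableEq n] in
theorem ncFromBlocks_sub (A A' : Matrix m m α) (B B' : Matrix m n α) (C C' : Matrix n m α)
    (D D' : Matrix n n α) :
    fromBlocks A B C D - fromBlocks A' B' C' D'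
      = fromBlocks (A - A') (B - B') (C - C') (D - D') := by
  rw [sub_eq_add_neg, fromBlocks_neg, fromBlocks_add]
  simp [sub_eq_add_neg]

end Stmt12Mat
section Stmt12Mat2
open Matrix
variable {R : Type*} [Ring R]

lemma one_by_one_eq (M : Matrix (Fin 1) (Fin 1) R) :
    M = Matrix.diagonal (fun _ => M 0 0) := by
  ext i j
  fin_cases i <;> fin_cases j <;> simp [Matrix.diagonal]

noncomputable def diagUnitInvertible {n : Type*} [Fintype n] [DecidableEq n] (u : Rˣ) :
    Invertible (Matrix.diagonal (fun _ => (u : R)) : Matrix n n R) :=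
  ⟨Matrix.diagonal (fun _ => ((u⁻¹ : Rˣ) : R)), by
    rw [Matrix.diagonal_mul_diagonal]; simp, by
    rw [Matrix.diagonal_mul_diagonal]; simp⟩

theorem twoGoodMatrixCard (hgood : ∀ a : R, ∃ u₁ u₂ : Rˣ, a = (u₁ : R) + (u₂ : R)) :
    ∀ (n : ℕ) (ι : Type) (_ : Fintype ι) (_ : DecidableEq ι), Fintype.card ι = n →
      ∀ A : Matrix ι ι R, ∃ X : Matrix ι ι R, IsUnit X ∧ IsUnit (A - X) := by
  intro n
  induction n with
  | zero =>
    intro ι hf hd hcard A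
    have he : IsEmpty ι := Fintype.card_eq_zero_iff.mp hcard
    have hss : Subsingleton (Matrix ι ι R) := ⟨fun a b => by ext i j; exact (he.false i).elim⟩
    exact ⟨1, isUnit_of_subsingleton 1, isUnit_of_subsingleton _⟩
  | succ n ih =>
    intro ι hf hd hcard A
    classical
    have e : ι ≃ (Fin 1 ⊕ Fin n) :=
      (Fintype.equivFinOfCardEq hcard).trans ((finCongr (by omega)).trans finSumFinEquiv.symm)
    set E := Matrix.reindexAlgEquiv ℕ R e with hE
    set B := E A with hB
    set a := B.toBlocks₁₁ with ha
    set Bb := B.toBlocks₁₂ with hBb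
    set C := B.toBlocks₂₁ with hC
    set D := B.toBlocks₂₂ with hD
    obtain ⟨u, v, huv⟩ := hgood (a 0 0)
    set U₁ : Matrix (Fin 1) (Fin 1) R := Matrix.diagonal (fun _ => (u : R)) with hU₁
    haveI iU₁ : Invertible U₁ := diagUnitInvertible u
    obtain ⟨W, hW, hW2⟩ := ih (Fin n) inferInstance inferInstance (by simp)
      (D - C * ⅟U₁ * Bb)
    haveI iW : Invertible W := hW.nonempty_invertible.some
    set D' : Matrix (Fin n) (Fin n) R := C * ⅟U₁ * Bb + W with hD'
    haveI iSchur : Invertible (D' - C * ⅟U₁ * Bb) := by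
      rw [hD', add_sub_cancel_left]; exact iW
    haveI iX' : Invertible (Matrix.fromBlocks U₁ Bb C D') :=
      ncSchurInvertible U₁ Bb C D'
    have hav : a - U₁ = Matrix.diagonal (fun _ => (v : R)) := by
      rw [one_by_one_eq (a - U₁)]
      congr 1
      funext x
      rw [Matrix.sub_apply, huv, hU₁]
      simp [Matrix.diagonal]
    haveI iav : Invertible (a - U₁) := by
      rw [hav]; exact diagUnitInvertible v
    haveI irest : Invertible (D - D') := by
      have hr : D - D' = D - C * ⅟U₁ * Bb - W := by rw [hD', sub_add_eq_sub_sub]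
      rw [hr]; exact hW2.nonempty_invertible.some
    haveI iBX : Invertible (B - Matrix.fromBlocks U₁ Bb C D') := by
      have hfb : B - Matrix.fromBlocks U₁ Bb C D'
          = Matrix.fromBlocks (a - U₁) (Bb - Bb) (C - C) (D - D') := by
        conv_lhs => rw [← Matrix.fromBlocks_toBlocks B]
        rw [ncFromBlocks_sub]
      rw [hfb, sub_self, sub_self]
      exact ncUpperInvertible _ _ _
    refine ⟨E.symm (Matrix.fromBlocks U₁ Bb C D'), ?_, ?_⟩
    · exact (isUnit_of_invertible _).map E.symm
    · have hAX : A - E.symm (Matrix.fromBlocks U₁ Bb C D')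
          = E.symm (B - Matrix.fromBlocks U₁ Bb C D') := by
        rw [map_sub, hB, AlgEquiv.symm_apply_apply]
      rw [hAX]
      exact (isUnit_of_invertible _).map E.symm

theorem twoGoodMatrix (hgood : ∀ a : R, ∃ u₁ u₂ : Rˣ, a = (u₁ : R) + (u₂ : R))
    (ι : Type) [Fintype ι] [DecidableEq ι] (A : Matrix ι ι R) :
    ∃ X : Matrix ι ι R, IsUnit X ∧ IsUnit (A - X) :=
  twoGoodMatrixCard hgood (Fintype.card ι) ι inferInstance inferInstance rfl A

end Stmt12Mat2
section Stmt12Chain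

lemma exists_chain {T : ℕ → Sort*} {P : ∀ b, T b → Prop} {Q : ∀ b, T b → T (b+1) → Prop}
    (x0 : T 0) (h0 : P 0 x0) (step : ∀ b x, P b x → ∃ y, P (b+1) y ∧ Q b x y) :
    ∃ f : ∀ b, T b, f 0 = x0 ∧ (∀ b, P b (f b)) ∧ ∀ b, Q b (f b) (f (b+1)) := by
  choose g hg1 hg2 using step
  let F : ∀ b, {x : T b // P b x} := fun b =>
    Nat.rec ⟨x0, h0⟩ (fun b p => ⟨g b p.1 p.2, hg1 b p.1 p.2⟩) b
  exact ⟨fun b => (F b).1, rfl, fun b => (F b).2, fun b => hg2 b (F b).1 (F b).2⟩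

variable {R : Type*} [Ring R]

/-- equivalence splitting an interval at a midpoint -/
def icoSumEquiv (a b c : ℕ) (hab : a ≤ b) (hbc : b ≤ c) :
    (↥(Finset.Ico a b) ⊕ ↥(Finset.Ico b c)) ≃ ↥(Finset.Ico a c) where
  toFun := Sum.elim
    (fun p => ⟨↑p, by have := Finset.mem_Ico.mp p.2; exact Finset.mem_Ico.mpr (by omega)⟩)
    (fun q => ⟨↑q, by have := Finset.mem_Ico.mp q.2; exact Finset.mem_Ico.mpr (by omega)⟩)
  invFun x :=
    if h : (x : ℕ) < b then
      Sum.inl ⟨↑x, by have := Finset.mem_Ico.mp x.2; exact Finset.mem_Ico.mpr (by omega)⟩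
    else
      Sum.inr ⟨↑x, by have := Finset.mem_Ico.mp x.2; exact Finset.mem_Ico.mpr (by omega)⟩
  left_inv p := by
    rcases p with p | q
    · have hp := Finset.mem_Ico.mp p.2
      simp [hp.2]
    · have hq := Finset.mem_Ico.mp q.2
      simp [hq.1, Nat.not_lt.mpr hq.1]
  right_inv x := by
    by_cases hx : (x : ℕ) < b <;> simp [hx]

lemma isUnit_mrestr_congr {m : ℕ → ℕ → R} {P Q : Finset ℕ} (hPQ : P = Q)
    (h : IsUnit (mrestr m P P)) : IsUnit (mrestr m Q Q) := by
  subst hPQ; exact h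

lemma isUnit_restr_union (m : ℕ → ℕ → R) (a b c : ℕ) (hab : a ≤ b) (hbc : b ≤ c)
    (h : IsUnit (Matrix.fromBlocks
      (mrestr m (Finset.Ico a b) (Finset.Ico a b)) (mrestr m (Finset.Ico a b) (Finset.Ico b c))
      (mrestr m (Finset.Ico b c) (Finset.Ico a b)) (mrestr m (Finset.Ico b c) (Finset.Ico b c)))) :
    IsUnit (mrestr m (Finset.Ico a c) (Finset.Ico a c)) := by
  classical
  have h2 := h.map (Matrix.reindexAlgEquiv ℕ R (icoSumEquiv a b c hab hbc))
  have heq : (Matrix.reindexAlgEquiv ℕ R (icoSumEquiv a b c hab hbc)) (Matrix.fromBlocks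
      (mrestr m (Finset.Ico a b) (Finset.Ico a b)) (mrestr m (Finset.Ico a b) (Finset.Ico b c))
      (mrestr m (Finset.Ico b c) (Finset.Ico a b)) (mrestr m (Finset.Ico b c) (Finset.Ico b c)))
      = mrestr m (Finset.Ico a c) (Finset.Ico a c) := by
    funext p q
    rw [Matrix.reindexAlgEquiv_apply, Matrix.reindex_apply, Matrix.submatrix_apply]
    by_cases hp : ((p : ℕ) < b) <;> by_cases hq : ((q : ℕ) < b) <;>
      simp [icoSumEquiv, hp, hq, mrestr, Matrix.fromBlocks]
  rw [heq] at h2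
  exact h2

end Stmt12Chain
section SplitEntries
variable {R : Type*} [Ring R]

set_option maxHeartbeats 2000000 in
lemma splitEntries (t : ℕ → ℕ) (htmono : StrictMono t) (ht0 : t 0 = 0)
    (am xg mU mV : ℕ → ℕ → R)
    (hP1 : ∀ k j p, j < t k → t (k+1) ≤ p → am j p = 0)
    (hP2 : ∀ k j p, p < t k → t (k+1) ≤ j → am j p = 0)
    (hmUdef : ∀ j p, mU j p = if p ∈ blkF t (blk t j) then xg j p else am j p)
    (hmVdef : ∀ j p, mV j p = if p ∈ blkF t (blk t j) then am j p - xg j p else am j p)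
    (s₁ s₂ : ℕ → ℕ) (hs₁v : ∀ K, s₁ K = t (2*K-1)) (hs₂v : ∀ K, s₂ K = t (2*K))
    (hs₁m : StrictMono s₁) (hs₂m : StrictMono s₂) (hs₁0 : s₁ 0 = 0) (hs₂0 : s₂ 0 = 0)
    (j i : ℕ) :
    am j i = (if i ∈ blkF s₁ (blk s₁ j) then mU j i else 0)
      + (if i ∈ blkF s₂ (blk s₂ j) then mV j i else 0) := by
    have hbj1 : t (blk t j) ≤ j := blk_le ht0 j
    have hbj2 : j < t (blk t j + 1) := blk_lt htmono j
    set b := blk t j with hbdef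
    have hS1blk : ∀ K, s₁ K ≤ j → j < s₁ (K+1) → blk s₁ j = K :=
      fun K ha hb => blk_eq hs₁m hs₁0 ha hb
    have hS2blk : ∀ K, s₂ K ≤ j → j < s₂ (K+1) → blk s₂ j = K :=
      fun K ha hb => blk_eq hs₂m hs₂0 ha hb
    rcases lt_or_ge i (t b) with hlow | h1
    · -- i strictly below j's t-block
      have hd1 : t (blk t i) ≤ i := blk_le ht0 i
      have hd2 : i < t (blk t i + 1) := blk_lt htmono i
      set d := blk t i with hddef
      have hdb : d + 1 ≤ b := by
        by_contra hc
        push_neg at hc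
        have : t b ≤ t d := by refine htmono.monotone ?_; omega
        omega
      have hnotb : i ∉ blkF t b := by
        simp only [blkF, Finset.mem_Ico]
        omega
      have hmUv : mU j i = am j i := by
        rw [hmUdef, ← hbdef, if_neg hnotb]
      have hmVv : mV j i = am j i := by
        rw [hmVdef, ← hbdef, if_neg hnotb]
      rcases Nat.lt_or_ge (d+1) b with hfar | hadj
      · -- far below
        have hz : am j i = 0 := by
          refine hP2 (d+1) j i hd2 (le_trans (htmono.monotone ?_) hbj1); omega
        have hsep1 : i ∉ blkF s₁ (blk s₁ j) := by
          rcases Nat.even_or_odd d with ⟨c, hc⟩ | ⟨c, hc⟩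
          · refine sep₂ hs₁m (k := c+1) ?_ ?_
            · rw [hs₁v, show 2*(c+1)-1 = d+1 by omega]; exact hd2
            · rw [hs₁v, show 2*(c+1)-1 = d+1 by omega]
              refine le_trans (htmono.monotone ?_) hbj1; omega
          · refine sep₂ hs₁m (k := c+2) ?_ ?_
            · rw [hs₁v, show 2*(c+2)-1 = d+2 by omega]
              refine lt_of_lt_of_le hd2 (htmono.monotone ?_); omega
            · rw [hs₁v, show 2*(c+2)-1 = d+2 by omega]
              refine le_trans (htmono.monotone ?_) hbj1; omega
        have hsep2 : i ∉ blkF s₂ (blk s₂ j) := by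
          rcases Nat.even_or_odd d with ⟨c, hc⟩ | ⟨c, hc⟩
          · refine sep₂ hs₂m (k := c+1) ?_ ?_
            · rw [hs₂v, show 2*(c+1) = d+2 by omega]
              refine lt_of_lt_of_le hd2 (htmono.monotone ?_); omega
            · rw [hs₂v, show 2*(c+1) = d+2 by omega]
              refine le_trans (htmono.monotone ?_) hbj1; omega
          · refine sep₂ hs₂m (k := c+1) ?_ ?_
            · rw [hs₂v, show 2*(c+1) = d+1 by omega]; exact hd2
            · rw [hs₂v, show 2*(c+1) = d+1 by omega]
              refine le_trans (htmono.monotone ?_) hbj1; omega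
        rw [if_neg hsep1, if_neg hsep2, hz, add_zero]
      · -- adjacent below : d + 1 = b
        have hdb1 : d + 1 = b := by omega
        rcases Nat.even_or_odd d with ⟨c, hc⟩ | ⟨c, hc⟩
        · -- d even, b odd : V-pair (d, b)
          have hK2 : blk s₂ j = c := by
            refine hS2blk c ?_ ?_
            · rw [hs₂v, show 2*c = d by omega]
              refine le_trans (htmono.monotone ?_) hbj1; omega
            · rw [hs₂v, show 2*(c+1) = b+1 by omega]; exact hbj2
          have hin2 : i ∈ blkF s₂ (blk s₂ j) := by
            rw [hK2]
            simp only [blkF, Finset.mem_Ico]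
            constructor
            · rw [hs₂v, show 2*c = d by omega]; exact hd1
            · rw [hs₂v, show 2*(c+1) = b+1 by omega]
              refine lt_of_lt_of_le hlow (htmono.monotone ?_); omega
          have hsep1 : i ∉ blkF s₁ (blk s₁ j) := by
            refine sep₂ hs₁m (k := c+1) ?_ ?_
            · rw [hs₁v, show 2*(c+1)-1 = b by omega]; exact hlow
            · rw [hs₁v, show 2*(c+1)-1 = b by omega]; exact hbj1
          rw [if_neg hsep1, if_pos hin2, hmVv, zero_add]
        · -- d odd, b even : U-pair (d, b)
          have hK1 : blk s₁ j = c+1 := by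
            refine hS1blk (c+1) ?_ ?_
            · rw [hs₁v, show 2*(c+1)-1 = d by omega]
              refine le_trans (htmono.monotone ?_) hbj1; omega
            · rw [hs₁v, show 2*(c+1+1)-1 = b+1 by omega]; exact hbj2
          have hin1 : i ∈ blkF s₁ (blk s₁ j) := by
            rw [hK1]
            simp only [blkF, Finset.mem_Ico]
            constructor
            · rw [hs₁v, show 2*(c+1)-1 = d by omega]; exact hd1
            · rw [hs₁v, show 2*(c+1+1)-1 = b+1 by omega]
              refine lt_of_lt_of_le hlow (htmono.monotone ?_); omega
          have hsep2 : i ∉ blkF s₂ (blk s₂ j) := by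
            refine sep₂ hs₂m (k := c+1) ?_ ?_
            · rw [hs₂v, show 2*(c+1) = b by omega]; exact hlow
            · rw [hs₂v, show 2*(c+1) = b by omega]; exact hbj1
          rw [if_pos hin1, if_neg hsep2, hmUv, add_zero]
    · rcases lt_or_ge i (t (b+1)) with hmid | h2
      · -- i in j's t-block
        have hib : i ∈ blkF t b := by
          simp only [blkF, Finset.mem_Ico]
          exact ⟨h1, hmid⟩
        have hmUv : mU j i = xg j i := by
          rw [hmUdef, ← hbdef, if_pos hib]
        have hmVv : mV j i = am j i - xg j i := by
          rw [hmVdef, ← hbdef, if_pos hib]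
        have hboth : i ∈ blkF s₁ (blk s₁ j) ∧ i ∈ blkF s₂ (blk s₂ j) := by
          rcases Nat.even_or_odd b with ⟨c, hc⟩ | ⟨c, hc⟩
          · constructor
            · have hK1 : blk s₁ j = c := by
                refine hS1blk c ?_ ?_
                · rw [hs₁v]
                  refine le_trans (htmono.monotone ?_) hbj1; omega
                · rw [hs₁v, show 2*(c+1)-1 = b+1 by omega]; exact hbj2
              rw [hK1]
              simp only [blkF, Finset.mem_Ico]
              constructor
              · rw [hs₁v]
                refine le_trans (htmono.monotone ?_) h1; omega
              · rw [hs₁v, show 2*(c+1)-1 = b+1 by omega]; exact hmid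
            · have hK2 : blk s₂ j = c := by
                refine hS2blk c ?_ ?_
                · rw [hs₂v, show 2*c = b by omega]; exact hbj1
                · rw [hs₂v, show 2*(c+1) = b+2 by omega]
                  refine lt_of_lt_of_le hbj2 (htmono.monotone ?_); omega
              rw [hK2]
              simp only [blkF, Finset.mem_Ico]
              constructor
              · rw [hs₂v, show 2*c = b by omega]; exact h1
              · rw [hs₂v, show 2*(c+1) = b+2 by omega]
                refine lt_of_lt_of_le hmid (htmono.monotone ?_); omega
          · constructor
            · have hK1 : blk s₁ j = c+1 := by
                refine hS1blk (c+1) ?_ ?_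
                · rw [hs₁v, show 2*(c+1)-1 = b by omega]; exact hbj1
                · rw [hs₁v, show 2*(c+1+1)-1 = b+2 by omega]
                  refine lt_of_lt_of_le hbj2 (htmono.monotone ?_); omega
              rw [hK1]
              simp only [blkF, Finset.mem_Ico]
              constructor
              · rw [hs₁v, show 2*(c+1)-1 = b by omega]; exact h1
              · rw [hs₁v, show 2*(c+1+1)-1 = b+2 by omega]
                refine lt_of_lt_of_le hmid (htmono.monotone ?_); omega
            · have hK2 : blk s₂ j = c := by
                refine hS2blk c ?_ ?_
                · rw [hs₂v]
                  refine le_trans (htmono.monotone ?_) hbj1; omega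
                · rw [hs₂v, show 2*(c+1) = b+1 by omega]; exact hbj2
              rw [hK2]
              simp only [blkF, Finset.mem_Ico]
              constructor
              · rw [hs₂v]
                refine le_trans (htmono.monotone ?_) h1; omega
              · rw [hs₂v, show 2*(c+1) = b+1 by omega]; exact hmid
        rw [if_pos hboth.1, if_pos hboth.2, hmUv, hmVv]
        abel
      · -- i above j's t-block
        have hnotb : i ∉ blkF t b := by
          simp only [blkF, Finset.mem_Ico]
          omega
        have hmUv : mU j i = am j i := by
          rw [hmUdef, ← hbdef, if_neg hnotb]
        have hmVv : mV j i = am j i := by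
          rw [hmVdef, ← hbdef, if_neg hnotb]
        rcases lt_or_ge i (t (b+2)) with hadj | hfar
        · -- i in t-block b+1
          rcases Nat.even_or_odd b with ⟨c, hc⟩ | ⟨c, hc⟩
          · -- b even : V-pair (b, b+1)
            have hK2 : blk s₂ j = c := by
              refine hS2blk c ?_ ?_
              · rw [hs₂v, show 2*c = b by omega]; exact hbj1
              · rw [hs₂v, show 2*(c+1) = b+2 by omega]
                refine lt_of_lt_of_le hbj2 (htmono.monotone ?_); omega
            have hin2 : i ∈ blkF s₂ (blk s₂ j) := by
              rw [hK2]
              simp only [blkF, Finset.mem_Ico]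
              constructor
              · rw [hs₂v, show 2*c = b by omega]; exact h1
              · rw [hs₂v, show 2*(c+1) = b+2 by omega]; exact hadj
            have hsep1 : i ∉ blkF s₁ (blk s₁ j) := by
              refine sep₁ hs₁m hs₁0 (k := c+1) ?_ ?_
              · rw [hs₁v, show 2*(c+1)-1 = b+1 by omega]; exact hbj2
              · rw [hs₁v, show 2*(c+1)-1 = b+1 by omega]; exact h2
            rw [if_neg hsep1, if_pos hin2, hmVv, zero_add]
          · -- b odd : U-pair (b, b+1)
            have hK1 : blk s₁ j = c+1 := by
              refine hS1blk (c+1) ?_ ?_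
              · rw [hs₁v, show 2*(c+1)-1 = b by omega]; exact hbj1
              · rw [hs₁v, show 2*(c+1+1)-1 = b+2 by omega]
                refine lt_of_lt_of_le hbj2 (htmono.monotone ?_); omega
            have hin1 : i ∈ blkF s₁ (blk s₁ j) := by
              rw [hK1]
              simp only [blkF, Finset.mem_Ico]
              constructor
              · rw [hs₁v, show 2*(c+1)-1 = b by omega]; exact h1
              · rw [hs₁v, show 2*(c+1+1)-1 = b+2 by omega]; exact hadj
            have hsep2 : i ∉ blkF s₂ (blk s₂ j) := by
              refine sep₁ hs₂m hs₂0 (k := c+1) ?_ ?_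
              · rw [hs₂v, show 2*(c+1) = b+1 by omega]; exact hbj2
              · rw [hs₂v, show 2*(c+1) = b+1 by omega]; exact h2
            rw [if_pos hin1, if_neg hsep2, hmUv, add_zero]
        · -- far above
          have hz : am j i = 0 := hP1 (b+1) j i hbj2 hfar
          have hsep1 : i ∉ blkF s₁ (blk s₁ j) := by
            rcases Nat.even_or_odd b with ⟨c, hc⟩ | ⟨c, hc⟩
            · refine sep₁ hs₁m hs₁0 (k := c+1) ?_ ?_
              · rw [hs₁v, show 2*(c+1)-1 = b+1 by omega]; exact hbj2
              · rw [hs₁v, show 2*(c+1)-1 = b+1 by omega]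
                refine le_trans (htmono.monotone ?_) hfar; omega
            · refine sep₁ hs₁m hs₁0 (k := c+2) ?_ ?_
              · rw [hs₁v, show 2*(c+2)-1 = b+2 by omega]
                refine lt_of_lt_of_le hbj2 (htmono.monotone ?_); omega
              · rw [hs₁v, show 2*(c+2)-1 = b+2 by omega]; exact hfar
          have hsep2 : i ∉ blkF s₂ (blk s₂ j) := by
            rcases Nat.even_or_odd b with ⟨c, hc⟩ | ⟨c, hc⟩
            · refine sep₁ hs₂m hs₂0 (k := c+1) ?_ ?_
              · rw [hs₂v, show 2*(c+1) = b+2 by omega]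
                refine lt_of_lt_of_le hbj2 (htmono.monotone ?_); omega
              · rw [hs₂v, show 2*(c+1) = b+2 by omega]; exact hfar
            · refine sep₁ hs₂m hs₂0 (k := c+1) ?_ ?_
              · rw [hs₂v, show 2*(c+1) = b+1 by omega]; exact hbj2
              · rw [hs₂v, show 2*(c+1) = b+1 by omega]
                refine le_trans (htmono.monotone ?_) hfar; omega
          rw [if_neg hsep1, if_neg hsep2, hz, add_zero]

end SplitEntries

/- STATEMENT 12: if `R` is a 2-good ring, then the ring `B(R)` of all `ω × ω` row and
column-finite matrices over `R` is 2-good: every element is a sum of two units of `B(R)`. -/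
set_option maxHeartbeats 2000000 in
open Finsupp Matrix Finset in
/-- if `R` is a 2-good ring, then the ring `B(R)` of all `ω × ω` row and
column-finite matrices over `R` is 2-good: every element is a sum of two units of `B(R)`. -/
theorem stmt_12 {R : Type*} [Ring R]
    (hgood : ∀ a : R, ∃ u₁ u₂ : Rˣ, a = (u₁ : R) + (u₂ : R)) :
    ∀ φ : BMatrix R, ∃ ψ₁ ψ₂ : (BMatrix R)ˣ, φ = ψ₁ + ψ₂ := by
  classical
  intro φ
  have hΦ : ∀ k : ℕ, ∃ m : ℕ, ∀ x : ℕ →₀ R, (∀ i < m, x i = 0) → ∀ i < k,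
      (φ : Module.End R (ℕ →₀ R)) x i = 0 := φ.2
  set Φ : Module.End R (ℕ →₀ R) := (φ : Module.End R (ℕ →₀ R)) with hΦdef
  set am : ℕ → ℕ → R := fun j p => Φ (eb R j) p with ham
  -- bounds for column supports
  set B1 : ℕ → ℕ := fun nn => (Finset.range nn).sup (fun j => ((Φ (eb R j)).support.sup id) + 1)
    with hB1
  have hB1spec : ∀ nn j p, j < nn → B1 nn ≤ p → am j p = 0 := by
    intro nn j p hj hp
    by_contra hne
    have hmem : p ∈ (Φ (eb R j)).support := Finsupp.mem_support_iff.mpr hne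
    have h1 : p ≤ (Φ (eb R j)).support.sup id := Finset.le_sup (f := id) hmem
    have h2 : ((Φ (eb R j)).support.sup id) + 1 ≤ B1 nn := by
      rw [hB1]; exact Finset.le_sup (f := fun j => ((Φ (eb R j)).support.sup id) + 1) (Finset.mem_range.mpr hj)
    omega
  set B2 : ℕ → ℕ := fun nn => (hΦ nn).choose with hB2
  have hB2spec : ∀ nn j p, B2 nn ≤ j → p < nn → am j p = 0 := by
    intro nn j p hj hp
    refine (hΦ nn).choose_spec (eb R j) (fun i hi => ?_) p hp
    have hi' : i < B2 nn := hi
    rw [eb, Finsupp.single_apply, if_neg (by omega)]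
  -- partition ℕ into intervals making Φ block tridiagonal
  set tstep : ℕ → ℕ := fun nn => max (nn+1) (max (B1 nn) (B2 nn)) with htstep
  set t : ℕ → ℕ := fun n => Nat.rec 0 (fun _ prev => tstep prev) n with ht
  have ht0 : t 0 = 0 := rfl
  have htsucc : ∀ n, t (n+1) = tstep (t n) := fun n => rfl
  have htmono : StrictMono t := by
    refine strictMono_nat_of_lt_succ (fun n => ?_)
    rw [htsucc, htstep]
    simp only []
    omega
  have hP1 : ∀ k j p, j < t k → t (k+1) ≤ p → am j p = 0 := by
    intro k j p h1 h2
    refine hB1spec (t k) j p h1 (le_trans ?_ h2)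
    rw [htsucc, htstep]; simp only []; omega
  have hP2 : ∀ k j p, p < t k → t (k+1) ≤ j → am j p = 0 := by
    intro k j p h1 h2
    refine hB2spec (t k) j p (le_trans ?_ h2) h1
    rw [htsucc, htstep]; simp only []; omega
  -- the two interleaved partitions
  set s₁ : ℕ → ℕ := fun k => t (2*k - 1) with hs₁
  set s₂ : ℕ → ℕ := fun k => t (2*k) with hs₂
  have hs₁m : StrictMono s₁ := by
    refine strictMono_nat_of_lt_succ (fun k => ?_)
    simp only [hs₁]
    exact htmono (show 2*k-1 < 2*(k+1)-1 by omega)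
  have hs₂m : StrictMono s₂ := by
    refine strictMono_nat_of_lt_succ (fun k => ?_)
    simp only [hs₂]
    exact htmono (show 2*k < 2*(k+1) by omega)
  have hs₁0 : s₁ 0 = 0 := by
    simp only [hs₁]; rw [show 2*0-1 = 0 by norm_num]; exact ht0
  have hs₂0 : s₂ 0 = 0 := by
    simp only [hs₂]; rw [show 2*0 = 0 by norm_num]; exact ht0
  -- block matrices of Φ with respect to t
  set Bm : (b : ℕ) → Matrix ↥(blkF t b) ↥(blkF t b) R :=
    fun b => mrestr am (blkF t b) (blkF t b) with hBmdef
  set Cm : (b : ℕ) → Matrix ↥(blkF t b) ↥(blkF t (b+1)) R :=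
    fun b => mrestr am (blkF t b) (blkF t (b+1)) with hCmdef
  set Dm : (b : ℕ) → Matrix ↥(blkF t (b+1)) ↥(blkF t b) R :=
    fun b => mrestr am (blkF t (b+1)) (blkF t b) with hDmdef
  -- recursive choice of the diagonal fillers X b
  obtain ⟨X₀, hX₀u, hX₀v⟩ := twoGoodMatrix hgood ↥(blkF t 0) (Bm 0)
  have chainstep : ∀ b (X : Matrix ↥(blkF t b) ↥(blkF t b) R),
      ((Even b → IsUnit (Bm b - X)) ∧ (¬ Even b → IsUnit X)) →
      ∃ Y : Matrix ↥(blkF t (b+1)) ↥(blkF t (b+1)) R,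
        ((Even (b+1) → IsUnit (Bm (b+1) - Y)) ∧ (¬ Even (b+1) → IsUnit Y)) ∧
        IsUnit (if Even b then Matrix.fromBlocks (Bm b - X) (Cm b) (Dm b) (Bm (b+1) - Y)
          else Matrix.fromBlocks X (Cm b) (Dm b) Y) := by
    intro b X hX
    by_cases hb : Even b
    · have hP : IsUnit (Bm b - X) := hX.1 hb
      haveI iP : Invertible (Bm b - X) := hP.nonempty_invertible.some
      obtain ⟨Y, hYu, hYv⟩ := twoGoodMatrix hgood ↥(blkF t (b+1))
        (Bm (b+1) - Dm b * ⅟(Bm b - X) * Cm b)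
      refine ⟨Y, ⟨fun he => absurd hb (Nat.even_add_one.mp he), fun _ => hYu⟩, ?_⟩
      rw [if_pos hb]
      haveI : Invertible ((Bm (b+1) - Y) - Dm b * ⅟(Bm b - X) * Cm b) := by
        have hrw : (Bm (b+1) - Y) - Dm b * ⅟(Bm b - X) * Cm b
            = (Bm (b+1) - Dm b * ⅟(Bm b - X) * Cm b) - Y := by
          rw [sub_right_comm]
        rw [hrw]
        exact hYv.nonempty_invertible.some
      letI := ncSchurInvertible (Bm b - X) (Cm b) (Dm b) (Bm (b+1) - Y)
      exact isUnit_of_invertible _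
    · have hP : IsUnit X := hX.2 hb
      haveI iP : Invertible X := hP.nonempty_invertible.some
      obtain ⟨Z, hZu, hZv⟩ := twoGoodMatrix hgood ↥(blkF t (b+1))
        (Bm (b+1) - Dm b * ⅟X * Cm b)
      refine ⟨Dm b * ⅟X * Cm b + Z,
        ⟨fun _ => ?_, fun ho => absurd (Nat.even_add_one.mpr hb) ho⟩, ?_⟩
      · have hrw : Bm (b+1) - (Dm b * ⅟X * Cm b + Z)
            = (Bm (b+1) - Dm b * ⅟X * Cm b) - Z := by rw [sub_add_eq_sub_sub]
        rw [hrw]; exact hZv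
      · rw [if_neg hb]
        haveI : Invertible ((Dm b * ⅟X * Cm b + Z) - Dm b * ⅟X * Cm b) := by
          rw [add_sub_cancel_left]; exact hZu.nonempty_invertible.some
        letI := ncSchurInvertible X (Cm b) (Dm b) (Dm b * ⅟X * Cm b + Z)
        exact isUnit_of_invertible _
  obtain ⟨X, hX0, hXinv, hXpair⟩ := exists_chain X₀ ⟨fun _ => hX₀v, fun h => absurd Even.zero h⟩
    chainstep
  -- global entry functions
  set xg : ℕ → ℕ → R := fun j p =>
    if hp : p ∈ blkF t (blk t j) then X (blk t j) ⟨j, blk_mem htmono ht0 j⟩ ⟨p, hp⟩ else 0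
    with hxg
  set mU : ℕ → ℕ → R := fun j p => if p ∈ blkF t (blk t j) then xg j p else am j p with hmU
  set mV : ℕ → ℕ → R := fun j p => if p ∈ blkF t (blk t j) then am j p - xg j p else am j p
    with hmV
  -- restrictions to t-blocks
  have hrestU : ∀ b, mrestr mU (blkF t b) (blkF t b) = X b := by
    intro b
    funext p q
    obtain ⟨x, hx⟩ := p
    obtain ⟨y, hy⟩ := q
    have hbx : blk t x = b :=
      blk_eq htmono ht0 (Finset.mem_Ico.mp hx).1 (Finset.mem_Ico.mp hx).2
    show mU x y = X b ⟨x, hx⟩ ⟨y, hy⟩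
    subst hbx
    simp only [hmU]
    rw [if_pos hy]
    simp only [hxg]
    rw [dif_pos hy]
  have hrestV : ∀ b, mrestr mV (blkF t b) (blkF t b) = Bm b - X b := by
    intro b
    funext p q
    obtain ⟨x, hx⟩ := p
    obtain ⟨y, hy⟩ := q
    have hbx : blk t x = b :=
      blk_eq htmono ht0 (Finset.mem_Ico.mp hx).1 (Finset.mem_Ico.mp hx).2
    show mV x y = (Bm b - X b) ⟨x, hx⟩ ⟨y, hy⟩
    subst hbx
    simp only [hmV]
    rw [if_pos hy, Matrix.sub_apply]
    simp only [hBmdef]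
    have hxgv : xg x y = X (blk t x) ⟨x, hx⟩ ⟨y, hy⟩ := by
      simp only [hxg]
      rw [dif_pos hy]
    rw [hxgv]
    rfl
  have hcrossU : ∀ {j p b b'}, j ∈ blkF t b → p ∈ blkF t b' → b ≠ b' → mU j p = am j p := by
    intro j p b b' hj hp hne
    have h2 : blk t p = b' :=
      blk_eq htmono ht0 (Finset.mem_Ico.mp hp).1 (Finset.mem_Ico.mp hp).2
    have h1 : blk t j = b :=
      blk_eq htmono ht0 (Finset.mem_Ico.mp hj).1 (Finset.mem_Ico.mp hj).2
    have hnp : p ∉ blkF t (blk t j) := by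
      intro hc
      have h3 : blk t p = blk t j :=
        blk_eq htmono ht0 (Finset.mem_Ico.mp hc).1 (Finset.mem_Ico.mp hc).2
      exact hne (by rw [← h1, ← h3, h2])
    simp only [hmU]
    rw [if_neg hnp]
  have hcrossV : ∀ {j p b b'}, j ∈ blkF t b → p ∈ blkF t b' → b ≠ b' → mV j p = am j p := by
    intro j p b b' hj hp hne
    have h2 : blk t p = b' :=
      blk_eq htmono ht0 (Finset.mem_Ico.mp hp).1 (Finset.mem_Ico.mp hp).2
    have h1 : blk t j = b :=
      blk_eq htmono ht0 (Finset.mem_Ico.mp hj).1 (Finset.mem_Ico.mp hj).2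
    have hnp : p ∉ blkF t (blk t j) := by
      intro hc
      have h3 : blk t p = blk t j :=
        blk_eq htmono ht0 (Finset.mem_Ico.mp hc).1 (Finset.mem_Ico.mp hc).2
      exact hne (by rw [← h1, ← h3, h2])
    simp only [hmV]
    rw [if_neg hnp]
  -- units on the pair-blocks
  have hpairU : ∀ b, ¬ Even b →
      IsUnit (mrestr mU (Finset.Ico (t b) (t (b+2))) (Finset.Ico (t b) (t (b+2)))) := by
    intro b hb
    apply isUnit_restr_union mU (t b) (t (b+1)) (t (b+2))
      (htmono.monotone (Nat.le_succ b)) (htmono.monotone (Nat.le_succ (b+1)))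
    show IsUnit (Matrix.fromBlocks
      (mrestr mU (blkF t b) (blkF t b)) (mrestr mU (blkF t b) (blkF t (b+1)))
      (mrestr mU (blkF t (b+1)) (blkF t b)) (mrestr mU (blkF t (b+1)) (blkF t (b+1))))
    have hc1 : mrestr mU (blkF t b) (blkF t (b+1)) = Cm b := by
      funext x y
      show mU ↑x ↑y = Cm b x y
      rw [hcrossU x.2 y.2 (by omega)]
      simp only [hCmdef]
      rfl
    have hc2 : mrestr mU (blkF t (b+1)) (blkF t b) = Dm b := by
      funext x y
      show mU ↑x ↑y = Dm b x y
      rw [hcrossU x.2 y.2 (by omega)]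
      simp only [hDmdef]
      rfl
    rw [hrestU b, hrestU (b+1), hc1, hc2]
    have hpb := hXpair b
    rw [if_neg hb] at hpb
    exact hpb
  have hpairV : ∀ b, Even b →
      IsUnit (mrestr mV (Finset.Ico (t b) (t (b+2))) (Finset.Ico (t b) (t (b+2)))) := by
    intro b hb
    apply isUnit_restr_union mV (t b) (t (b+1)) (t (b+2))
      (htmono.monotone (Nat.le_succ b)) (htmono.monotone (Nat.le_succ (b+1)))
    show IsUnit (Matrix.fromBlocks
      (mrestr mV (blkF t b) (blkF t b)) (mrestr mV (blkF t b) (blkF t (b+1)))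
      (mrestr mV (blkF t (b+1)) (blkF t b)) (mrestr mV (blkF t (b+1)) (blkF t (b+1))))
    have hc1 : mrestr mV (blkF t b) (blkF t (b+1)) = Cm b := by
      funext x y
      show mV ↑x ↑y = Cm b x y
      rw [hcrossV x.2 y.2 (by omega)]
      simp only [hCmdef]
      rfl
    have hc2 : mrestr mV (blkF t (b+1)) (blkF t b) = Dm b := by
      funext x y
      show mV ↑x ↑y = Dm b x y
      rw [hcrossV x.2 y.2 (by omega)]
      simp only [hDmdef]
      rfl
    rw [hrestV b, hrestV (b+1), hc1, hc2]
    have hpb := hXpair b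
    rw [if_pos hb] at hpb
    exact hpb
  -- units on every s₁ resp. s₂ block
  have hU : ∀ k, IsUnit (mrestr mU (blkF s₁ k) (blkF s₁ k)) := by
    intro k
    cases k with
    | zero =>
      refine isUnit_mrestr_congr (P := blkF t 0) ?_ ?_
      · simp only [blkF, hs₁]
      · rw [hrestU 0, hX0]; exact hX₀u
    | succ k' =>
      refine isUnit_mrestr_congr (P := Finset.Ico (t (2*k'+1)) (t (2*k'+1+2))) ?_
        (hpairU (2*k'+1) ?_)
      · simp only [blkF, hs₁]
        rw [show 2*(k'+1)-1 = 2*k'+1 by omega, show 2*(k'+1+1)-1 = 2*k'+1+2 by omega]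
      · intro he
        obtain ⟨r, hr⟩ := he
        omega
  have hV : ∀ k, IsUnit (mrestr mV (blkF s₂ k) (blkF s₂ k)) := by
    intro k
    refine isUnit_mrestr_congr (P := Finset.Ico (t (2*k)) (t (2*k+2))) ?_
      (hpairV (2*k) ⟨k, by omega⟩)
    simp only [blkF, hs₂]
    rw [show 2*(k+1) = 2*k+2 by omega]
  obtain ⟨u₁, hu₁⟩ := bd_unit s₁ hs₁m hs₁0 mU hU
  obtain ⟨u₂, hu₂⟩ := bd_unit s₂ hs₂m hs₂0 mV hV
  refine ⟨u₁, u₂, ?_⟩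
  have hsum : Φ = toEnd (bCol s₁ mU) + toEnd (bCol s₂ mV) := by
    apply end_ext
    intro j
    rw [LinearMap.add_apply, toEnd_eb, toEnd_eb]
    ext i
    rw [Finsupp.add_apply, bCol_apply, bCol_apply]
    have hami : Φ (eb R j) i = am j i := by rw [ham]
    rw [hami]
    refine splitEntries t htmono ht0 am xg mU mV hP1 hP2 ?_ ?_ s₁ s₂ ?_ ?_ hs₁m hs₂m hs₁0 hs₂0 j i
    · intro a c; rw [hmU]
    · intro a c; rw [hmV]
    · intro K; rw [hs₁]
    · intro K; rw [hs₂]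
  refine Subtype.ext ?_
  show Φ = ((↑u₁ + ↑u₂ : BMatrix R) : Module.End R (ℕ →₀ R))
  rw [Subring.coe_add, hu₁, hu₂]
  exact hsum
end

section
/- For any ring R, the ring B(R) of all ω × ω row and column-finite matrices over R is 3-good: every element of B(R) is a sum of three units of B(R). -/
namespace Stmt13Aux

theorem key {S : Type*} [Ring S] (s t φ : S) (hs : s*s = 0) (ht : t*t = 0)
    (hst : s*t + t*s = 1) :
    ∃ u₁ v₁ u₂ v₂ u₃ v₃ : S, u₁*v₁ = 1 ∧ v₁*u₁ = 1 ∧ u₂*v₂ = 1 ∧ v₂*u₂ = 1 ∧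
      u₃*v₃ = 1 ∧ v₃*u₃ = 1 ∧ u₁ + u₂ + u₃ = φ := by
  have hts : t*s = 1 - s*t := by rw [← hst]; abel
  have h1 : ∀ x : S, s*(s*x) = 0 := fun x => by rw [← mul_assoc, hs, zero_mul]
  have h2 : ∀ x : S, t*(t*x) = 0 := fun x => by rw [← mul_assoc, ht, zero_mul]
  have h3 : ∀ x : S, t*(s*x) = x - s*(t*x) := fun x => by
    rw [← mul_assoc, hts, sub_mul, one_mul, mul_assoc]
  refine ⟨(s*t)*φ*(s*t) - s*t + s + t,
    s + t + t*s - t*φ*s,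
    -s - t + (t*s)*φ*(t*s) - ((t*s)*φ*(s*t))*((s*t)*φ*(t*s)) - t*s,
    -(s*φ*t) + s*φ*(s*t)*φ*t + s*t - s - t,
    1 + (s*t)*φ*(t*s) + (t*s)*φ*(s*t) + ((t*s)*φ*(s*t))*((s*t)*φ*(t*s)),
    1 + ((s*t)*φ*(t*s))*((t*s)*φ*(s*t)) - (s*t)*φ*(t*s) - (t*s)*φ*(s*t),
    ?_, ?_, ?_, ?_, ?_, ?_, ?_⟩ <;>
  · simp only [mul_add, add_mul, mul_sub, sub_mul, mul_one, one_mul, mul_neg, neg_mul,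
      neg_neg, mul_assoc, hs, ht, hts, h1, h2, h3, mul_zero, zero_mul, sub_zero, zero_sub,
      add_zero, zero_add, neg_zero, sub_self]
    abel

variable {R : Type*} [Ring R]

noncomputable def qq (j : ℕ) : Module.End R (ℕ →₀ R) :=
  Finsupp.lmapDomain R R (fun n => 2*n + j)

noncomputable def pp (j : ℕ) : Module.End R (ℕ →₀ R) :=
  Finsupp.lcomapDomain (fun n => 2*n + j) (fun a b h => by simp only [] at h; omega)

lemma qq_apply_eq (j n : ℕ) (x : ℕ →₀ R) : qq (R:=R) j x (2*n+j) = x n :=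
  Finsupp.mapDomain_apply (f := fun n => 2*n + j)
    (fun a b h => by simp only [] at h; omega) x n

lemma qq_apply_ne (j m : ℕ) (h : ∀ n, 2*n + j ≠ m) (x : ℕ →₀ R) : qq (R:=R) j x m = 0 :=
  Finsupp.mapDomain_notin_range _ _ (by rintro ⟨n, rfl⟩; exact h n rfl)

lemma pp_apply (j n : ℕ) (x : ℕ →₀ R) : pp (R:=R) j x n = x (2*n+j) := rfl

lemma pq_same (j : ℕ) : pp (R:=R) j * qq j = 1 := by
  apply LinearMap.ext; intro x
  apply Finsupp.ext; intro n
  rw [Module.End.mul_apply, pp_apply, qq_apply_eq]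
  rfl

lemma pq_ne (j k : ℕ) (h : ∀ n m, 2*n + j ≠ 2*m + k) : pp (R:=R) j * qq k = 0 := by
  apply LinearMap.ext; intro x
  apply Finsupp.ext; intro n
  rw [Module.End.mul_apply, pp_apply, qq_apply_ne k _ (fun m => (h n m ∘ Eq.symm))]
  rfl

lemma qp_total : qq (R:=R) 0 * pp 0 + qq 1 * pp 1 = 1 := by
  apply LinearMap.ext; intro x
  apply Finsupp.ext; intro m
  rw [LinearMap.add_apply, Finsupp.add_apply]
  rcases Nat.even_or_odd m with ⟨n, hn⟩ | ⟨n, hn⟩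
  · have hm : m = 2*n + 0 := by omega
    subst hm
    rw [Module.End.mul_apply, Module.End.mul_apply, qq_apply_eq, qq_apply_ne 1 _ (by omega),
      pp_apply, Module.End.one_apply, add_zero]
  · have hm : m = 2*n + 1 := by omega
    subst hm
    rw [Module.End.mul_apply, Module.End.mul_apply, qq_apply_eq, qq_apply_ne 0 _ (by omega),
      pp_apply, Module.End.one_apply, zero_add]

lemma sE_sq : (qq (R:=R) 0 * pp 1) * (qq 0 * pp 1) = 0 := by
  rw [mul_assoc, ← mul_assoc (pp 1), pq_ne 1 0 (by omega), zero_mul, mul_zero]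

lemma tE_sq : (qq (R:=R) 1 * pp 0) * (qq 1 * pp 0) = 0 := by
  rw [mul_assoc, ← mul_assoc (pp 0), pq_ne 0 1 (by omega), zero_mul, mul_zero]

lemma stts : (qq (R:=R) 0 * pp 1) * (qq 1 * pp 0) + (qq 1 * pp 0) * (qq 0 * pp 1) = 1 := by
  rw [mul_assoc, ← mul_assoc (pp 1), pq_same, one_mul,
      mul_assoc, ← mul_assoc (pp 0), pq_same, one_mul, qp_total]

lemma qp_mem (a b : ℕ) (hb : b ≤ 1) : qq (R:=R) a * pp b ∈ BMatrix R := by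
  intro k
  refine ⟨2*k + 2, fun x hx i hi => ?_⟩
  rw [Module.End.mul_apply]
  by_cases h : ∃ n, 2*n + a = i
  · obtain ⟨n, rfl⟩ := h
    rw [qq_apply_eq, pp_apply]
    exact hx _ (by omega)
  · exact qq_apply_ne a i (fun n hn => h ⟨n, hn⟩) _

end Stmt13Aux

set_option synthInstance.maxHeartbeats 1000000 in
/-- for any ring `R`, the ring `B(R)` of all `ω × ω` row and column-finite
matrices over `R` is 3-good: every element is a sum of three units of `B(R)`. -/
theorem stmt_13 {R : Type*} [Ring R] (φ : BMatrix R) :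
    ∃ ψ₁ ψ₂ ψ₃ : (BMatrix R)ˣ, φ = ψ₁ + ψ₂ + ψ₃ := by
  classical
  open Stmt13Aux in
  let s : BMatrix R := ⟨qq 0 * pp 1, qp_mem 0 1 le_rfl⟩
  let t : BMatrix R := ⟨qq 1 * pp 0, qp_mem 1 0 (by norm_num)⟩
  have hs : s * s = 0 := Subtype.ext (Stmt13Aux.sE_sq)
  have ht : t * t = 0 := Subtype.ext (Stmt13Aux.tE_sq)
  have hst : s * t + t * s = 1 := Subtype.ext (Stmt13Aux.stts)
  obtain ⟨u₁, v₁, u₂, v₂, u₃, v₃, h₁, h₂, h₃, h₄, h₅, h₆, hsum⟩ :=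
    Stmt13Aux.key s t φ hs ht hst
  exact ⟨⟨u₁, v₁, h₁, h₂⟩, ⟨u₂, v₂, h₃, h₄⟩, ⟨u₃, v₃, h₅, h₆⟩, hsum.symm⟩
end

section
/- Let R be a local ring (i.e., R/J(R) is a division ring) and let Cₙ be a cyclic group of order n ≥ 1. If the characteristic of R/J(R) is not 2, then the group ring RCₙ is 2-good: every element of RCₙ is a sum of two units of RCₙ. -/
/-! Auxiliary development: every ring which is a finite-length module over itself and in which
2 is a unit is 2-good; lifting 2-goodness along surjections with "Jacobson-like" kernels;
noncommutative local ring facts. -/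

section Units

/-- If `a` has a left inverse and a right inverse, it is a unit. -/
theorem isUnit_of_left_right {S : Type*} [Monoid S] {a l r : S}
    (hl : l * a = 1) (hr : a * r = 1) : IsUnit a := by
  have hlr : l = r := by
    rw [← one_mul r, ← hl, mul_assoc, hr, mul_one]
  exact ⟨⟨a, r, hr, by rw [← hlr, hl]⟩, rfl⟩

end Units

section Nak

variable {R : Type*} [Ring R] {M : Type*} [AddCommGroup M] [Module R M]

/-- `J • N` for a two-sided ideal `J`, defined by hand to avoid commutativity assumptions. -/
def jsmul (J : TwoSidedIdeal R) (N : Submodule R M) : Submodule R M :=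
  Submodule.span R {x | ∃ c ∈ J, ∃ m ∈ N, x = c • m}

lemma smul_mem_jsmul (J : TwoSidedIdeal R) (N : Submodule R M) {c : R} (hc : c ∈ J)
    {m : M} (hm : m ∈ N) : c • m ∈ jsmul J N :=
  Submodule.subset_span ⟨c, hc, m, hm, rfl⟩

lemma jsmul_le (J : TwoSidedIdeal R) (N : Submodule R M) : jsmul J N ≤ N := by
  rw [jsmul, Submodule.span_le]
  rintro x ⟨c, hc, m, hm, rfl⟩
  exact N.smul_mem c hm

lemma jsmul_mono (J : TwoSidedIdeal R) {N N' : Submodule R M} (h : N ≤ N') :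
    jsmul J N ≤ jsmul J N' :=
  Submodule.span_mono (by rintro x ⟨c, hc, m, hm, rfl⟩; exact ⟨c, hc, m, h hm, rfl⟩)

lemma jsmul_sup_le (J : TwoSidedIdeal R) (N₁ N₂ : Submodule R M) :
    jsmul J (N₁ ⊔ N₂) ≤ jsmul J N₁ ⊔ jsmul J N₂ := by
  rw [jsmul, Submodule.span_le]
  rintro x ⟨c, hc, m, hm, rfl⟩
  obtain ⟨m₁, h₁, m₂, h₂, rfl⟩ := Submodule.mem_sup.mp hm
  rw [smul_add]
  exact Submodule.add_mem_sup (smul_mem_jsmul J N₁ hc h₁) (smul_mem_jsmul J N₂ hc h₂)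

lemma jsmul_span_singleton (J : TwoSidedIdeal R) (a : M) {x : M}
    (hx : x ∈ jsmul J (Submodule.span R {a})) : ∃ c ∈ J, x = c • a := by
  let D : Submodule R M :=
    { carrier := {x | ∃ c ∈ J, x = c • a}
      add_mem' := by
        rintro x y ⟨c, hc, rfl⟩ ⟨d, hd, rfl⟩
        exact ⟨c + d, J.add_mem hc hd, (add_smul c d a).symm⟩
      zero_mem' := ⟨0, J.zero_mem, (zero_smul R a).symm⟩
      smul_mem' := by
        rintro r x ⟨c, hc, rfl⟩
        exact ⟨r * c, J.mul_mem_left r c hc, (mul_smul r c a).symm⟩ }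
  have hD : jsmul J (Submodule.span R {a}) ≤ D := by
    rw [jsmul, Submodule.span_le]
    rintro x ⟨c, hc, m, hm, rfl⟩
    obtain ⟨r, rfl⟩ := Submodule.mem_span_singleton.mp hm
    exact ⟨c * r, J.mul_mem_right c r hc, (mul_smul c r a).symm⟩
  exact hD hx

/-- Nakayama's lemma, by hand, for two-sided ideals consisting of quasi-regular elements. -/
lemma nak (J : TwoSidedIdeal R) (hJ : ∀ c ∈ J, IsUnit ((1 : R) - c)) (s : Finset M)
    (h : Submodule.span R (s : Set M) ≤ jsmul J (Submodule.span R (s : Set M))) :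
    Submodule.span R (s : Set M) = ⊥ := by
  classical
  induction s using Finset.induction_on with
  | empty => simp
  | @insert a t hat ih =>
    rw [Finset.coe_insert] at h ⊢
    have hmem : a ∈ Submodule.span R (insert a (t : Set M)) :=
      Submodule.subset_span (Set.mem_insert a _)
    have h1 := h hmem
    rw [Submodule.span_insert] at h1
    have h2 := jsmul_sup_le J _ _ h1
    obtain ⟨z₁, hz₁, z₂, hz₂, hz⟩ := Submodule.mem_sup.mp h2
    obtain ⟨c, hc, rfl⟩ := jsmul_span_singleton J a hz₁
    have key : (1 - c) • a = z₂ := by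
      rw [sub_smul, one_smul]; exact sub_eq_of_eq_add' hz.symm
    have hu := hJ c hc
    have hinv : (↑hu.unit⁻¹ : R) * (1 - c) = 1 := by
      have := hu.unit.inv_mul
      rwa [hu.unit_spec] at this
    have ha2 : a ∈ jsmul J (Submodule.span R (t : Set M)) := by
      have : a = (↑hu.unit⁻¹ : R) • ((1 - c) • a) := by
        rw [smul_smul, hinv, one_smul]
      rw [this, key]
      exact Submodule.smul_mem _ _ hz₂
    have ha3 : a ∈ Submodule.span R (t : Set M) := jsmul_le J _ ha2
    rw [Submodule.span_insert_eq_span ha3] at h ⊢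
    exact ih h

end Nak

section Endo

open LinearMap

variable {T : Type*} [Ring T] {M : Type*} [AddCommGroup M] [Module T M]

/-- Multiplication by a central unit, as a linear automorphism. -/
def centralUnitEquiv (u : Tˣ) (hc : ∀ t : T, Commute (↑u) t) : M ≃ₗ[T] M where
  toFun x := (u : T) • x
  invFun x := (↑u⁻¹ : T) • x
  map_add' := smul_add _
  map_smul' t x := by
    simp only [RingHom.id_apply, smul_smul, (hc t).eq]
  left_inv x := by
    show (↑u⁻¹ : T) • (u : T) • x = x
    rw [smul_smul, Units.inv_mul, one_smul]
  right_inv x := by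
    show (u : T) • (↑u⁻¹ : T) • x = x
    rw [smul_smul, Units.mul_inv, one_smul]

@[simp] lemma centralUnitEquiv_apply (u : Tˣ) (hc : ∀ t : T, Commute (↑u) t) (x : M) :
    centralUnitEquiv u hc x = (u : T) • x := rfl

@[simp] lemma centralUnitEquiv_symm_apply (u : Tˣ) (hc : ∀ t : T, Commute (↑u) t) (x : M) :
    (centralUnitEquiv (M := M) u hc).symm x = (↑u⁻¹ : T) • x := rfl

theorem end_sum_two_units [IsNoetherian T M] [IsArtinian T M]
    (h2 : IsUnit (2 : T)) (f : Module.End T M) :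
    ∃ u v : (Module.End T M)ˣ, f = ↑u + ↑v := by
  obtain ⟨n₁, hn₁⟩ := Filter.eventually_atTop.mp f.eventually_isCompl_ker_pow_range_pow
  obtain ⟨n₂, hn₂⟩ := IsArtinian.monotone_stabilizes f.iterateRange
  set K := LinearMap.ker (f ^ (n₁ + n₂ + 1)) with hK
  set I := LinearMap.range (f ^ (n₁ + n₂ + 1)) with hI
  have hcompl : IsCompl K I := hn₁ (n₁ + n₂ + 1) (by omega)
  have hrange : LinearMap.range (f ^ (n₁ + n₂ + 1 + 1)) = I := by
    have ha := hn₂ (n₁ + n₂ + 1 + 1) (by omega)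
    have hb := hn₂ (n₁ + n₂ + 1) (by omega)
    exact (ha.symm.trans hb : f.iterateRange (n₁ + n₂ + 1 + 1) = f.iterateRange (n₁ + n₂ + 1))
  have hfK : ∀ x ∈ K, f x ∈ K := by
    intro x hx
    rw [hK, LinearMap.mem_ker] at hx ⊢
    have hcomm : (f ^ (n₁ + n₂ + 1)) (f x) = f ((f ^ (n₁ + n₂ + 1)) x) := by
      rw [← Module.End.mul_apply, ← Module.End.mul_apply, ← pow_succ, ← pow_succ']
    rw [hcomm, hx, map_zero]
  have hfI : ∀ x ∈ I, f x ∈ I := by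
    intro x hx
    rw [hI, LinearMap.mem_range] at hx ⊢
    obtain ⟨y, rfl⟩ := hx
    exact ⟨f y, by rw [← Module.End.mul_apply, ← pow_succ, pow_succ', Module.End.mul_apply]⟩
  set fK := f.restrict hfK with hfKdef
  set fI := f.restrict hfI with hfIdef
  have hnilp : fK ^ (n₁ + n₂ + 1) = 0 := by
    apply LinearMap.ext
    intro x
    apply Subtype.ext
    rw [hfKdef, Module.End.pow_restrict]
    simpa [LinearMap.restrict_apply] using x.2
  have hbij : Function.Bijective fI := by
    constructor
    · intro x y hxy
      apply Subtype.ext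
      have hfeq : f ↑x = f ↑y := by
        have := congrArg Subtype.val hxy
        rwa [hfIdef, LinearMap.restrict_coe_apply, LinearMap.restrict_coe_apply] at this
      have hkerK : (↑x - ↑y : M) ∈ K := by
        rw [hK, LinearMap.mem_ker, pow_succ, Module.End.mul_apply, map_sub, hfeq, sub_self,
          map_zero]
      have hmemI : (↑x - ↑y : M) ∈ I := sub_mem x.2 y.2
      have hbot := hcompl.disjoint.le_bot (Submodule.mem_inf.mpr ⟨hkerK, hmemI⟩)
      rw [Submodule.mem_bot, sub_eq_zero] at hbot
      exact hbot
    · rintro ⟨y, hy⟩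
      have hy' : y ∈ LinearMap.range (f ^ (n₁ + n₂ + 1 + 1)) := by rw [hrange]; exact hy
      obtain ⟨z, hz⟩ := hy'
      refine ⟨⟨(f ^ (n₁ + n₂ + 1)) z, LinearMap.mem_range_self _ z⟩, ?_⟩
      apply Subtype.ext
      rw [hfIdef, LinearMap.restrict_coe_apply]
      show f ((f ^ (n₁ + n₂ + 1)) z) = y
      rw [← Module.End.mul_apply, ← pow_succ']
      exact hz
  have hKunit : IsUnit (fK - 1) := IsNilpotent.isUnit_sub_one ⟨n₁ + n₂ + 1, hnilp⟩
  let gK : K ≃ₗ[T] K := LinearEquiv.ofBijective (fK - 1) ((Module.End.isUnit_iff _).mp hKunit)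
  let eFI : I ≃ₗ[T] I := LinearEquiv.ofBijective fI hbij
  have hcomm2 : ∀ t : T, Commute (↑h2.unit) t := by
    intro t
    rw [h2.unit_spec]
    have h22 : Commute ((2 : ℕ) : T) t := Nat.cast_commute 2 t
    simpa using h22
  let twoK : K ≃ₗ[T] K := centralUnitEquiv h2.unit hcomm2
  let halfM : M ≃ₗ[T] M := (centralUnitEquiv h2.unit hcomm2).symm
  let P := Submodule.prodEquivOfIsCompl K I hcompl
  let EU : M ≃ₗ[T] M := P.symm.trans (((gK.trans twoK).prodCongr eFI).trans P)
  let EV : M ≃ₗ[T] M := P.symm.trans ((twoK.prodCongr eFI).trans P)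
  let Ufin := EU.trans halfM
  let Vfin := EV.trans halfM
  have hsum : f = Ufin.toLinearMap + Vfin.toLinearMap := by
    apply LinearMap.ext
    intro x
    set p := P.symm x with hp
    have hxp : (↑p.1 : M) + ↑p.2 = x := by
      have h0 : P p = x := by rw [hp]; exact P.apply_symm_apply x
      rw [← h0]
      exact (Submodule.coe_prodEquivOfIsCompl' K I hcompl p) -- maybe direction
    have hc1 : (↑(gK p.1) : M) = f ↑p.1 - ↑p.1 := by
      show (↑((fK - 1) p.1) : M) = _
      rw [LinearMap.sub_apply, Module.End.one_apply, AddSubgroupClass.coe_sub,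
        hfKdef, LinearMap.restrict_coe_apply]
    have hc2 : (↑(eFI p.2) : M) = f ↑p.2 := by
      show (↑(fI p.2) : M) = _
      rw [hfIdef, LinearMap.restrict_coe_apply]
    have hEU : EU x = (2 : T) • (f ↑p.1 - ↑p.1) + f ↑p.2 := by
      show P (((gK.trans twoK).prodCongr eFI) p) = _
      rw [LinearEquiv.prodCongr_apply, Submodule.coe_prodEquivOfIsCompl']
      rw [LinearEquiv.trans_apply]
      rw [show (twoK (gK p.1)) = (↑h2.unit : T) • (gK p.1) from rfl]
      rw [Submodule.coe_smul, hc1, hc2, h2.unit_spec]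
    have hEV : EV x = (2 : T) • (↑p.1 : M) + f ↑p.2 := by
      show P ((twoK.prodCongr eFI) p) = _
      rw [LinearEquiv.prodCongr_apply, Submodule.coe_prodEquivOfIsCompl']
      rw [show (twoK p.1) = (↑h2.unit : T) • p.1 from rfl]
      rw [Submodule.coe_smul, hc2, h2.unit_spec]
    have hhalf : ∀ m : M, halfM m = (↑h2.unit⁻¹ : T) • m := fun m => rfl
    show f x = Ufin x + Vfin x
    rw [show Ufin x = halfM (EU x) from rfl, show Vfin x = halfM (EV x) from rfl,
      hhalf, hhalf, ← smul_add, hEU, hEV]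
    have hcollect : (2 : T) • (f ↑p.1 - ↑p.1) + f ↑p.2 + ((2 : T) • (↑p.1 : M) + f ↑p.2)
        = (2 : T) • f x := by
      rw [← hxp, map_add, smul_sub, smul_add]
      rw [two_smul, two_smul, two_smul]
      abel
    rw [hcollect, smul_smul]
    have hinv : (↑h2.unit⁻¹ : T) * 2 = 1 := by
      have := h2.unit.inv_mul
      rwa [h2.unit_spec] at this
    rw [hinv, one_smul]
  refine ⟨((Module.End.isUnit_iff Ufin.toLinearMap).mpr Ufin.bijective).unit,
    ((Module.End.isUnit_iff Vfin.toLinearMap).mpr Vfin.bijective).unit, ?_⟩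
  rw [IsUnit.unit_spec, IsUnit.unit_spec]
  exact hsum

theorem ring_sum_two_units {T : Type*} [Ring T] [IsNoetherian T T] [IsArtinian T T]
    (h2 : IsUnit (2 : T)) (a : T) : ∃ u v : Tˣ, a = ↑u + ↑v := by
  obtain ⟨U, V, hUV⟩ := end_sum_two_units h2 ((RingEquiv.moduleEndSelf T) (MulOpposite.op a))
  have h1 : MulOpposite.op a = (RingEquiv.moduleEndSelf T).symm ↑U + (RingEquiv.moduleEndSelf T).symm ↑V := by
    rw [← map_add, ← hUV, RingEquiv.symm_apply_apply]
  have hu : IsUnit ((RingEquiv.moduleEndSelf T).symm (↑U : Module.End T T)) :=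
    U.isUnit.map (RingEquiv.moduleEndSelf T).symm
  have hv : IsUnit ((RingEquiv.moduleEndSelf T).symm (↑V : Module.End T T)) :=
    V.isUnit.map (RingEquiv.moduleEndSelf T).symm
  have ha : a = MulOpposite.unop ((RingEquiv.moduleEndSelf T).symm ↑U)
      + MulOpposite.unop ((RingEquiv.moduleEndSelf T).symm ↑V) := by
    rw [← MulOpposite.unop_op a, h1]; rfl
  exact ⟨(hu.unop).unit, (hv.unop).unit, by
    rw [IsUnit.unit_spec, IsUnit.unit_spec]; exact ha⟩

end Endo


section LocalFacts

variable {R : Type*} [Ring R] [IsLocalRing R]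

theorem isUnit_of_leftInv {w a : R} (h : w * a = 1) : IsUnit a := by
  have he : a * w + (1 - a * w) = 1 := by abel
  rcases IsLocalRing.isUnit_or_isUnit_of_add_one he with hu | hu
  · have hr : a * (w * ↑hu.unit⁻¹) = 1 := by
      have hthis := hu.unit.mul_inv
      rw [hu.unit_spec] at hthis
      rw [← mul_assoc]
      exact hthis
    exact isUnit_of_left_right h hr
  · have h0 : (1 - a * w) * a = 0 := by
      rw [sub_mul, one_mul, mul_assoc, h, mul_one, sub_self]
    have hinv : (↑hu.unit⁻¹ : R) * (1 - a * w) = 1 := by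
      have := hu.unit.inv_mul; rwa [hu.unit_spec] at this
    have ha : a = 0 := by
      calc a = ((↑hu.unit⁻¹ : R) * (1 - a * w)) * a := by rw [hinv, one_mul]
        _ = (↑hu.unit⁻¹ : R) * ((1 - a * w) * a) := by rw [mul_assoc]
        _ = 0 := by rw [h0, mul_zero]
    rw [ha, mul_zero] at h
    exact absurd h zero_ne_one

theorem isUnit_of_rightInv {w a : R} (h : a * w = 1) : IsUnit a := by
  have hw := isUnit_of_leftInv h
  have h1 : a * (↑hw.unit * ↑hw.unit⁻¹) = a := by rw [hw.unit.mul_inv, mul_one]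
  rw [hw.unit_spec] at h1
  rw [← mul_assoc, h, one_mul] at h1
  rw [← h1]
  exact hw.unit⁻¹.isUnit

theorem not_isUnit_mul_left {a : R} (r : R) (ha : ¬ IsUnit a) : ¬ IsUnit (r * a) := by
  intro hu
  apply ha
  have hinv : (↑hu.unit⁻¹ : R) * (r * a) = 1 := by
    have := hu.unit.inv_mul; rwa [hu.unit_spec] at this
  rw [← mul_assoc] at hinv
  exact isUnit_of_leftInv hinv

theorem not_isUnit_mul_right {a : R} (r : R) (ha : ¬ IsUnit a) : ¬ IsUnit (a * r) := by
  intro hu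
  apply ha
  have hinv : (a * r) * (↑hu.unit⁻¹ : R) = 1 := by
    have := hu.unit.mul_inv; rwa [hu.unit_spec] at this
  rw [mul_assoc] at hinv
  exact isUnit_of_rightInv hinv

theorem mem_jacobson_of_not_isUnit {a : R} (ha : ¬ IsUnit a) :
    a ∈ (⊥ : TwoSidedIdeal R).jacobson := by
  rw [TwoSidedIdeal.mem_jacobson_iff]
  intro y
  have hya : ¬ IsUnit (y * a) := not_isUnit_mul_left y ha
  have hunit : IsUnit (y * a + 1) := by
    have he : (y * a + 1) + (-(y * a)) = 1 := by abel
    rcases IsLocalRing.isUnit_or_isUnit_of_add_one he with hu | hu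
    · exact hu
    · exact absurd (by simpa using hu) hya
  refine ⟨↑hunit.unit⁻¹, ?_⟩
  rw [TwoSidedIdeal.mem_bot]
  have hinv : ↑hunit.unit⁻¹ * (y * a + 1) = 1 := by
    have := hunit.unit.inv_mul; rwa [hunit.unit_spec] at this
  calc (↑hunit.unit⁻¹ : R) * y * a + ↑hunit.unit⁻¹ - 1
      = ↑hunit.unit⁻¹ * (y * a + 1) - 1 := by noncomm_ring
    _ = 0 := by rw [hinv, sub_self]

theorem not_isUnit_of_mem_jacobson {a : R} (h : a ∈ (⊥ : TwoSidedIdeal R).jacobson) :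
    ¬ IsUnit a := by
  intro hu
  rw [TwoSidedIdeal.mem_jacobson_iff] at h
  obtain ⟨z, hz⟩ := h (-(↑hu.unit⁻¹))
  rw [TwoSidedIdeal.mem_bot] at hz
  have hmul : (-(↑hu.unit⁻¹ : R)) * a = -1 := by
    have := hu.unit.inv_mul; rw [hu.unit_spec] at this; rw [neg_mul, this]
  rw [mul_assoc, hmul, mul_neg_one] at hz
  have h1 : (-1 : R) = 0 := by rw [← hz]; abel
  exact one_ne_zero (neg_eq_zero.mp h1)

theorem jac_quasi {c : R} (hc : c ∈ (⊥ : TwoSidedIdeal R).jacobson) : IsUnit ((1 : R) - c) := by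
  have he : c + (1 - c) = 1 := by abel
  rcases IsLocalRing.isUnit_or_isUnit_of_add_one he with hu | hu
  · exact absurd hu (not_isUnit_of_mem_jacobson hc)
  · exact hu

end LocalFacts

section MonAlg

variable {R : Type*} [Ring R] {G : Type*} [Monoid G]

theorem finsupp_decomp (x : MonoidAlgebra R G) :
    x = ∑ g ∈ x.coeff.support, (x.coeff g) • (MonoidAlgebra.single g (1 : R)) := by
  conv_lhs => rw [← MonoidAlgebra.sum_coeff_single x]
  rw [Finsupp.sum]
  refine Finset.sum_congr rfl fun g _ => ?_
  rw [MonoidAlgebra.smul_single, smul_eq_mul, mul_one]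

theorem mul_coeff_mem (J : TwoSidedIdeal R) (x i : MonoidAlgebra R G)
    (hi : ∀ g : G, i.coeff g ∈ J) (g : G) : (x * i).coeff g ∈ J := by
  classical
  rw [MonoidAlgebra.mul_apply]
  rw [Finsupp.sum]
  refine sum_mem fun a _ => ?_
  rw [Finsupp.sum]
  refine sum_mem fun b _ => ?_
  split_ifs
  · exact J.mul_mem_left _ _ (hi b)
  · exact J.zero_mem

theorem monalg_left_inv {J : TwoSidedIdeal R} (hJ : ∀ c ∈ J, IsUnit ((1 : R) - c)) [Fintype G]
    (i : MonoidAlgebra R G) (hi : ∀ g, i.coeff g ∈ J) :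
    ∃ v, v * ((1 : MonoidAlgebra R G) - i) = 1 := by
  classical
  let ρ : MonoidAlgebra R G →ₗ[R] MonoidAlgebra R G :=
    { toFun := fun x => x * (1 - i)
      map_add' := fun x y => add_mul x y _
      map_smul' := fun r x => smul_mul_assoc r x _ }
  set N := LinearMap.range ρ with hN
  have hxi : ∀ x : MonoidAlgebra R G, N.mkQ x = N.mkQ (x * i) := by
    intro x
    have hd : x - x * i = ρ x := by
      show _ = x * (1 - i); rw [mul_sub, mul_one]
    have hmem : x - x * i ∈ N := hd ▸ LinearMap.mem_range_self ρ x
    rw [Submodule.mkQ_apply, Submodule.mkQ_apply]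
    exact (Submodule.Quotient.eq N).mpr hmem
  have hJmem : ∀ x : MonoidAlgebra R G,
      N.mkQ x ∈ jsmul J (⊤ : Submodule R (MonoidAlgebra R G ⧸ N)) := by
    intro x
    rw [hxi x, finsupp_decomp (x * i), map_sum]
    refine sum_mem fun g _ => ?_
    rw [map_smul]
    exact smul_mem_jsmul J ⊤ (mul_coeff_mem J x i hi g) Submodule.mem_top
  set s : Finset (MonoidAlgebra R G ⧸ N) :=
    Finset.image (fun g : G => N.mkQ (MonoidAlgebra.single g (1 : R))) Finset.univ with hs
  have hspan : Submodule.span R (s : Set (MonoidAlgebra R G ⧸ N)) = ⊤ := by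
    rw [eq_top_iff]
    rintro y -
    obtain ⟨x, rfl⟩ := N.mkQ_surjective y
    rw [finsupp_decomp x, map_sum]
    refine sum_mem fun g _ => ?_
    rw [map_smul]
    refine Submodule.smul_mem _ _ (Submodule.subset_span ?_)
    rw [hs]
    simp only [Finset.coe_image, Set.mem_image, Finset.mem_coe]
    exact ⟨g, by simp, rfl⟩
  have hle : Submodule.span R (s : Set (MonoidAlgebra R G ⧸ N))
      ≤ jsmul J (Submodule.span R (s : Set (MonoidAlgebra R G ⧸ N))) := by
    rw [hspan]
    rintro y -
    obtain ⟨x, rfl⟩ := N.mkQ_surjective y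
    exact hJmem x
  have hbot := nak J hJ s hle
  rw [hspan] at hbot
  have h1 : (1 : MonoidAlgebra R G) ∈ N := by
    have hm : N.mkQ 1 ∈ (⊤ : Submodule R (MonoidAlgebra R G ⧸ N)) := Submodule.mem_top
    rw [hbot, Submodule.mem_bot] at hm
    rwa [Submodule.mkQ_apply, Submodule.Quotient.mk_eq_zero] at hm
  obtain ⟨v, hv⟩ := h1
  exact ⟨v, hv⟩

theorem monalg_isUnit_one_sub {J : TwoSidedIdeal R} (hJ : ∀ c ∈ J, IsUnit ((1 : R) - c))
    [Fintype G] (i : MonoidAlgebra R G) (hi : ∀ g, i.coeff g ∈ J) :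
    IsUnit ((1 : MonoidAlgebra R G) - i) := by
  obtain ⟨v, hv⟩ := monalg_left_inv hJ i hi
  have hv2 : v - v * i = 1 := by rw [← mul_one v, mul_assoc, one_mul, ← mul_sub]; exact hv
  have hv' : (1 : MonoidAlgebra R G) - -(v * i) = v := by
    rw [sub_neg_eq_add]
    exact (eq_add_of_sub_eq hv2).symm
  obtain ⟨w, hw⟩ := monalg_left_inv hJ (-(v * i)) (fun g => by
    have hm := mul_coeff_mem J v i hi g
    have hng : (-(v * i)).coeff g = -((v * i).coeff g) := rfl
    rw [hng]
    exact J.neg_mem hm)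
  rw [hv'] at hw
  have hwv : w = 1 - i := by
    calc w = w * (v * (1 - i)) := by rw [hv, mul_one]
      _ = (w * v) * (1 - i) := by rw [mul_assoc]
      _ = 1 - i := by rw [hw, one_mul]
  refine isUnit_of_left_right (l := v) (r := v) hv ?_
  rw [← hwv]
  exact hw

end MonAlg


section MapRange

variable {R Q : Type*} [Ring R] [Ring Q] {G : Type*} [Monoid G]

/-- Coefficientwise map on monoid algebras, as a bare function. -/
noncomputable def coeffFun (π : R →+* Q) (f : MonoidAlgebra R G) : MonoidAlgebra Q G :=
  MonoidAlgebra.ofCoeff (Finsupp.mapRange ⇑π (map_zero π) f.coeff)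

theorem coeffFun_zero (π : R →+* Q) : coeffFun (G := G) π 0 = 0 :=
  congrArg MonoidAlgebra.ofCoeff Finsupp.mapRange_zero

theorem coeffFun_add (π : R →+* Q) (f g : MonoidAlgebra R G) :
    coeffFun π (f + g) = coeffFun π f + coeffFun π g :=
  congrArg MonoidAlgebra.ofCoeff (Finsupp.mapRange_add (map_add π) f.coeff g.coeff)

theorem coeffFun_single (π : R →+* Q) (a : G) (b : R) :
    coeffFun π (MonoidAlgebra.single a b) = MonoidAlgebra.single a (π b) :=
  congrArg MonoidAlgebra.ofCoeff Finsupp.mapRange_single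

theorem coeffFun_mul (π : R →+* Q) (f g : MonoidAlgebra R G) :
    coeffFun π (f * g) = coeffFun π f * coeffFun π g := by
  induction f using MonoidAlgebra.induction_linear with
  | zero => rw [zero_mul, coeffFun_zero, zero_mul]
  | add f₁ f₂ h₁ h₂ => rw [add_mul, coeffFun_add, coeffFun_add, add_mul, h₁, h₂]
  | single a b =>
    induction g using MonoidAlgebra.induction_linear with
    | zero => rw [mul_zero, coeffFun_zero, mul_zero]
    | add g₁ g₂ h₁ h₂ => rw [mul_add, coeffFun_add, coeffFun_add, mul_add, h₁, h₂]
    | single c d =>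
      rw [MonoidAlgebra.single_mul_single, coeffFun_single, coeffFun_single, coeffFun_single,
        MonoidAlgebra.single_mul_single, map_mul]

/-- Coefficient-wise action of a ring hom on a monoid algebra. -/
noncomputable def coeffHom (π : R →+* Q) : MonoidAlgebra R G →+* MonoidAlgebra Q G where
  toFun := coeffFun π
  map_zero' := coeffFun_zero π
  map_add' := coeffFun_add π
  map_one' := by
    rw [MonoidAlgebra.one_def, coeffFun_single, map_one, MonoidAlgebra.one_def]
  map_mul' := coeffFun_mul π

theorem coeffHom_apply (π : R →+* Q) (f : MonoidAlgebra R G) (g : G) :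
    (coeffHom π f).coeff g = π (f.coeff g) := by
  have h : coeffHom (G := G) π f = coeffFun π f := rfl
  rw [h]
  exact Finsupp.mapRange_apply (hf := map_zero π)

theorem coeffHom_surjective (π : R →+* Q) (hπ : Function.Surjective π) :
    Function.Surjective (coeffHom (G := G) π) := by
  intro y
  obtain ⟨x, hx⟩ := Finsupp.mapRange_surjective (⇑π) (map_zero π) hπ y.coeff
  exact ⟨MonoidAlgebra.ofCoeff x, show coeffHom (G := G) π (MonoidAlgebra.ofCoeff x) = y from
    congrArg MonoidAlgebra.ofCoeff hx⟩

end MapRange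

/-- let `R` be a local ring (equivalently, `R/J(R)` is a division ring) and
`Cₙ` the cyclic group of order `n ≥ 1`.  If `char (R/J(R)) ≠ 2` (where `J(R)` is the Jacobson
radical, a two-sided ideal), then the group ring `RCₙ` is 2-good: every element is a sum of
two units. -/
theorem stmt_14 {R : Type*} [Ring R] [IsLocalRing R] (n : ℕ) (hn : 1 ≤ n)
    (hchar : ringChar ((⊥ : TwoSidedIdeal R).jacobson.ringCon.Quotient) ≠ 2) :
    ∀ a : MonoidAlgebra R (Multiplicative (ZMod n)),
      ∃ u₁ u₂ : (MonoidAlgebra R (Multiplicative (ZMod n)))ˣ,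
        a = (u₁ : MonoidAlgebra R (Multiplicative (ZMod n)))
          + (u₂ : MonoidAlgebra R (Multiplicative (ZMod n))) := by
  intro a
  haveI : NeZero n := ⟨by omega⟩
  set J := (⊥ : TwoSidedIdeal R).jacobson with hJdef
  set Q := J.ringCon.Quotient with hQdef
  let π : R →+* Q := J.ringCon.mk'
  have hπsurj : Function.Surjective π := fun q => Quotient.inductionOn' q (fun r => ⟨r, rfl⟩)
  have hker : ∀ r : R, π r = 0 ↔ r ∈ J := by
    intro r
    have h0 : (0 : Q) = ((0 : R) : Q) := rfl
    have hπr : π r = ((r : R) : Q) := rfl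
    rw [hπr, h0, RingCon.eq]
    exact (TwoSidedIdeal.rel_iff J r 0).trans (by rw [sub_zero])
  haveI hNontriv : Nontrivial Q := by
    refine ⟨⟨1, 0, fun h => ?_⟩⟩
    have h1 : (1 : R) ∈ J := (hker 1).mp (by rw [map_one]; exact h)
    exact (not_isUnit_of_mem_jacobson h1) isUnit_one
  have h2R : IsUnit (2 : R) := by
    by_contra h2
    have h2J : (2 : R) ∈ J := mem_jacobson_of_not_isUnit h2
    have h20 : ((2 : ℕ) : Q) = 0 := by
      have hp2 : π 2 = 0 := (hker 2).mpr h2J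
      rw [map_ofNat] at hp2
      rw [Nat.cast_ofNat]
      exact hp2
    have hdvd : ringChar Q ∣ 2 := ringChar.dvd h20
    rcases (Nat.prime_two.eq_one_or_self_of_dvd _ hdvd) with h1 | h2'
    · exact absurd h1 CharP.ringChar_ne_one
    · exact hchar h2'
  have hdiv : ∀ x : Q, IsUnit x ∨ x = 0 := by
    intro x
    obtain ⟨r, rfl⟩ := hπsurj x
    by_cases hr : r ∈ J
    · right; exact (hker r).mpr hr
    · left
      have hru : IsUnit r := by
        by_contra hnr
        exact hr (mem_jacobson_of_not_isUnit hnr)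
      exact hru.map π
  letI : DivisionRing Q := DivisionRing.ofIsUnitOrEqZero hdiv
  let φ : MonoidAlgebra R (Multiplicative (ZMod n)) →+* MonoidAlgebra Q (Multiplicative (ZMod n)) := coeffHom π
  have hφsurj : Function.Surjective φ := coeffHom_surjective π hπsurj
  have hJq : ∀ c ∈ J, IsUnit ((1 : R) - c) := fun c hc => jac_quasi hc
  have hlift : ∀ x : MonoidAlgebra R (Multiplicative (ZMod n)), IsUnit (φ x) → IsUnit x := by
    intro x hx
    obtain ⟨t, ht⟩ := hφsurj (↑hx.unit⁻¹)
    have hxt : φ (x * t) = 1 := by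
      rw [map_mul, ht]
      have h' := hx.unit.mul_inv
      rwa [hx.unit_spec] at h'
    have htx : φ (t * x) = 1 := by
      rw [map_mul, ht]
      have h' := hx.unit.inv_mul
      rwa [hx.unit_spec] at h'
    have hmem : ∀ y : MonoidAlgebra R (Multiplicative (ZMod n)), φ y = 1 → IsUnit y := by
      intro y hy
      have hy0 : φ (1 - y) = 0 := by rw [map_sub, hy, map_one, sub_self]
      have hcoef : ∀ g : Multiplicative (ZMod n), ((1 : MonoidAlgebra R (Multiplicative (ZMod n))) - y).coeff g ∈ J := by
        intro g
        apply (hker _).mp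
        have h0 : (φ (1 - y)).coeff g = 0 := by rw [hy0]; rfl
        rwa [coeffHom_apply] at h0
      have hone : IsUnit (1 - (1 - y)) := monalg_isUnit_one_sub hJq _ hcoef
      rwa [sub_sub_cancel] at hone
    have hu1 := hmem _ hxt
    have hu2 := hmem _ htx
    have hr : x * (t * ↑hu1.unit⁻¹) = 1 := by
      rw [← mul_assoc]
      have := hu1.unit.mul_inv; rwa [hu1.unit_spec] at this
    have hl : (↑hu2.unit⁻¹ * t) * x = 1 := by
      rw [mul_assoc]
      have := hu2.unit.inv_mul; rwa [hu2.unit_spec] at this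
    exact isUnit_of_left_right hl hr
  haveI hfin : Module.Finite Q (MonoidAlgebra Q (Multiplicative (ZMod n))) :=
    Module.Finite.of_basis (MonoidAlgebra.basis (Multiplicative (ZMod n)) Q)
  haveI hnoe : IsNoetherian Q (MonoidAlgebra Q (Multiplicative (ZMod n))) := IsNoetherian.iff_fg.mpr hfin
  haveI hart : IsArtinian Q (MonoidAlgebra Q (Multiplicative (ZMod n))) := isArtinian_of_fg_of_artinian'
  haveI htower : IsScalarTower Q (MonoidAlgebra Q (Multiplicative (ZMod n))) (MonoidAlgebra Q (Multiplicative (ZMod n))) :=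
    MonoidAlgebra.isScalarTower_self Q
  let emb := Submodule.restrictScalarsEmbedding Q (MonoidAlgebra Q (Multiplicative (ZMod n))) (MonoidAlgebra Q (Multiplicative (ZMod n)))
  haveI hTnoe : IsNoetherian (MonoidAlgebra Q (Multiplicative (ZMod n))) (MonoidAlgebra Q (Multiplicative (ZMod n))) := by
    rw [isNoetherian_iff]
    have hwf := (isNoetherian_iff (R := Q) (M := MonoidAlgebra Q (Multiplicative (ZMod n)))).mp hnoe
    let e : ((· > ·) : Submodule (MonoidAlgebra Q (Multiplicative (ZMod n))) (MonoidAlgebra Q (Multiplicative (ZMod n))) → _ → Prop)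
        ↪r ((· > ·) : Submodule Q (MonoidAlgebra Q (Multiplicative (ZMod n))) → _ → Prop) :=
      ⟨emb.toEmbedding, emb.lt_iff_lt⟩
    exact e.wellFounded hwf
  haveI hTart : IsArtinian (MonoidAlgebra Q (Multiplicative (ZMod n))) (MonoidAlgebra Q (Multiplicative (ZMod n))) := by
    rw [isArtinian_iff]
    have hwf := (isArtinian_iff Q (MonoidAlgebra Q (Multiplicative (ZMod n)))).mp hart
    let e : ((· < ·) : Submodule (MonoidAlgebra Q (Multiplicative (ZMod n))) (MonoidAlgebra Q (Multiplicative (ZMod n))) → _ → Prop)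
        ↪r ((· < ·) : Submodule Q (MonoidAlgebra Q (Multiplicative (ZMod n))) → _ → Prop) :=
      ⟨emb.toEmbedding, emb.lt_iff_lt⟩
    exact e.wellFounded hwf
  have h2T : IsUnit (2 : MonoidAlgebra Q (Multiplicative (ZMod n))) := by
    have h2Q : IsUnit (2 : Q) := by
      have := h2R.map π
      rwa [map_ofNat] at this
    have := h2Q.map (MonoidAlgebra.singleOneRingHom (R := Q) (M := Multiplicative (ZMod n)))
    rwa [map_ofNat] at this
  obtain ⟨u, v, huv⟩ := ring_sum_two_units h2T (φ a)
  obtain ⟨su, hsu⟩ := hφsurj ↑u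
  have hUu : IsUnit su := hlift su (by rw [hsu]; exact u.isUnit)
  have hrem : φ (a - su) = ↑v := by
    rw [map_sub, hsu, huv, add_sub_cancel_left]
  have hUv : IsUnit (a - su) := hlift _ (by rw [hrem]; exact v.isUnit)
  refine ⟨hUu.unit, hUv.unit, ?_⟩
  rw [hUu.unit_spec, hUv.unit_spec]
  abel
end
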